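/- arXiv:1709.06329 — 12 statements merged into one kernel-verified Lean document; each statement's English description precedes it below -/
import Mathlib

section
/- The map from the subspace lattice P to the N-cube {0,1}^N that sends a subspace y ∈ P to its location is well defined (every subspace has a location), order-preserving, and surjective. -/
open Submodule Module

section LocAux

variable {F H : Type*} [Field F] [AddCommGroup H] [Module F H] [FiniteDimensional F H]

set_option linter.unusedSectionVars false

private lemma aux_ineq (y z a b : Submodule F H) (hyz : y ≤ z) (hab : a ≤ b) :
    finrank F ↥(y ⊓ b) + finrank F ↥(z ⊓ a) ≤ finrank F ↥(z ⊓ b) + finrank F ↥(y ⊓ a) := by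
  have h1 : (y ⊓ b) ⊓ (z ⊓ a) = y ⊓ a := by
    apply le_antisymm
    · exact le_inf (inf_le_left.trans inf_le_left) (inf_le_right.trans inf_le_right)
    · exact le_inf (le_inf inf_le_left (inf_le_right.trans hab))
        (le_inf (inf_le_left.trans hyz) inf_le_right)
  have h2 : (y ⊓ b) ⊔ (z ⊓ a) ≤ z ⊓ b :=
    sup_le (inf_le_inf hyz le_rfl) (inf_le_inf le_rfl hab)
  have h3 := Submodule.finrank_sup_add_finrank_inf_eq (y ⊓ b) (z ⊓ a)
  have h4 := Submodule.finrank_mono h2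
  rw [h1] at h3
  omega

private lemma span_le_castSucc {N : ℕ} (x : Fin (N+1) → Submodule F H) (hmono : Monotone x)
    (v : Fin N → H) (hv1 : ∀ i, v i ∈ x i.succ)
    (T : Finset (Fin N)) (e : Fin N) (hT : ∀ i ∈ T, i < e) :
    span F (v '' ↑T) ≤ x e.castSucc := by
  rw [Submodule.span_le]
  rintro _ ⟨i, hi, rfl⟩
  exact hmono (Fin.succ_le_castSucc_iff.mpr (hT i (Finset.mem_coe.mp hi))) (hv1 i)

private lemma span_disjoint {N : ℕ} (x : Fin (N+1) → Submodule F H) (hmono : Monotone x)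
    (v : Fin N → H) (hv1 : ∀ i, v i ∈ x i.succ) (hv2 : ∀ i, v i ∉ x i.castSucc)
    (T : Finset (Fin N)) (j : Fin (N+1)) (hT : ∀ i ∈ T, j ≤ i.castSucc) :
    span F (v '' ↑T) ⊓ x j = ⊥ := by
  induction T using Finset.strongInductionOn with
  | _ T ih =>
    rcases T.eq_empty_or_nonempty with rfl | hne
    · simp
    · set e := T.max' hne with he
      have heT : e ∈ T := T.max'_mem hne
      have hTsub : T = insert e (T.erase e) := (Finset.insert_erase heT).symm
      rw [eq_bot_iff]
      intro w hw
      rw [hTsub, Finset.coe_insert, Set.image_insert_eq, Submodule.span_insert] at hw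
      obtain ⟨hw1, hw2⟩ := Submodule.mem_inf.mp hw
      obtain ⟨a, ha, b, hb, rfl⟩ := Submodule.mem_sup.mp hw1
      obtain ⟨c, rfl⟩ := Submodule.mem_span_singleton.mp ha
      have hlow : span F (v '' ↑(T.erase e)) ≤ x e.castSucc := by
        apply span_le_castSucc x hmono v hv1
        intro i hi
        exact lt_of_le_of_ne (T.le_max' i (Finset.mem_of_mem_erase hi))
          (Finset.ne_of_mem_erase hi)
      have hje : x j ≤ x e.castSucc := hmono (hT e heT)
      have hce : c • v e ∈ x e.castSucc := by
        have := (x e.castSucc).sub_mem (hje hw2) (hlow hb)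
        simpa using this
      have hc0 : c = 0 := by
        by_contra hc
        exact hv2 e (((x e.castSucc).smul_mem_iff hc).mp hce)
      have hb' : b ∈ span F (v '' ↑(T.erase e)) ⊓ x j :=
        Submodule.mem_inf.mpr ⟨hb, by simpa [hc0] using hw2⟩
      rw [ih (T.erase e) (Finset.erase_ssubset heT)
        (fun i hi => hT i (Finset.mem_of_mem_erase hi))] at hb'
      have hb0 : b = 0 := (Submodule.mem_bot F).mp hb'
      simp [hc0, hb0]

private lemma span_card {N : ℕ} (x : Fin (N+1) → Submodule F H) (hmono : Monotone x)
    (v : Fin N → H) (hv1 : ∀ i, v i ∈ x i.succ) (hv2 : ∀ i, v i ∉ x i.castSucc)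
    (T : Finset (Fin N)) :
    finrank F ↥(span F (v '' ↑T)) = T.card := by
  induction T using Finset.strongInductionOn with
  | _ T ih =>
    rcases T.eq_empty_or_nonempty with rfl | hne
    · simp
    · set e := T.max' hne with he
      have heT : e ∈ T := T.max'_mem hne
      have hTsub : T = insert e (T.erase e) := (Finset.insert_erase heT).symm
      have hlow : span F (v '' ↑(T.erase e)) ≤ x e.castSucc := by
        apply span_le_castSucc x hmono v hv1
        intro i hi
        exact lt_of_le_of_ne (T.le_max' i (Finset.mem_of_mem_erase hi))
          (Finset.ne_of_mem_erase hi)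
      have hdisj : span F {v e} ⊓ span F (v '' ↑(T.erase e)) = ⊥ := by
        rw [eq_bot_iff]
        intro w hw
        obtain ⟨hw1, hw2⟩ := Submodule.mem_inf.mp hw
        obtain ⟨c, rfl⟩ := Submodule.mem_span_singleton.mp hw1
        have hc0 : c = 0 := by
          by_contra hc
          exact hv2 e (((x e.castSucc).smul_mem_iff hc).mp (hlow hw2))
        simp [hc0]
      have hne0 : v e ≠ 0 := fun h => hv2 e (h ▸ (x e.castSucc).zero_mem)
      have h1 : finrank F ↥(span F {v e}) = 1 := finrank_span_singleton hne0
      have hsum := Submodule.finrank_sup_add_finrank_inf_eq (span F {v e})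
        (span F (v '' ↑(T.erase e)))
      rw [hdisj] at hsum
      have hih := ih (T.erase e) (Finset.erase_ssubset heT)
      have hcard : (T.erase e).card = T.card - 1 := Finset.card_erase_of_mem heT
      have hpos : 1 ≤ T.card := Finset.card_pos.mpr hne
      rw [hTsub, Finset.coe_insert, Set.image_insert_eq, Submodule.span_insert,
        Finset.card_insert_of_notMem (Finset.notMem_erase e T)]
      simp only [finrank_bot] at hsum
      omega

end LocAux

/-- `μ : Fin N → ℕ` (with values in `{0,1}`) is the location of the subspace `y`
with respect to the flag `x`: `dim (y ⊓ x (m+1)) = μ 0 + ⋯ + μ m` for all `m`. -/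
def IsLocation {F H : Type*} [Field F] [AddCommGroup H] [Module F H] {N : ℕ}
    (x : Fin (N + 1) → Submodule F H) (y : Submodule F H) (μ : Fin N → ℕ) : Prop :=
  (∀ i, μ i ≤ 1) ∧
    ∀ m : Fin N, Module.finrank F ↥(y ⊓ x m.succ) = ∑ i ∈ Finset.Iic m, μ i

section LocAux2

variable {F H : Type*} [Field F] [AddCommGroup H] [Module F H] [FiniteDimensional F H]

set_option linter.unusedSectionVars false

private lemma loc_incr {N : ℕ} {x : Fin (N+1) → Submodule F H} {y : Submodule F H}
    {μ : Fin N → ℕ} (h : IsLocation x y μ) (hx0 : x 0 = ⊥) (m : Fin N) :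
    finrank F ↥(y ⊓ x m.castSucc) + μ m = finrank F ↥(y ⊓ x m.succ) := by
  have hio : finrank F ↥(y ⊓ x m.castSucc) = ∑ i ∈ Finset.Iio m, μ i := by
    rcases Nat.eq_zero_or_pos m.val with h0 | hpos
    · have hc : m.castSucc = 0 := by ext; simp [h0]
      have hemp : Finset.Iio m = ∅ := by
        apply Finset.eq_empty_of_forall_notMem
        intro a ha
        rw [Finset.mem_Iio, Fin.lt_def, h0] at ha
        omega
      rw [hc, hx0, inf_bot_eq, hemp, Finset.sum_empty, finrank_bot]
    · obtain ⟨k, hk⟩ : ∃ k, m.val = k + 1 := ⟨m.val - 1, by omega⟩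
      have hkN : k < N := by omega
      have hcs : m.castSucc = (⟨k, hkN⟩ : Fin N).succ := by ext; simp [hk]
      have hIic : Finset.Iio m = Finset.Iic (⟨k, hkN⟩ : Fin N) := by
        ext i
        simp only [Finset.mem_Iio, Finset.mem_Iic, Fin.lt_def, Fin.le_def, Fin.val_succ]
        omega
      rw [hcs, h.2, hIic]
  rw [hio, h.2 m, ← Finset.Iio_insert, Finset.sum_insert (by simp), add_comm]

private lemma incr_loc {N : ℕ} {x : Fin (N+1) → Submodule F H} {y : Submodule F H}
    {μ : Fin N → ℕ} (hx0 : x 0 = ⊥)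
    (hstep : ∀ m : Fin N, finrank F ↥(y ⊓ x m.castSucc) + μ m = finrank F ↥(y ⊓ x m.succ)) :
    ∀ m : Fin N, finrank F ↥(y ⊓ x m.succ) = ∑ i ∈ Finset.Iic m, μ i := by
  suffices h : ∀ mv (hm : mv < N), finrank F ↥(y ⊓ x (⟨mv, hm⟩ : Fin N).succ)
      = ∑ i ∈ Finset.Iic (⟨mv, hm⟩ : Fin N), μ i by
    intro m
    have := h m.val m.isLt
    simpa using this
  intro mv
  induction mv with
  | zero =>
    intro hm
    have h0 := hstep ⟨0, hm⟩
    have hc : (⟨0, hm⟩ : Fin N).castSucc = 0 := by ext; simp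
    rw [hc, hx0, inf_bot_eq, finrank_bot, zero_add] at h0
    have hIic : Finset.Iic (⟨0, hm⟩ : Fin N) = {⟨0, hm⟩} := by
      ext i
      simp only [Finset.mem_Iic, Finset.mem_singleton, Fin.le_def, Fin.ext_iff]
      omega
    rw [hIic, Finset.sum_singleton, ← h0]
  | succ k ih =>
    intro hm
    have hkN : k < N := by omega
    have hstep' := hstep ⟨k + 1, hm⟩
    have hcs : (⟨k + 1, hm⟩ : Fin N).castSucc = (⟨k, hkN⟩ : Fin N).succ := by ext; simp
    rw [hcs, ih hkN] at hstep'
    have hIio : Finset.Iio (⟨k + 1, hm⟩ : Fin N) = Finset.Iic (⟨k, hkN⟩ : Fin N) := by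
      ext i
      simp only [Finset.mem_Iio, Finset.mem_Iic, Fin.lt_def, Fin.le_def, Fin.val_succ]
      omega
    rw [← Finset.Iio_insert, Finset.sum_insert (by simp), hIio, ← hstep', add_comm]

end LocAux2

/-- The location map from the subspace lattice `P` to the `N`-cube is well defined
(every subspace has a unique location), order-preserving, and surjective. -/
theorem stmt0 {F : Type*} [Field F] [Fintype F] {H : Type*} [AddCommGroup H] [Module F H]
    [FiniteDimensional F H] {N : ℕ} (hN : 1 ≤ N) (hdim : Module.finrank F H = N)
    (x : Fin (N + 1) → Submodule F H) (hrank : ∀ i, Module.finrank F ↥(x i) = (i : ℕ))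
    (hmono : StrictMono x) :
    (∀ y : Submodule F H, ∃! μ : Fin N → ℕ, IsLocation x y μ) ∧
      (∀ y z : Submodule F H, ∀ μ ν : Fin N → ℕ,
        IsLocation x y μ → IsLocation x z ν → y ≤ z → ∀ i, μ i ≤ ν i) ∧
      (∀ μ : Fin N → ℕ, (∀ i, μ i ≤ 1) → ∃ y : Submodule F H, IsLocation x y μ) := by
  classical
  have hx0 : x 0 = ⊥ := Submodule.finrank_eq_zero.mp (by simpa using hrank 0)
  have hmon : Monotone x := hmono.monotone
  refine ⟨?_, ?_, ?_⟩
  · -- existence and uniqueness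
    intro y
    set μ : Fin N → ℕ :=
      fun i => finrank F ↥(y ⊓ x i.succ) - finrank F ↥(y ⊓ x i.castSucc) with hμdef
    have hmono_d : ∀ i : Fin N,
        finrank F ↥(y ⊓ x i.castSucc) ≤ finrank F ↥(y ⊓ x i.succ) :=
      fun i => Submodule.finrank_mono (inf_le_inf_left y (hmon (Fin.castSucc_lt_succ (i := i)).le))
    have hle1 : ∀ i : Fin N,
        finrank F ↥(y ⊓ x i.succ) ≤ finrank F ↥(y ⊓ x i.castSucc) + 1 := by
      intro i
      have haux := aux_ineq y ⊤ (x i.castSucc) (x i.succ) le_top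
        (hmon (Fin.castSucc_lt_succ (i := i)).le)
      rw [top_inf_eq, top_inf_eq] at haux
      have h1 := hrank i.castSucc
      have h2 := hrank i.succ
      rw [Fin.coe_castSucc] at h1
      rw [Fin.val_succ] at h2
      omega
    have hstep : ∀ m : Fin N,
        finrank F ↥(y ⊓ x m.castSucc) + μ m = finrank F ↥(y ⊓ x m.succ) := by
      intro m
      have := hmono_d m
      simp only [hμdef]
      omega
    have hloc : IsLocation x y μ := by
      refine ⟨fun i => ?_, incr_loc hx0 hstep⟩
      have := hle1 i
      have := hmono_d i
      simp only [hμdef]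
      omega
    refine ⟨μ, hloc, ?_⟩
    intro ν hν
    have key : ∀ mv (hm : mv < N), ν ⟨mv, hm⟩ = μ ⟨mv, hm⟩ := by
      intro mv
      induction mv using Nat.strong_induction_on with
      | _ mv ih =>
        intro hm
        have hs := (hν.2 ⟨mv, hm⟩).symm.trans (hloc.2 ⟨mv, hm⟩)
        rw [← Finset.Iio_insert, Finset.sum_insert (by simp),
          Finset.sum_insert (by simp)] at hs
        have hio : ∑ i ∈ Finset.Iio (⟨mv, hm⟩ : Fin N), ν i
            = ∑ i ∈ Finset.Iio (⟨mv, hm⟩ : Fin N), μ i := by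
          refine Finset.sum_congr rfl fun i hi => ?_
          rw [Finset.mem_Iio, Fin.lt_def] at hi
          have := ih i.val hi i.isLt
          simpa using this
        omega
    funext m
    have := key m.val m.isLt
    simpa using this
  · -- order preserving
    intro y z μ ν hy hz hyz i
    have h1 := loc_incr hy hx0 i
    have h2 := loc_incr hz hx0 i
    have h3 := aux_ineq y z (x i.castSucc) (x i.succ) hyz (hmon (Fin.castSucc_lt_succ (i := i)).le)
    omega
  · -- surjectivity
    intro μ hμ
    have hv : ∀ i : Fin N, ∃ w ∈ x i.succ, w ∉ x i.castSucc :=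
      fun i => SetLike.exists_of_lt (hmono (Fin.castSucc_lt_succ (i := i)))
    choose v hv1 hv2 using hv
    set S : Finset (Fin N) := Finset.univ.filter (fun i => μ i = 1) with hS
    refine ⟨span F (v '' ↑S), hμ, ?_⟩
    intro m
    have hinf : span F (v '' ↑S) ⊓ x m.succ
        = span F (v '' ↑(S.filter (fun i => i ≤ m))) := by
      apply le_antisymm
      · set low := S.filter (fun i => i ≤ m) with hlowdef
        set high := S.filter (fun i => ¬ i ≤ m) with hhighdef
        have hsplit : span F (v '' ↑S) = span F (v '' ↑low) ⊔ span F (v '' ↑high) := by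
          rw [← Submodule.span_union, ← Set.image_union, ← Finset.coe_union, hlowdef,
            hhighdef, Finset.filter_union_filter_not_eq]
        have hlowle : span F (v '' ↑low) ≤ x m.succ := by
          rw [Submodule.span_le]
          rintro _ ⟨i, hi, rfl⟩
          have hi' := Finset.mem_coe.mp hi
          rw [hlowdef, Finset.mem_filter] at hi'
          exact hmon (Fin.succ_le_succ_iff.mpr hi'.2) (hv1 i)
        intro w hw
        obtain ⟨hw1, hw2⟩ := Submodule.mem_inf.mp hw
        rw [hsplit] at hw1
        obtain ⟨a, ha, b, hb, rfl⟩ := Submodule.mem_sup.mp hw1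
        have hbx : b ∈ x m.succ := by
          have := (x m.succ).sub_mem hw2 (hlowle ha)
          simpa using this
        have hbmem : b ∈ span F (v '' ↑high) ⊓ x m.succ := Submodule.mem_inf.mpr ⟨hb, hbx⟩
        rw [span_disjoint x hmon v hv1 hv2 high m.succ ?_] at hbmem
        · have hb0 := (Submodule.mem_bot F).mp hbmem
          simpa [hb0] using ha
        · intro i hi
          rw [hhighdef, Finset.mem_filter] at hi
          exact Fin.succ_le_castSucc_iff.mpr (lt_of_not_ge hi.2)
      · refine le_inf (Submodule.span_mono
          (Set.image_mono (f := v) (Finset.coe_subset.mpr (Finset.filter_subset _ _)))) ?_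
        rw [Submodule.span_le]
        rintro _ ⟨i, hi, rfl⟩
        have hi' := Finset.mem_coe.mp hi
        rw [Finset.mem_filter] at hi'
        exact hmon (Fin.succ_le_succ_iff.mpr hi'.2) (hv1 i)
    rw [hinf, span_card x hmon v hv1 hv2]
    have heq : S.filter (fun i => i ≤ m) = (Finset.Iic m).filter (fun i => μ i = 1) := by
      ext i
      simp only [hS, Finset.mem_filter, Finset.mem_univ, true_and, Finset.mem_Iic]
      tauto
    rw [heq, Finset.card_filter]
    refine Finset.sum_congr rfl fun i _ => ?_
    have := hμ i
    rcases Nat.le_one_iff_eq_zero_or_eq_one.mp this with h | h <;> simp [h]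
end

section
/- Let μ = (μ_1,…,μ_N) ∈ {0,1}^N, let 1 ≤ m ≤ N, and let y ∈ P_μ. Then the number of subspaces z ∈ P that m-cover y equals q^{(m−1) − (μ_1+μ_2+⋯+μ_{m−1})} if μ_m = 0, and equals 0 if μ_m = 1. -/
set_option linter.unusedSectionVars false
set_option linter.unusedVariables false
set_option maxHeartbeats 1000000

/-- `y` covers `z` in the subspace lattice. -/
def Covers {F H : Type*} [Field F] [AddCommGroup H] [Module F H]
    (y z : Submodule F H) : Prop :=
  z ≤ y ∧ Module.finrank F ↥z + 1 = Module.finrank F ↥y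

/-- `y` `m`-covers `z`: `y` covers `z` and the location of `y` is the location of `z`
plus the tuple with a `1` in coordinate `m` and `0` elsewhere. -/
def MCovers {F H : Type*} [Field F] [AddCommGroup H] [Module F H] {N : ℕ}
    (x : Fin (N + 1) → Submodule F H) (m : Fin N) (y z : Submodule F H) : Prop :=
  Covers y z ∧ ∃ μ ν : Fin N → ℕ, IsLocation x y μ ∧ IsLocation x z ν ∧
    ∀ i, μ i = ν i + if i = m then 1 else 0

section Aux

variable {F : Type*} [Field F] {H : Type*} [AddCommGroup H] [Module F H]
    [FiniteDimensional F H] {N : ℕ}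

lemma aux_finrank_sup_span {U : Submodule F H} {v : H} (hv : v ∉ U) :
    Module.finrank F ↥(U ⊔ Submodule.span F {v}) = Module.finrank F ↥U + 1 := by
  have hv0 : v ≠ 0 := fun h => hv (h ▸ U.zero_mem)
  have h1 : Module.finrank F ↥(Submodule.span F {v}) = 1 := finrank_span_singleton hv0
  have hinf : U ⊓ Submodule.span F {v} = ⊥ := by
    rw [eq_bot_iff]
    rintro w hw
    obtain ⟨hwU, hws⟩ := Submodule.mem_inf.1 hw
    obtain ⟨c, rfl⟩ := Submodule.mem_span_singleton.1 hws
    rcases eq_or_ne c 0 with rfl | hc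
    · simp
    · exact absurd (by simpa [smul_smul, inv_mul_cancel₀ hc] using U.smul_mem c⁻¹ hwU) hv
  have h := Submodule.finrank_sup_add_finrank_inf_eq U (Submodule.span F {v})
  rw [hinf, h1] at h
  simp only [finrank_bot] at h
  omega

lemma aux_loc_castSucc {x : Fin (N + 1) → Submodule F H} (hx0 : x 0 = ⊥)
    {y : Submodule F H} {μ : Fin N → ℕ} (hy : IsLocation x y μ) (m : Fin N) :
    Module.finrank F ↥(y ⊓ x m.castSucc) = ∑ i ∈ Finset.Iio m, μ i := by
  obtain ⟨k, hk⟩ := m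
  cases k with
  | zero =>
    have h0 : Fin.castSucc (⟨0, hk⟩ : Fin N) = 0 := rfl
    have h1 : (Finset.Iio (⟨0, hk⟩ : Fin N)) = ∅ := by
      ext i; simp [Fin.lt_def]
    rw [h0, hx0, inf_bot_eq, h1]
    simp
  | succ j =>
    have hj : j < N := by omega
    have h0 : Fin.castSucc (⟨j + 1, hk⟩ : Fin N) = Fin.succ (⟨j, hj⟩ : Fin N) := rfl
    have h1 : Finset.Iic (⟨j, hj⟩ : Fin N) = Finset.Iio (⟨j + 1, hk⟩ : Fin N) := by
      ext i; simp [Fin.le_def, Fin.lt_def, Nat.lt_succ_iff]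
    rw [h0, hy.2 ⟨j, hj⟩, h1]

lemma aux_loc_unique {x : Fin (N + 1) → Submodule F H} (hx0 : x 0 = ⊥)
    {y : Submodule F H} {μ ν : Fin N → ℕ} (hμ : IsLocation x y μ) (hν : IsLocation x y ν) :
    μ = ν := by
  funext m
  have h1 := hμ.2 m
  have h2 := hν.2 m
  rw [← Finset.Iio_insert, Finset.sum_insert Finset.notMem_Iio_self] at h1 h2
  have h3 := aux_loc_castSucc hx0 hμ m
  have h4 := aux_loc_castSucc hx0 hν m
  omega

variable {x : Fin (N + 1) → Submodule F H} {y z : Submodule F H} {μ : Fin N → ℕ} {m : Fin N}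

/-- The location of a subspace that `m`-covers `y`. -/
lemma aux_zloc (hx0 : x 0 = ⊥) (hy : IsLocation x y μ) (hz : MCovers x m z y) :
    IsLocation x z (fun i => μ i + if i = m then 1 else 0) := by
  obtain ⟨_, μ', ν, hzl, hyl, hs⟩ := hz
  have hν : ν = μ := aux_loc_unique hx0 hyl hy
  have h : μ' = fun i => μ i + if i = m then 1 else 0 :=
    funext fun i => (hs i).trans (by rw [hν])
  exact h ▸ hzl

lemma aux_mum_eq_zero (hx0 : x 0 = ⊥) (hy : IsLocation x y μ) (hz : MCovers x m z y) :
    μ m = 0 := by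
  have h := (aux_zloc hx0 hy hz).1 m
  simp at h
  omega

/-- Dimension facts about an `m`-cover. -/
lemma aux_z_inf_succ (hx0 : x 0 = ⊥) (hy : IsLocation x y μ) (hz : MCovers x m z y) :
    Module.finrank F ↥(z ⊓ x m.succ) = (∑ i ∈ Finset.Iic m, μ i) + 1 := by
  have h := (aux_zloc hx0 hy hz).2 m
  beta_reduce at h
  rw [h, Finset.sum_add_distrib, Finset.sum_ite_eq' (Finset.Iic m) m (fun _ => 1),
    if_pos (Finset.mem_Iic.2 le_rfl)]

lemma aux_z_inf_castSucc (hx0 : x 0 = ⊥) (hy : IsLocation x y μ) (hz : MCovers x m z y) :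
    z ⊓ x m.castSucc = y ⊓ x m.castSucc := by
  have h1 := aux_loc_castSucc hx0 (aux_zloc hx0 hy hz) m
  beta_reduce at h1
  have h2 := aux_loc_castSucc hx0 hy m
  have hsum : ∑ i ∈ Finset.Iio m, (μ i + if i = m then 1 else 0) = ∑ i ∈ Finset.Iio m, μ i := by
    apply Finset.sum_congr rfl
    intro i hi
    rw [if_neg (ne_of_lt (Finset.mem_Iio.1 hi)), add_zero]
  have hle : y ⊓ x m.castSucc ≤ z ⊓ x m.castSucc :=
    inf_le_inf_right _ hz.1.1
  exact (Submodule.eq_of_le_of_finrank_le hle (by omega)).symm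

/-- Any vector of `z ⊓ x (m+1)` outside `y` witnesses the cover. -/
lemma aux_witness (hx0 : x 0 = ⊥) (hy : IsLocation x y μ) (hz : MCovers x m z y)
    {v : H} (hvz : v ∈ z) (hvx : v ∈ x m.succ) (hvy : v ∉ y) :
    v ∉ x m.castSucc ⊔ y ∧ z = y ⊔ Submodule.span F {v} := by
  constructor
  · intro hmem
    obtain ⟨a, ha, b, hb, hab⟩ := Submodule.mem_sup.1 hmem
    have haz : a ∈ z ⊓ x m.castSucc :=
      Submodule.mem_inf.2 ⟨by simpa [← hab] using z.sub_mem hvz (hz.1.1 hb), ha⟩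
    rw [aux_z_inf_castSucc hx0 hy hz] at haz
    exact hvy (by simpa [← hab] using y.add_mem (Submodule.mem_inf.1 haz).1 hb)
  · have hle : y ⊔ Submodule.span F {v} ≤ z :=
      sup_le hz.1.1 ((Submodule.span_singleton_le_iff_mem v z).2 hvz)
    refine (Submodule.eq_of_le_of_finrank_le hle ?_).symm
    rw [aux_finrank_sup_span hvy]
    exact le_of_eq hz.1.2.symm

lemma aux_exists_witness (hx0 : x 0 = ⊥) (hy : IsLocation x y μ) (hz : MCovers x m z y) :
    ∃ v, v ∈ z ∧ v ∈ x m.succ ∧ v ∉ y := by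
  by_contra hcon
  push_neg at hcon
  have hle : z ⊓ x m.succ ≤ y ⊓ x m.succ := by
    rintro w hw
    obtain ⟨hw1, hw2⟩ := Submodule.mem_inf.1 hw
    exact Submodule.mem_inf.2 ⟨hcon w hw1 hw2, hw2⟩
  have h1 := aux_z_inf_succ hx0 hy hz
  have h2 := hy.2 m
  have := Submodule.finrank_mono hle
  omega

/-- Building an `m`-cover from a suitable vector. -/
lemma aux_build (hx0 : x 0 = ⊥) (hmono : StrictMono x) (hy : IsLocation x y μ)
    (hμm : μ m = 0) {v : H} (hvx : v ∈ x m.succ) (hvW : v ∉ x m.castSucc ⊔ y) :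
    MCovers x m (y ⊔ Submodule.span F {v}) y := by
  have hvy : v ∉ y := fun h => hvW (Submodule.mem_sup_right h)
  refine ⟨⟨le_sup_left, (aux_finrank_sup_span hvy).symm⟩,
    fun i => μ i + if i = m then 1 else 0, μ, ?_, hy, fun i => rfl⟩
  constructor
  · intro i
    rcases eq_or_ne i m with rfl | hi
    · simp [hμm]
    · simpa [hi] using hy.1 i
  · intro k
    rcases lt_or_ge k m with hk | hk
    · -- below m: intersection unchanged
      have heq : (y ⊔ Submodule.span F {v}) ⊓ x k.succ = y ⊓ x k.succ := by
        apply le_antisymm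
        · rintro w hw
          obtain ⟨hw1, hw2⟩ := Submodule.mem_inf.1 hw
          obtain ⟨u, hu, w', hw', hab⟩ := Submodule.mem_sup.1 hw1
          obtain ⟨c, rfl⟩ := Submodule.mem_span_singleton.1 hw'
          rcases eq_or_ne c 0 with rfl | hc
          · rw [zero_smul, add_zero] at hab
            exact Submodule.mem_inf.2 ⟨hab ▸ hu, hw2⟩
          · exfalso
            apply hvW
            have hxle : x k.succ ≤ x m.castSucc := by
              apply hmono.monotone
              simp only [Fin.le_def, Fin.val_succ, Fin.coe_castSucc]
              exact hk
            have hveq : v = c⁻¹ • w - c⁻¹ • u := by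
              rw [← hab]; rw [smul_add, smul_smul, inv_mul_cancel₀ hc, one_smul]; abel
            rw [hveq]
            exact Submodule.sub_mem _ (Submodule.mem_sup_left (hxle (Submodule.smul_mem _ _ hw2)))
              (Submodule.mem_sup_right (Submodule.smul_mem _ _ hu))
        · exact inf_le_inf_right _ le_sup_left
      rw [heq, hy.2 k]
      apply Finset.sum_congr rfl
      intro i hi
      have hne : i ≠ m := ne_of_lt (lt_of_le_of_lt (Finset.mem_Iic.1 hi) hk)
      simp [hne]
    · -- at or above m
      have hvxk : v ∈ x k.succ := by
        apply hmono.monotone _ hvx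
        simp only [Fin.le_def, Fin.val_succ]
        omega
      have heq : (y ⊔ Submodule.span F {v}) ⊓ x k.succ
          = (y ⊓ x k.succ) ⊔ Submodule.span F {v} := by
        apply le_antisymm
        · rintro w hw
          obtain ⟨hw1, hw2⟩ := Submodule.mem_inf.1 hw
          obtain ⟨u, hu, w', hw', hab⟩ := Submodule.mem_sup.1 hw1
          have hw'x : w' ∈ x k.succ := by
            obtain ⟨c, rfl⟩ := Submodule.mem_span_singleton.1 hw'
            exact Submodule.smul_mem _ _ hvxk
          have hux : u ∈ x k.succ := by
            have : u = w - w' := by rw [← hab]; abel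
            rw [this]; exact Submodule.sub_mem _ hw2 hw'x
          exact hab ▸ Submodule.add_mem _
            (Submodule.mem_sup_left (Submodule.mem_inf.2 ⟨hu, hux⟩))
            (Submodule.mem_sup_right hw')
        · refine sup_le (le_inf (le_trans inf_le_left le_sup_left)
            (le_trans inf_le_right le_rfl)) ?_
          refine le_inf (le_trans ?_ le_sup_right) ?_
          · exact le_rfl
          · exact (Submodule.span_singleton_le_iff_mem v _).2 hvxk
      have hvyk : v ∉ y ⊓ x k.succ := fun h => hvy (Submodule.mem_inf.1 h).1
      beta_reduce
      rw [heq, aux_finrank_sup_span hvyk, hy.2 k, Finset.sum_add_distrib,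
        Finset.sum_ite_eq' (Finset.Iic k) m (fun _ => 1), if_pos (Finset.mem_Iic.2 hk)]

end Aux

lemma aux_card_filter {F : Type*} [Field F] [Fintype F] {H : Type*} [AddCommGroup H]
    [Module F H] [Fintype H] (U : Submodule F H) [DecidablePred (· ∈ U)] :
    (Finset.univ.filter (· ∈ U)).card = Fintype.card F ^ Module.finrank F ↥U := by
  have h := Fintype.card_of_subtype (p := fun v => v ∈ U)
    (Finset.univ.filter fun v => v ∈ U) (by simp)
  rw [← h]
  exact Module.card_eq_pow_finrank


/-- The number of subspaces that `m`-cover `y ∈ P_μ` is `q^((m-1) - (μ_1+⋯+μ_{m-1}))`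
if `μ_m = 0`, and `0` if `μ_m = 1`. -/
theorem stmt2 {F : Type*} [Field F] [Fintype F] {H : Type*} [AddCommGroup H] [Module F H]
    [FiniteDimensional F H] {N : ℕ} (hN : 1 ≤ N) (hdim : Module.finrank F H = N)
    (x : Fin (N + 1) → Submodule F H) (hrank : ∀ i, Module.finrank F ↥(x i) = (i : ℕ))
    (hmono : StrictMono x)
    (μ : Fin N → ℕ) (m : Fin N) (y : Submodule F H) (hy : IsLocation x y μ) :
    Set.ncard {z : Submodule F H | MCovers x m z y} =
      if μ m = 0 then Fintype.card F ^ ((m : ℕ) - ∑ i ∈ Finset.Iio m, μ i) else 0 := by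
  classical
  have hq : 1 < Fintype.card F := Fintype.one_lt_card
  have hx0 : x 0 = ⊥ := Submodule.finrank_eq_zero.1 (by simpa using hrank 0)
  rcases eq_or_ne (μ m) 0 with hμm | hμm
  swap
  · rw [if_neg hμm]
    have hemp : {z : Submodule F H | MCovers x m z y} = ∅ :=
      Set.eq_empty_iff_forall_notMem.2 fun z hz => hμm (aux_mum_eq_zero hx0 hy hz)
    rw [hemp, Set.ncard_empty]
  rw [if_pos hμm]
  haveI : Finite H := Module.finite_of_finite F
  haveI : Fintype H := Fintype.ofFinite H
  haveI : Finite (Submodule F H) := Finite.of_injective _ SetLike.coe_injective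
  set q := Fintype.card F with hqdef
  set s := ∑ i ∈ Finset.Iio m, μ i with hs
  have hIic : ∑ i ∈ Finset.Iic m, μ i = s := by
    rw [← Finset.Iio_insert, Finset.sum_insert Finset.notMem_Iio_self, hμm, zero_add]
  have hysucc : Module.finrank F ↥(y ⊓ x m.succ) = s := by rw [hy.2 m, hIic]
  have hycast : Module.finrank F ↥(y ⊓ x m.castSucc) = s := aux_loc_castSucc hx0 hy m
  have hsm : s ≤ (m : ℕ) := by
    calc s ≤ ∑ _i ∈ Finset.Iio m, 1 := Finset.sum_le_sum fun i _ => hy.1 i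
    _ = (m : ℕ) := by simp
  set W := x m.castSucc ⊔ y with hW
  have hle : x m.castSucc ≤ x m.succ := hmono.monotone (Fin.castSucc_le_succ m)
  have hWdim : Module.finrank F ↥(W ⊓ x m.succ) = (m : ℕ) := by
    rw [hW, sup_inf_assoc_of_le _ hle]
    have h1 := Submodule.finrank_sup_add_finrank_inf_eq (x m.castSucc) (y ⊓ x m.succ)
    have h2 : x m.castSucc ⊓ (y ⊓ x m.succ) = y ⊓ x m.castSucc := by
      rw [inf_comm (x m.castSucc) (y ⊓ x m.succ), inf_assoc, inf_eq_right.2 hle]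
    rw [h2, hycast, hysucc, hrank m.castSucc, Fin.coe_castSucc] at h1
    omega
  set S : Set (Submodule F H) := {z | MCovers x m z y} with hS
  have hSfin : S.Finite := Set.toFinite S
  set Sf : Finset (Submodule F H) := hSfin.toFinset with hSf
  set Tf : Finset H := Finset.univ.filter (fun v => v ∈ x m.succ ∧ v ∉ W) with hTf
  have hmaps : ∀ v ∈ Tf, y ⊔ Submodule.span F {v} ∈ Sf := by
    intro v hv
    rw [hTf, Finset.mem_filter] at hv
    rw [hSf, Set.Finite.mem_toFinset]
    exact aux_build hx0 hmono hy hμm hv.2.1 hv.2.2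
  have hcount := Finset.card_eq_sum_card_fiberwise hmaps
  have hfiber : ∀ z ∈ Sf, (Tf.filter fun v => y ⊔ Submodule.span F {v} = z).card
      = q ^ (s + 1) - q ^ s := by
    intro z hzS
    have hz : MCovers x m z y := by rwa [hSf, Set.Finite.mem_toFinset] at hzS
    have hfe : Tf.filter (fun v => y ⊔ Submodule.span F {v} = z)
        = (Finset.univ.filter (· ∈ z ⊓ x m.succ)) \ (Finset.univ.filter (· ∈ y ⊓ x m.succ)) := by
      ext v
      simp only [hTf, Finset.mem_filter, Finset.mem_sdiff, Finset.mem_univ, true_and,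
        Finset.filter_filter]
      constructor
      · rintro ⟨⟨hvx, hvW⟩, hgz⟩
        have hvy : v ∉ y := fun h => hvW (Submodule.mem_sup_right h)
        have hvz : v ∈ z := hgz ▸ Submodule.mem_sup_right (Submodule.mem_span_singleton_self v)
        exact ⟨Submodule.mem_inf.2 ⟨hvz, hvx⟩, fun h => hvy (Submodule.mem_inf.1 h).1⟩
      · rintro ⟨hvzx, hvyx⟩
        obtain ⟨hvz, hvx⟩ := Submodule.mem_inf.1 hvzx
        have hvy : v ∉ y := fun h => hvyx (Submodule.mem_inf.2 ⟨h, hvx⟩)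
        obtain ⟨h1, h2⟩ := aux_witness hx0 hy hz hvz hvx hvy
        exact ⟨⟨hvx, h1⟩, h2.symm⟩
    have hsub : (Finset.univ.filter (· ∈ y ⊓ x m.succ))
        ⊆ (Finset.univ.filter (· ∈ z ⊓ x m.succ)) := by
      intro v hv
      simp only [Finset.mem_filter, Finset.mem_univ, true_and] at hv ⊢
      exact inf_le_inf_right _ hz.1.1 hv
    rw [hfe, Finset.card_sdiff_of_subset hsub, aux_card_filter, aux_card_filter,
      aux_z_inf_succ hx0 hy hz, hIic, hysucc]
  have hT : Tf.card = q ^ ((m : ℕ) + 1) - q ^ (m : ℕ) := by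
    have hTe : Tf = (Finset.univ.filter (· ∈ x m.succ))
        \ (Finset.univ.filter (· ∈ W ⊓ x m.succ)) := by
      ext v
      simp only [hTf, Finset.mem_filter, Finset.mem_sdiff, Finset.mem_univ, true_and]
      constructor
      · rintro ⟨hvx, hvW⟩
        exact ⟨hvx, fun h => hvW (Submodule.mem_inf.1 h).1⟩
      · rintro ⟨hvx, hvW⟩
        exact ⟨hvx, fun h => hvW (Submodule.mem_inf.2 ⟨h, hvx⟩)⟩
    have hsub : (Finset.univ.filter (· ∈ W ⊓ x m.succ))
        ⊆ (Finset.univ.filter (· ∈ x m.succ)) := by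
      intro v hv
      simp only [Finset.mem_filter, Finset.mem_univ, true_and] at hv ⊢
      exact (Submodule.mem_inf.1 hv).2
    have hxm : Module.finrank F ↥(x m.succ) = (m : ℕ) + 1 := by
      rw [hrank m.succ, Fin.val_succ]
    rw [hTe, Finset.card_sdiff_of_subset hsub, aux_card_filter, aux_card_filter, hWdim, hxm]
  have hEq : q ^ ((m : ℕ) + 1) - q ^ (m : ℕ) = Sf.card * (q ^ (s + 1) - q ^ s) := by
    rw [← hT, hcount, Finset.sum_congr rfl hfiber, Finset.sum_const, smul_eq_mul]
  have hkey : q ^ ((m : ℕ) - s) * (q ^ (s + 1) - q ^ s) = q ^ ((m : ℕ) + 1) - q ^ (m : ℕ) := by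
    rw [Nat.mul_sub_left_distrib, ← pow_add, ← pow_add]
    congr 2 <;> omega
  have hpos : 0 < q ^ (s + 1) - q ^ s := Nat.sub_pos_of_lt (Nat.pow_lt_pow_succ hq)
  have hcard : Sf.card = q ^ ((m : ℕ) - s) :=
    (Nat.eq_of_mul_eq_mul_right hpos (hEq ▸ hkey)).symm
  rw [Set.ncard_eq_toFinset_card S hSfin]
  exact hcard
end

section
/- Let 1 ≤ m < n ≤ N and let μ ∈ {0,1}^N with μ_m = μ_n = 1. Given z ∈ P_μ and y ∈ P_{μ − m̂ − n̂} with y ⊆ z, there exists a unique element of P_{μ − n̂} which m-covers y and which is n-covered by z. -/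
/-- Given `z ∈ P_μ` and `y ∈ P_{μ - m̂ - n̂}` with `y ⊆ z` (where `m < n`, `μ_m = μ_n = 1`),
there is a unique element of `P_{μ - n̂}` which `m`-covers `y` and is `n`-covered by `z`. -/
theorem stmt3 {F : Type*} [Field F] [Fintype F] {H : Type*} [AddCommGroup H] [Module F H]
    [FiniteDimensional F H] {N : ℕ} (hN : 1 ≤ N) (hdim : Module.finrank F H = N)
    (x : Fin (N + 1) → Submodule F H) (hrank : ∀ i, Module.finrank F ↥(x i) = (i : ℕ))
    (hmono : StrictMono x)
    (m n : Fin N) (hmn : m < n) (μ : Fin N → ℕ) (hμ : ∀ i, μ i ≤ 1)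
    (hμm : μ m = 1) (hμn : μ n = 1)
    (z y : Submodule F H) (hz : IsLocation x z μ)
    (hy : IsLocation x y
      (fun i => μ i - (if i = m then 1 else 0) - (if i = n then 1 else 0)))
    (hyz : y ≤ z) :
    ∃! w : Submodule F H,
      IsLocation x w (fun i => μ i - if i = n then 1 else 0) ∧
        MCovers x m w y ∧ MCovers x n z w := by
  classical
  have hmn' : m ≠ n := ne_of_lt hmn
  set ν : Fin N → ℕ := fun i => μ i - (if i = m then 1 else 0) - (if i = n then 1 else 0)
    with hνdef
  set lam : Fin N → ℕ := fun i => μ i - if i = n then 1 else 0 with hlamdef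
  have hind : ∀ (k a : Fin N),
      (∑ i ∈ Finset.Iic k, (if i = a then 1 else 0)) = if a ≤ k then 1 else 0 := by
    intro k a
    rw [Finset.sum_ite_eq' (Finset.Iic k) a (fun _ => 1)]
    simp [Finset.mem_Iic]
  have hμν : ∀ i, μ i = ν i + (if i = m then 1 else 0) + (if i = n then 1 else 0) := by
    intro i
    rcases eq_or_ne i m with rfl | him
    · simp [hνdef, hμm, hmn']
    · rcases eq_or_ne i n with rfl | hin
      · simp [hνdef, him, hμn]
      · simp [hνdef, him, hin]
  have hlamν : ∀ i, lam i = ν i + (if i = m then 1 else 0) := by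
    intro i
    rcases eq_or_ne i m with rfl | him
    · simp [hνdef, hlamdef, hμm, hmn']
    · rcases eq_or_ne i n with rfl | hin
      · simp [hνdef, hlamdef, him]
      · simp [hνdef, hlamdef, him, hin]
  have hμlam : ∀ i, μ i = lam i + (if i = n then 1 else 0) := by
    intro i
    rcases eq_or_ne i n with rfl | hin
    · simp [hlamdef, hμn]
    · simp [hlamdef, hin]
  have hsumμ : ∀ k : Fin N, ∑ i ∈ Finset.Iic k, μ i =
      (∑ i ∈ Finset.Iic k, ν i) + (if m ≤ k then 1 else 0) + (if n ≤ k then 1 else 0) := by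
    intro k
    calc ∑ i ∈ Finset.Iic k, μ i
        = ∑ i ∈ Finset.Iic k, (ν i + (if i = m then 1 else 0) + (if i = n then 1 else 0)) :=
          Finset.sum_congr rfl (fun i _ => hμν i)
      _ = _ := by rw [Finset.sum_add_distrib, Finset.sum_add_distrib, hind, hind]
  have hsumlam : ∀ k : Fin N, ∑ i ∈ Finset.Iic k, lam i =
      (∑ i ∈ Finset.Iic k, ν i) + (if m ≤ k then 1 else 0) := by
    intro k
    calc ∑ i ∈ Finset.Iic k, lam i
        = ∑ i ∈ Finset.Iic k, (ν i + (if i = m then 1 else 0)) :=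
          Finset.sum_congr rfl (fun i _ => hlamν i)
      _ = _ := by rw [Finset.sum_add_distrib, hind]
  have hlamle : ∀ i, lam i ≤ 1 := by
    intro i
    have := hμ i
    simp only [hlamdef]
    omega
  have hz2 := hz.2
  have hy2 := hy.2
  have hnm : ¬ n ≤ m := not_le.mpr hmn
  -- dimension comparison at level m
  have e4 := hsumμ m
  rw [if_pos le_rfl, if_neg hnm] at e4
  have hAm : Module.finrank F ↥(z ⊓ x m.succ) = Module.finrank F ↥(y ⊓ x m.succ) + 1 := by
    rw [hz2 m, hy2 m, e4]
  have hyzm : y ⊓ (z ⊓ x m.succ) = y ⊓ x m.succ := by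
    rw [← inf_assoc, inf_eq_left.mpr hyz]
  set w : Submodule F H := y ⊔ (z ⊓ x m.succ) with hwdef
  have hrw : Module.finrank F ↥w + Module.finrank F ↥(y ⊓ x m.succ) =
      Module.finrank F ↥y + Module.finrank F ↥(z ⊓ x m.succ) := by
    rw [hwdef, ← hyzm]
    exact Submodule.finrank_sup_add_finrank_inf_eq _ _
  have hwrank : Module.finrank F ↥w = Module.finrank F ↥y + 1 := by omega
  have hwz : w ≤ z := sup_le hyz inf_le_left
  -- location of w
  have hwloc : ∀ k : Fin N,
      Module.finrank F ↥(w ⊓ x k.succ) = ∑ i ∈ Finset.Iic k, lam i := by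
    intro k
    by_cases hk : m ≤ k
    · have hxle : x m.succ ≤ x k.succ := hmono.monotone (Fin.succ_le_succ_iff.mpr hk)
      have h1 : w ⊓ x k.succ = (y ⊓ x k.succ) ⊔ (z ⊓ x m.succ) := by
        rw [hwdef, sup_comm y (z ⊓ x m.succ), sup_inf_assoc_of_le y (le_trans inf_le_right hxle),
          sup_comm]
      have hinf : (y ⊓ x k.succ) ⊓ (z ⊓ x m.succ) = y ⊓ x m.succ := by
        rw [inf_inf_inf_comm, inf_eq_left.mpr hyz, inf_eq_right.mpr hxle]
      have h2 : Module.finrank F ↥(w ⊓ x k.succ) + Module.finrank F ↥(y ⊓ x m.succ) =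
          Module.finrank F ↥(y ⊓ x k.succ) + Module.finrank F ↥(z ⊓ x m.succ) := by
        rw [h1, ← hinf]
        exact Submodule.finrank_sup_add_finrank_inf_eq _ _
      have e1 := hy2 k
      have e2 := hy2 m
      have e3 := hz2 m
      rw [hsumlam k, if_pos hk]
      omega
    · have e1 := hy2 k
      have e2 := hz2 k
      have f1 : Module.finrank F ↥(y ⊓ x k.succ) ≤ Module.finrank F ↥(w ⊓ x k.succ) :=
        Submodule.finrank_mono (inf_le_inf_right _ le_sup_left)
      have f2 : Module.finrank F ↥(w ⊓ x k.succ) ≤ Module.finrank F ↥(z ⊓ x k.succ) :=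
        Submodule.finrank_mono (inf_le_inf_right _ hwz)
      have e3 := hsumμ k
      rw [if_neg hk, if_neg (fun h => hk (hmn.le.trans h))] at e3
      rw [hsumlam k, if_neg hk]
      omega
  -- top level
  set kt : Fin N := ⟨N - 1, by omega⟩ with hkt
  have hktsucc : kt.succ = Fin.last N := by
    apply Fin.ext
    simp [hkt, Fin.val_succ]
    omega
  have hxtop : x (Fin.last N) = ⊤ :=
    Submodule.eq_top_of_finrank_eq (by rw [hrank, Fin.val_last, hdim])
  have hmtop : m ≤ kt := by
    have := m.isLt
    rw [Fin.le_def]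
    simp [hkt]
    omega
  have hntop : n ≤ kt := by
    have := n.isLt
    rw [Fin.le_def]
    simp [hkt]
    omega
  have hzrank : Module.finrank F ↥z = ∑ i ∈ Finset.Iic kt, μ i := by
    have := hz2 kt
    rwa [hktsucc, hxtop, inf_top_eq] at this
  have hyrank : Module.finrank F ↥y = ∑ i ∈ Finset.Iic kt, ν i := by
    have := hy2 kt
    rwa [hktsucc, hxtop, inf_top_eq] at this
  have hzy : Module.finrank F ↥z = Module.finrank F ↥y + 2 := by
    have := hsumμ kt
    rw [if_pos hmtop, if_pos hntop] at this
    omega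
  have hwlocfull : IsLocation x w lam := ⟨hlamle, hwloc⟩
  refine ⟨w, ⟨hwlocfull, ⟨⟨le_sup_left, hwrank.symm⟩, lam, ν, hwlocfull, hy, hlamν⟩,
    ⟨⟨hwz, by omega⟩, μ, lam, hz, hwlocfull, hμlam⟩⟩, ?_⟩
  rintro w' ⟨hw'loc, hmcov, hncov⟩
  have hyw' : y ≤ w' := hmcov.1.1
  have hw'z : w' ≤ z := hncov.1.1
  have hw'rank : Module.finrank F ↥y + 1 = Module.finrank F ↥w' := hmcov.1.2
  have h5 : w' ⊓ x m.succ = z ⊓ x m.succ := by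
    apply Submodule.eq_of_le_of_finrank_le (inf_le_inf_right _ hw'z)
    rw [hw'loc.2 m, hz2 m, hsumlam m, if_pos le_rfl]
    omega
  have hww' : w ≤ w' := sup_le hyw' (by rw [← h5]; exact inf_le_left)
  exact (Submodule.eq_of_le_of_finrank_le hww' (by omega)).symm
end

section
/- Let 1 ≤ m < n ≤ N and let μ ∈ {0,1}^N with μ_m = μ_n = 1. Given z ∈ P_μ and y ∈ P_{μ − m̂ − n̂} with y ⊆ z, there exist exactly q elements of P_{μ − m̂} which n-cover y and which are m-covered by z. -/
open Module Submodule

lemma aux_finrank_sup_span_s4 {F : Type*} [Field F] {H : Type*} [AddCommGroup H] [Module F H]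
    [FiniteDimensional F H] (p : Submodule F H) {s : H} (hs : s ∉ p) :
    finrank F ↥(p ⊔ F ∙ s) = finrank F ↥p + 1 := by
  have hs0 : s ≠ 0 := fun h => hs (h ▸ p.zero_mem)
  have hinf : p ⊓ (F ∙ s) = ⊥ := by
    rw [eq_bot_iff]
    intro v hv0
    obtain ⟨hv, hv'⟩ := Submodule.mem_inf.1 hv0
    obtain ⟨a, rfl⟩ := Submodule.mem_span_singleton.1 hv'
    rcases eq_or_ne a 0 with rfl | ha
    · simp
    · exact absurd ((p.smul_mem_iff ha).1 hv) hs
  have h2 := Submodule.finrank_sup_add_finrank_inf_eq p (F ∙ s)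
  rw [hinf, finrank_bot, finrank_span_singleton hs0] at h2
  omega

open Classical in
lemma aux_inf_dim {F : Type*} [Field F] {H : Type*} [AddCommGroup H] [Module F H]
    [FiniteDimensional F H] (p t : Submodule F H) {s : H} (hs : s ∉ p) :
    finrank F ↥((p ⊔ F ∙ s) ⊓ t)
      = finrank F ↥(p ⊓ t) + (if s ∈ p ⊔ t then 1 else 0) := by
  classical
  split_ifs with hmem
  · obtain ⟨yy, hyy, tt, htt, hsum⟩ := Submodule.mem_sup.1 hmem
    have htt_ne : tt ∉ p := fun h => hs (by
      have : yy + tt ∈ p := p.add_mem hyy h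
      rwa [hsum] at this)
    have hkey : (p ⊔ F ∙ s) ⊓ t = (p ⊓ t) ⊔ F ∙ tt := by
      apply le_antisymm
      · intro v hv0
        obtain ⟨hv1, hv2⟩ := Submodule.mem_inf.1 hv0
        obtain ⟨pp, hpp, sv, hsv, hvsum⟩ := Submodule.mem_sup.1 hv1
        obtain ⟨a, rfl⟩ := Submodule.mem_span_singleton.1 hsv
        have h1 : v - a • tt ∈ p := by
          have : a • s = a • yy + a • tt := by rw [← smul_add, hsum]
          have hv : v = (pp + a • yy) + a • tt := by
            rw [← hvsum, this]; abel
          have : v - a • tt = pp + a • yy := by rw [hv]; abel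
          rw [this]; exact p.add_mem hpp (p.smul_mem a hyy)
        have h2 : v - a • tt ∈ t := t.sub_mem hv2 (t.smul_mem a htt)
        have : v = (v - a • tt) + a • tt := by abel
        rw [this]
        exact Submodule.add_mem _ (Submodule.mem_sup_left (Submodule.mem_inf.2 ⟨h1, h2⟩))
          (Submodule.mem_sup_right ((F ∙ tt).smul_mem a (Submodule.mem_span_singleton_self tt)))
      · apply sup_le
        · exact inf_le_inf_right t le_sup_left
        · rw [Submodule.span_singleton_le_iff_mem]
          rw [Submodule.mem_inf]
          refine ⟨?_, htt⟩
          have : tt = s - yy := by rw [← hsum]; abel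
          rw [this]
          exact Submodule.sub_mem _ (Submodule.mem_sup_right
            (Submodule.mem_span_singleton_self s)) (Submodule.mem_sup_left hyy)
    rw [hkey]
    exact aux_finrank_sup_span_s4 (p ⊓ t) (fun h => htt_ne (Submodule.mem_inf.1 h).1)
  · have hkey : (p ⊔ F ∙ s) ⊓ t = p ⊓ t := by
      apply le_antisymm
      · intro v hv0
        obtain ⟨hv1, hv2⟩ := Submodule.mem_inf.1 hv0
        obtain ⟨pp, hpp, sv, hsv, hvsum⟩ := Submodule.mem_sup.1 hv1
        obtain ⟨a, rfl⟩ := Submodule.mem_span_singleton.1 hsv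
        rcases eq_or_ne a 0 with rfl | ha
        · rw [Submodule.mem_inf]
          refine ⟨by rw [← hvsum]; simpa using hpp, hv2⟩
        · exfalso
          apply hmem
          have h1 : a • s = v - pp := by rw [← hvsum]; abel
          have h2 : s = a⁻¹ • (v - pp) := by
            rw [← h1, smul_smul, inv_mul_cancel₀ ha, one_smul]
          rw [h2]
          exact Submodule.smul_mem _ _ (Submodule.sub_mem _
            (Submodule.mem_sup_right hv2) (Submodule.mem_sup_left hpp))
      · exact inf_le_inf_right t le_sup_left
    rw [hkey, add_zero]

lemma loc_dim {F H : Type*} [Field F] [AddCommGroup H] [Module F H] [FiniteDimensional F H]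
    {N : ℕ} {x : Fin (N + 1) → Submodule F H} (hx0 : x 0 = ⊥)
    {w : Submodule F H} {ν : Fin N → ℕ} (h : IsLocation x w ν) (j : Fin (N + 1)) :
    Module.finrank F ↥(w ⊓ x j)
      = ∑ i ∈ Finset.filter (fun i : Fin N => (i : ℕ) < (j : ℕ)) Finset.univ, ν i := by
  rcases Fin.eq_zero_or_eq_succ j with rfl | ⟨k, rfl⟩
  · rw [hx0, inf_bot_eq]
    have he : Finset.filter (fun i : Fin N => (i : ℕ) < ((0 : Fin (N + 1)) : ℕ))
        Finset.univ = ∅ :=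
      Finset.filter_false_of_mem (fun i _ => Nat.not_lt_zero _)
    rw [he, Finset.sum_empty, finrank_bot]
  · rw [h.2 k]
    apply Finset.sum_congr _ (fun _ _ => rfl)
    ext i
    simp only [Finset.mem_Iic, Finset.mem_filter, Finset.mem_univ, true_and,
      Fin.val_succ, Fin.le_def]
    omega

/-- Given `z ∈ P_μ` and `y ∈ P_{μ - m̂ - n̂}` with `y ⊆ z` (where `m < n`, `μ_m = μ_n = 1`),
there are exactly `q` elements of `P_{μ - m̂}` which `n`-cover `y` and are `m`-covered by `z`. -/
theorem stmt4 {F : Type*} [Field F] [Fintype F] {H : Type*} [AddCommGroup H] [Module F H]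
    [FiniteDimensional F H] {N : ℕ} (hN : 1 ≤ N) (hdim : Module.finrank F H = N)
    (x : Fin (N + 1) → Submodule F H) (hrank : ∀ i, Module.finrank F ↥(x i) = (i : ℕ))
    (hmono : StrictMono x)
    (m n : Fin N) (hmn : m < n) (μ : Fin N → ℕ) (hμ : ∀ i, μ i ≤ 1)
    (hμm : μ m = 1) (hμn : μ n = 1)
    (z y : Submodule F H) (hz : IsLocation x z μ)
    (hy : IsLocation x y
      (fun i => μ i - (if i = m then 1 else 0) - (if i = n then 1 else 0)))
    (hyz : y ≤ z) :
    Set.ncard {w : Submodule F H |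
        IsLocation x w (fun i => μ i - if i = m then 1 else 0) ∧
          MCovers x n w y ∧ MCovers x m z w} = Fintype.card F := by
  classical
  have hmn' : m ≠ n := ne_of_lt hmn
  have hx0 : x 0 = ⊥ := by
    have h0 := hrank 0
    rw [show (((0 : Fin (N+1)) : ℕ)) = 0 from rfl] at h0
    exact Submodule.finrank_eq_zero.1 h0
  have hxtop : x (Fin.last N) = ⊤ := by
    apply Submodule.eq_of_le_of_finrank_le le_top
    rw [hrank, Fin.val_last, finrank_top, hdim]
  -- sum splitting identities
  have sumsplit : ∀ s : Finset (Fin N),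
      (∑ i ∈ s, (μ i - (if i = m then 1 else 0) - (if i = n then 1 else 0)))
        + (if m ∈ s then 1 else 0) + (if n ∈ s then 1 else 0) = ∑ i ∈ s, μ i := by
    intro s
    have e1 : (if m ∈ s then 1 else 0) = ∑ i ∈ s, (if i = m then 1 else 0) :=
      (Finset.sum_ite_eq' s m fun _ => 1).symm
    have e2 : (if n ∈ s then 1 else 0) = ∑ i ∈ s, (if i = n then 1 else 0) :=
      (Finset.sum_ite_eq' s n fun _ => 1).symm
    rw [e1, e2, ← Finset.sum_add_distrib, ← Finset.sum_add_distrib]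
    refine Finset.sum_congr rfl fun i _ => ?_
    by_cases him : i = m
    · subst him
      rw [if_pos rfl, if_neg hmn']
      omega
    · by_cases hin : i = n
      · subst hin
        rw [if_pos rfl, if_neg (Ne.symm hmn')]
        omega
      · rw [if_neg him, if_neg hin]
        omega
  have sumsplit2 : ∀ s : Finset (Fin N),
      (∑ i ∈ s, (μ i - (if i = m then 1 else 0)))
        + (if m ∈ s then 1 else 0) = ∑ i ∈ s, μ i := by
    intro s
    have e1 : (if m ∈ s then 1 else 0) = ∑ i ∈ s, (if i = m then 1 else 0) :=
      (Finset.sum_ite_eq' s m fun _ => 1).symm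
    rw [e1, ← Finset.sum_add_distrib]
    refine Finset.sum_congr rfl fun i _ => ?_
    by_cases him : i = m
    · subst him
      rw [if_pos rfl]
      omega
    · rw [if_neg him]
      omega
  -- filter sets
  set Slt : Fin (N + 1) → Finset (Fin N) :=
    fun j => Finset.filter (fun i : Fin N => (i : ℕ) < (j : ℕ)) Finset.univ with hSlt
  have hzd : ∀ j, finrank F ↥(z ⊓ x j) = ∑ i ∈ Slt j, μ i := loc_dim hx0 hz
  have hyd : ∀ j, finrank F ↥(y ⊓ x j)
      = ∑ i ∈ Slt j, (μ i - (if i = m then 1 else 0) - (if i = n then 1 else 0)) :=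
    loc_dim hx0 hy
  have hm_cn : m ∈ Slt n.castSucc := by
    simp only [hSlt, Finset.mem_filter, Finset.mem_univ, true_and, Fin.coe_castSucc]
    exact hmn
  have hn_cn : n ∉ Slt n.castSucc := by
    simp only [hSlt, Finset.mem_filter, Finset.mem_univ, true_and, Fin.coe_castSucc]
    omega
  have hm_sn : m ∈ Slt n.succ := by
    simp only [hSlt, Finset.mem_filter, Finset.mem_univ, true_and, Fin.val_succ]
    omega
  have hn_sn : n ∈ Slt n.succ := by
    simp only [hSlt, Finset.mem_filter, Finset.mem_univ, true_and, Fin.val_succ]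
    omega
  -- dimension facts near n
  have dzc : finrank F ↥(z ⊓ x n.castSucc) = ∑ i ∈ Slt n.castSucc, μ i := hzd _
  have dyc : finrank F ↥(y ⊓ x n.castSucc) + 1 = ∑ i ∈ Slt n.castSucc, μ i := by
    have := sumsplit (Slt n.castSucc)
    rw [if_pos hm_cn, if_neg hn_cn] at this
    rw [hyd]
    omega
  -- choose u
  have hult : y ⊓ x n.castSucc < z ⊓ x n.castSucc := by
    refine lt_of_le_of_ne (inf_le_inf_right _ hyz) (fun he => ?_)
    rw [he] at dyc
    omega
  obtain ⟨u, huq, hup⟩ := SetLike.exists_of_lt hult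
  have huz : u ∈ z := (Submodule.mem_inf.1 huq).1
  have hux : u ∈ x n.castSucc := (Submodule.mem_inf.1 huq).2
  have huy : u ∉ y := fun h => hup (Submodule.mem_inf.2 ⟨h, hux⟩)
  set w₀ : Submodule F H := y ⊔ F ∙ u with hw₀
  have hw0rank : finrank F ↥w₀ = finrank F ↥y + 1 := aux_finrank_sup_span_s4 y huy
  have hw0z : w₀ ≤ z := sup_le hyz ((Submodule.span_singleton_le_iff_mem u z).2 huz)
  have huw0 : u ∈ w₀ := Submodule.mem_sup_right (Submodule.mem_span_singleton_self u)
  have hzcn_w0 : z ⊓ x n.castSucc ≤ w₀ := by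
    have hle : (y ⊓ x n.castSucc) ⊔ (F ∙ u) ≤ z ⊓ x n.castSucc :=
      sup_le (inf_le_inf_right _ hyz) ((Submodule.span_singleton_le_iff_mem u _).2 huq)
    have heq : (y ⊓ x n.castSucc) ⊔ (F ∙ u) = z ⊓ x n.castSucc := by
      apply Submodule.eq_of_le_of_finrank_le hle
      rw [aux_finrank_sup_span_s4 _ (fun h => huy (Submodule.mem_inf.1 h).1), dzc]
      omega
    rw [← heq]
    exact sup_le (le_trans inf_le_left le_sup_left) le_sup_right
  -- choose v
  have hcs_le : x n.castSucc ≤ x n.succ := hmono.monotone (le_of_lt (Fin.castSucc_lt_succ (i := n)))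
  have dzs : finrank F ↥(z ⊓ x n.succ) = ∑ i ∈ Slt n.succ, μ i := hzd _
  have dys : finrank F ↥(y ⊓ x n.succ) + 2 = ∑ i ∈ Slt n.succ, μ i := by
    have := sumsplit (Slt n.succ)
    rw [if_pos hm_sn, if_pos hn_sn] at this
    rw [hyd]
    omega
  have dw0s : finrank F ↥(w₀ ⊓ x n.succ) = finrank F ↥(y ⊓ x n.succ) + 1 := by
    rw [hw₀, aux_inf_dim y (x n.succ) huy,
      if_pos (Submodule.mem_sup_right (hcs_le hux))]
  have hvlt : w₀ ⊓ x n.succ < z ⊓ x n.succ := by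
    refine lt_of_le_of_ne (inf_le_inf_right _ hw0z) (fun he => ?_)
    rw [he, dzs] at dw0s
    omega
  obtain ⟨v, hvq, hvp⟩ := SetLike.exists_of_lt hvlt
  have hvz : v ∈ z := (Submodule.mem_inf.1 hvq).1
  have hvx : v ∈ x n.succ := (Submodule.mem_inf.1 hvq).2
  have hvw0 : v ∉ w₀ := fun h => hvp (Submodule.mem_inf.2 ⟨h, hvx⟩)
  have hsny : ∀ c : F, v + c • u ∉ y := by
    intro c hc
    apply hvw0
    have h1 : v + c • u ∈ w₀ := Submodule.mem_sup_left hc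
    have h2 : c • u ∈ w₀ := w₀.smul_mem c huw0
    have h3 : v = (v + c • u) - c • u := by abel
    rw [h3]
    exact w₀.sub_mem h1 h2
  -- membership characterization
  have hmem : ∀ (c : F) (k : Fin N), (v + c • u ∈ y ⊔ x k.succ) ↔ n ≤ k := by
    intro c k
    constructor
    · intro hin
      by_contra hnk
      push_neg at hnk
      have hks : x k.succ ≤ x n.castSucc := by
        apply hmono.monotone
        rw [Fin.le_def, Fin.val_succ, Fin.coe_castSucc]
        exact hnk
      have h1 : v + c • u ∈ y ⊔ x n.castSucc := sup_le_sup_left hks y hin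
      have h2 : v ∈ (y ⊔ x n.castSucc) ⊔ F ∙ u := by
        have ha : v = (v + c • u) - c • u := by abel
        rw [ha]
        exact Submodule.sub_mem _ (Submodule.mem_sup_left h1)
          (Submodule.mem_sup_right ((F ∙ u).smul_mem c (Submodule.mem_span_singleton_self u)))
      have h2' : v ∈ w₀ ⊔ x n.castSucc := by
        rw [hw₀, sup_right_comm]
        exact h2
      have h3 : v ∈ w₀ := by
        have hmod : (w₀ ⊔ x n.castSucc) ⊓ z = w₀ ⊔ (x n.castSucc ⊓ z) :=
          sup_inf_assoc_of_le _ hw0z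
        have h4 : v ∈ (w₀ ⊔ x n.castSucc) ⊓ z := Submodule.mem_inf.2 ⟨h2', hvz⟩
        rw [hmod] at h4
        have hxz : x n.castSucc ⊓ z ≤ w₀ := by rw [inf_comm]; exact hzcn_w0
        rw [sup_eq_left.2 hxz] at h4
        exact h4
      exact hvw0 h3
    · intro hnk
      apply Submodule.mem_sup_right
      have h1 : x n.succ ≤ x k.succ := by
        apply hmono.monotone
        rw [Fin.le_def, Fin.val_succ, Fin.val_succ]
        omega
      exact Submodule.add_mem _ (h1 hvx) (Submodule.smul_mem _ _ (h1 (hcs_le hux)))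
  -- each f c has the right location
  have hwloc : ∀ c : F, IsLocation x (y ⊔ F ∙ (v + c • u))
      (fun i => μ i - if i = m then 1 else 0) := by
    intro c
    refine ⟨fun i => le_trans (Nat.sub_le _ _) (hμ i), fun k => ?_⟩
    show finrank F ↥((y ⊔ F ∙ (v + c • u)) ⊓ x k.succ)
      = ∑ i ∈ Finset.Iic k, (μ i - if i = m then 1 else 0)
    rw [aux_inf_dim y (x k.succ) (hsny c)]
    have hy2 : finrank F ↥(y ⊓ x k.succ)
        = ∑ i ∈ Finset.Iic k, (μ i - (if i = m then 1 else 0) - (if i = n then 1 else 0)) :=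
      hy.2 k
    have e1 := sumsplit (Finset.Iic k)
    have e2 := sumsplit2 (Finset.Iic k)
    by_cases hnk : n ≤ k
    · rw [if_pos ((hmem c k).2 hnk), hy2]
      have hmk : m ≤ k := le_of_lt (lt_of_lt_of_le hmn hnk)
      rw [if_pos (Finset.mem_Iic.2 hmk), if_pos (Finset.mem_Iic.2 hnk)] at e1
      rw [if_pos (Finset.mem_Iic.2 hmk)] at e2
      omega
    · rw [if_neg (fun h => hnk ((hmem c k).1 h)), hy2]
      rw [if_neg (fun h => hnk (Finset.mem_Iic.1 h))] at e1
      simp only [Finset.mem_Iic] at e1 e2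
      split_ifs at e1 e2 <;> omega
  -- total dimensions
  have hSuniv : Slt (Fin.last N) = Finset.univ := by
    apply Finset.eq_univ_iff_forall.2
    intro i
    simp only [hSlt, Finset.mem_filter, Finset.mem_univ, true_and, Fin.val_last]
    exact i.isLt
  have hm_u : m ∈ Slt (Fin.last N) := by rw [hSuniv]; exact Finset.mem_univ m
  have hn_u : n ∈ Slt (Fin.last N) := by rw [hSuniv]; exact Finset.mem_univ n
  have hzrank : finrank F ↥z = ∑ i ∈ Slt (Fin.last N), μ i := by
    have := hzd (Fin.last N)
    rwa [hxtop, inf_top_eq] at this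
  have hyrank : finrank F ↥y + 2 = ∑ i ∈ Slt (Fin.last N), μ i := by
    have h1 := hyd (Fin.last N)
    rw [hxtop, inf_top_eq] at h1
    have h2 := sumsplit (Slt (Fin.last N))
    rw [if_pos hm_u, if_pos hn_u] at h2
    omega
  have hfrank : ∀ c : F, finrank F ↥(y ⊔ F ∙ (v + c • u)) = finrank F ↥y + 1 :=
    fun c => aux_finrank_sup_span_s4 y (hsny c)
  have hfz : ∀ c : F, y ⊔ (F ∙ (v + c • u)) ≤ z := by
    intro c
    refine sup_le hyz ((Submodule.span_singleton_le_iff_mem _ _).2 ?_)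
    exact z.add_mem hvz (z.smul_mem c huz)
  -- u is in no f c
  have hunotf : ∀ c : F, u ∉ y ⊔ F ∙ (v + c • u) := by
    intro c hc
    obtain ⟨yy, hyy, t, ht, hsum⟩ := Submodule.mem_sup.1 hc
    obtain ⟨a, rfl⟩ := Submodule.mem_span_singleton.1 ht
    rcases eq_or_ne a 0 with rfl | ha
    · apply huy
      rw [zero_smul, add_zero] at hsum
      rwa [← hsum]
    · apply hvw0
      have hrw : a • (v + c • u) = a • v + (a * c) • u := by
        rw [smul_add, smul_smul]
      rw [hrw] at hsum
      have h2 : a • v ∈ w₀ := by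
        have he : a • v = (yy + (a • v + (a * c) • u)) - yy - (a * c) • u := by abel
        rw [he, hsum]
        exact w₀.sub_mem (w₀.sub_mem huw0 (Submodule.mem_sup_left hyy))
          (w₀.smul_mem _ huw0)
      exact (w₀.smul_mem_iff ha).1 h2
  -- injectivity
  have hinj : Function.Injective (fun c : F => y ⊔ F ∙ (v + c • u)) := by
    intro c c' hcc
    by_contra hne
    simp only at hcc
    have h1 : v + c' • u ∈ y ⊔ F ∙ (v + c • u) := by
      rw [hcc]
      exact Submodule.mem_sup_right (Submodule.mem_span_singleton_self _)
    have h2 : v + c • u ∈ y ⊔ F ∙ (v + c • u) :=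
      Submodule.mem_sup_right (Submodule.mem_span_singleton_self _)
    have h3 : (c - c') • u ∈ y ⊔ F ∙ (v + c • u) := by
      have he : (c - c') • u = (v + c • u) - (v + c' • u) := by
        rw [sub_smul]; abel
      rw [he]
      exact Submodule.sub_mem _ h2 h1
    exact hunotf c (((y ⊔ F ∙ (v + c • u)).smul_mem_iff (sub_ne_zero.2 hne)).1 h3)
  -- the set is the range
  have hS : {w : Submodule F H |
        IsLocation x w (fun i => μ i - if i = m then 1 else 0) ∧
          MCovers x n w y ∧ MCovers x m z w}
      = Set.range (fun c : F => y ⊔ F ∙ (v + c • u)) := by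
    ext w
    simp only [Set.mem_setOf_eq, Set.mem_range]
    constructor
    · rintro ⟨hwl, hncov, hmcov⟩
      have hyw : y ≤ w := hncov.1.1
      have hwrk : finrank F ↥y + 1 = finrank F ↥w := hncov.1.2
      have hwz : w ≤ z := hmcov.1.1
      -- u ∉ w
      have hwd : finrank F ↥(w ⊓ x n.castSucc)
          = ∑ i ∈ Slt n.castSucc, (μ i - (if i = m then 1 else 0)) :=
        loc_dim hx0 hwl n.castSucc
      have hwd' : finrank F ↥(w ⊓ x n.castSucc) + 1 = ∑ i ∈ Slt n.castSucc, μ i := by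
        have := sumsplit2 (Slt n.castSucc)
        rw [if_pos hm_cn] at this
        omega
      have huw : u ∉ w := by
        intro huw
        have hle : (y ⊓ x n.castSucc) ⊔ (F ∙ u) ≤ w ⊓ x n.castSucc :=
          sup_le (inf_le_inf_right _ hyw)
            ((Submodule.span_singleton_le_iff_mem u _).2 (Submodule.mem_inf.2 ⟨huw, hux⟩))
        have hr := Submodule.finrank_mono hle
        rw [aux_finrank_sup_span_s4 _ (fun h => huy (Submodule.mem_inf.1 h).1)] at hr
        omega
      -- pick s
      have hylt : y < w := by
        refine lt_of_le_of_ne hyw (fun he => ?_)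
        rw [he] at hwrk
        omega
      obtain ⟨s, hsw, hsy⟩ := SetLike.exists_of_lt hylt
      have hws : y ⊔ (F ∙ s) = w := by
        apply Submodule.eq_of_le_of_finrank_le
          (sup_le hyw ((Submodule.span_singleton_le_iff_mem s w).2 hsw))
        rw [aux_finrank_sup_span_s4 y hsy]
        omega
      -- z = w₀ ⊔ span v
      have hz_eq : w₀ ⊔ (F ∙ v) = z := by
        apply Submodule.eq_of_le_of_finrank_le
          (sup_le hw0z ((Submodule.span_singleton_le_iff_mem v z).2 hvz))
        rw [aux_finrank_sup_span_s4 w₀ hvw0, hw0rank, hzrank]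
        omega
      have hsz : s ∈ w₀ ⊔ (F ∙ v) := by rw [hz_eq]; exact hwz hsw
      obtain ⟨p, hp, bv, hbv, hsum1⟩ := Submodule.mem_sup.1 hsz
      obtain ⟨b, rfl⟩ := Submodule.mem_span_singleton.1 hbv
      obtain ⟨yy, hyy, au, hau, hsum2⟩ := Submodule.mem_sup.1 hp
      obtain ⟨a, rfl⟩ := Submodule.mem_span_singleton.1 hau
      have hb : b ≠ 0 := by
        intro hb0
        subst hb0
        rw [zero_smul, add_zero] at hsum1
        have ha : a ≠ 0 := by
          intro ha0
          apply hsy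
          rw [ha0, zero_smul, add_zero] at hsum2
          rw [← hsum1, ← hsum2]
          exact hyy
        apply huw
        have h1 : a • u = s - yy := by rw [← hsum1, ← hsum2]; abel
        have h2 : a • u ∈ w := by rw [h1]; exact w.sub_mem hsw (hyw hyy)
        exact (w.smul_mem_iff ha).1 h2
      refine ⟨a * b⁻¹, ?_⟩
      have hsm : v + (a * b⁻¹) • u ∈ w := by
        have h1 : b • v + a • u ∈ w := by
          have he : b • v + a • u = s - yy := by rw [← hsum1, ← hsum2]; abel
          rw [he]
          exact w.sub_mem hsw (hyw hyy)
        have h2 := w.smul_mem b⁻¹ h1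
        have he2 : b⁻¹ • (b • v + a • u) = v + (a * b⁻¹) • u := by
          rw [smul_add, smul_smul, smul_smul, inv_mul_cancel₀ hb, one_smul, mul_comm]
        rwa [he2] at h2
      apply Submodule.eq_of_le_of_finrank_le
        (sup_le hyw ((Submodule.span_singleton_le_iff_mem _ w).2 hsm))
      rw [hfrank]
      omega
    · rintro ⟨c, rfl⟩
      refine ⟨hwloc c, ⟨⟨le_sup_left, (hfrank c).symm⟩,
        (fun i => μ i - if i = m then 1 else 0),
        (fun i => μ i - (if i = m then 1 else 0) - (if i = n then 1 else 0)),
        hwloc c, hy, fun i => ?_⟩,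
        ⟨⟨hfz c, by rw [hfrank]; omega⟩,
        μ, (fun i => μ i - if i = m then 1 else 0), hz, hwloc c, fun i => ?_⟩⟩
      · show μ i - (if i = m then 1 else 0)
          = (μ i - (if i = m then 1 else 0) - (if i = n then 1 else 0))
            + (if i = n then 1 else 0)
        by_cases him : i = m
        · subst him
          rw [if_pos rfl, if_neg hmn']
          omega
        · by_cases hin : i = n
          · subst hin
            rw [if_neg (Ne.symm hmn'), if_pos rfl]
            omega
          · rw [if_neg him, if_neg hin]
            omega
      · show μ i = (μ i - (if i = m then 1 else 0)) + (if i = m then 1 else 0)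
        by_cases him : i = m
        · subst him
          rw [if_pos rfl]
          omega
        · rw [if_neg him]
          omega
  rw [hS, ← Set.image_univ, Set.ncard_image_of_injective _ hinj, Set.ncard_univ,
    Nat.card_eq_fintype_card]
end

section
/- Let 1 ≤ m < n ≤ N and let μ ∈ {0,1}^N with μ_m = μ_n = 1. Given y ∈ P_{μ − m̂} and z ∈ P_{μ − n̂}: (a) if there exists a subspace covered by both y and z, then there exists a unique subspace that covers both y and z; (b) if there exists a subspace that covers both y and z, then there exists a unique subspace covered by both y and z. -/
/-- Given `y ∈ P_{μ - m̂}` and `z ∈ P_{μ - n̂}` (where `m < n`, `μ_m = μ_n = 1`):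
(a) if some subspace is covered by both `y` and `z`, then there is a unique subspace
covering both `y` and `z`; (b) if some subspace covers both `y` and `z`, then there is a
unique subspace covered by both `y` and `z`. -/
theorem stmt5 {F : Type*} [Field F] [Fintype F] {H : Type*} [AddCommGroup H] [Module F H]
    [FiniteDimensional F H] {N : ℕ} (hN : 1 ≤ N) (hdim : Module.finrank F H = N)
    (x : Fin (N + 1) → Submodule F H) (hrank : ∀ i, Module.finrank F ↥(x i) = (i : ℕ))
    (hmono : StrictMono x)
    (m n : Fin N) (hmn : m < n) (μ : Fin N → ℕ) (hμ : ∀ i, μ i ≤ 1)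
    (hμm : μ m = 1) (hμn : μ n = 1)
    (y z : Submodule F H)
    (hy : IsLocation x y (fun i => μ i - if i = m then 1 else 0))
    (hz : IsLocation x z (fun i => μ i - if i = n then 1 else 0)) :
    ((∃ w : Submodule F H, Covers y w ∧ Covers z w) →
        ∃! w' : Submodule F H, Covers w' y ∧ Covers w' z) ∧
      ((∃ w' : Submodule F H, Covers w' y ∧ Covers w' z) →
        ∃! w : Submodule F H, Covers y w ∧ Covers z w) := by

  classical
  -- y ≠ z, from differing locations at coordinate m
  have hne : y ≠ z := by
    intro h
    subst h
    have h1 := hy.2 m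
    have h2 := hz.2 m
    rw [h1] at h2
    beta_reduce at h2
    have e1 : ∑ i ∈ Finset.Iic m, (μ i - if i = n then 1 else 0)
        = ∑ i ∈ Finset.Iic m, μ i := by
      refine Finset.sum_congr rfl fun i hi => ?_
      have hin : i ≠ n := by
        intro hin
        subst hin
        exact absurd (lt_of_le_of_lt (Finset.mem_Iic.mp hi) hmn) (lt_irrefl _)
      simp [hin]
    have e2 : ∑ i ∈ Finset.Iic m, μ i
        = ∑ i ∈ Finset.Iic m, (μ i - if i = m then 1 else 0)
          + ∑ i ∈ Finset.Iic m, (if i = m then 1 else 0) := by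
      rw [← Finset.sum_add_distrib]
      refine Finset.sum_congr rfl fun i hi => ?_
      by_cases him : i = m
      · subst him; simp [hμm]
      · simp [him]
    have e3 : ∑ i ∈ Finset.Iic m, (if i = m then (1:ℕ) else 0) = 1 := by
      rw [Finset.sum_ite_eq' (Finset.Iic m) m (fun _ => (1:ℕ))]
      simp
    omega
  have hsup : ∀ w' : Submodule F H, y ≤ w' → z ≤ w' → y ⊔ z ≤ w' :=
    fun w' h1 h2 => sup_le h1 h2
  constructor
  · rintro ⟨w, ⟨hwy, hry⟩, ⟨hwz, hrz⟩⟩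
    have hd : Module.finrank F ↥y = Module.finrank F ↥z := by omega
    have hltinf : y ⊓ z < y := by
      refine lt_of_le_of_ne inf_le_left fun h => hne ?_
      have hyz : y ≤ z := by rw [← h]; exact inf_le_right
      exact Submodule.eq_of_le_of_finrank_eq hyz hd
    have h1 : Module.finrank F ↥(y ⊓ z) < Module.finrank F ↥y :=
      Submodule.finrank_lt_finrank_of_lt hltinf
    have h2 : Module.finrank F ↥w ≤ Module.finrank F ↥(y ⊓ z) :=
      Submodule.finrank_mono (le_inf hwy hwz)
    have h3 : Module.finrank F ↥(y ⊓ z) + 1 = Module.finrank F ↥y := by omega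
    have h4 := Submodule.finrank_sup_add_finrank_inf_eq y z
    have h5 : Module.finrank F ↥(y ⊔ z) = Module.finrank F ↥y + 1 := by omega
    refine ⟨y ⊔ z, ⟨⟨le_sup_left, by omega⟩, ⟨le_sup_right, by omega⟩⟩, ?_⟩
    rintro w' ⟨⟨hw1, hw2⟩, ⟨hw3, hw4⟩⟩
    exact (Submodule.eq_of_le_of_finrank_eq (hsup w' hw1 hw3) (by omega)).symm
  · rintro ⟨w', ⟨hyw, hry⟩, ⟨hzw, hrz⟩⟩
    have hd : Module.finrank F ↥y = Module.finrank F ↥z := by omega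
    have hltsup : y < y ⊔ z := by
      refine lt_of_le_of_ne le_sup_left fun h => hne ?_
      have hzy : z ≤ y := by rw [h]; exact le_sup_right
      exact (Submodule.eq_of_le_of_finrank_eq hzy hd.symm).symm
    have h1 : Module.finrank F ↥y < Module.finrank F ↥(y ⊔ z) :=
      Submodule.finrank_lt_finrank_of_lt hltsup
    have h2 : Module.finrank F ↥(y ⊔ z) ≤ Module.finrank F ↥w' :=
      Submodule.finrank_mono (hsup w' hyw hzw)
    have h4 := Submodule.finrank_sup_add_finrank_inf_eq y z
    have h5 : Module.finrank F ↥(y ⊓ z) + 1 = Module.finrank F ↥y := by omega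
    refine ⟨y ⊓ z, ⟨⟨inf_le_left, by omega⟩, ⟨inf_le_right, by omega⟩⟩, ?_⟩
    rintro w ⟨⟨hw1, hw2⟩, ⟨hw3, hw4⟩⟩
    exact Submodule.eq_of_le_of_finrank_eq (le_inf hw1 hw3) (by omega)
end

section
/- Let μ ∈ {0,1}^N and let π₁ ⊆ S_μ, π₂ ⊆ T_μ. The following are equivalent: (i) there exists a rook placement σ on B_μ with row index set π₁ and column index set π₂; (ii) |π₁| = |π₂|, and for each 1 ≤ i ≤ |π₁| the i-th smallest element of π₁ is strictly smaller than the i-th smallest element of π₂. -/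
def Sset {N : ℕ} (μ : Fin N → ℕ) : Finset (Fin N) :=
  Finset.univ.filter fun s => μ s = 0

def Tset {N : ℕ} (μ : Fin N → ℕ) : Finset (Fin N) :=
  Finset.univ.filter fun t => μ t = 1

def Board {N : ℕ} (μ : Fin N → ℕ) : Finset (Fin N × Fin N) :=
  (Sset μ ×ˢ Tset μ).filter fun p => p.1 < p.2

def IsRookPlacement {N : ℕ} (μ : Fin N → ℕ) (σ : Finset (Fin N × Fin N)) : Prop :=
  σ ⊆ Board μ ∧ (∀ p ∈ σ, ∀ p' ∈ σ, p.1 = p'.1 → p = p') ∧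
    (∀ p ∈ σ, ∀ p' ∈ σ, p.2 = p'.2 → p = p')

def rows {N : ℕ} (σ : Finset (Fin N × Fin N)) : Finset (Fin N) := σ.image Prod.fst

def cols {N : ℕ} (σ : Finset (Fin N × Fin N)) : Finset (Fin N) := σ.image Prod.snd

def Interlacing {N : ℕ} (π₁ π₂ : Finset (Fin N)) : Prop :=
  ∃ h : π₁.card = π₂.card,
    ∀ i : Fin π₁.card,
      (↑(π₁.orderIsoOfFin rfl i) : Fin N) < (↑(π₂.orderIsoOfFin h.symm i) : Fin N)

/-- Key counting lemma: if `g` maps `π₁` injectively into `π₂` with `x < g x`, then the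
`i`-th smallest element of `π₁` is smaller than the `i`-th smallest element of `π₂`. -/
lemma key_lemma {α : Type*} [LinearOrder α] (π₁ π₂ : Finset α) (k : ℕ)
    (h1 : π₁.card = k) (h2 : π₂.card = k) (g : α → α)
    (hmem : ∀ x ∈ π₁, g x ∈ π₂) (hltg : ∀ x ∈ π₁, x < g x)
    (hinj : Set.InjOn g π₁) (i : Fin k) :
    (↑(π₁.orderIsoOfFin h1 i) : α) < ↑(π₂.orderIsoOfFin h2 i) := by
  classical
  by_contra hcon
  push_neg at hcon
  -- hcon : π₂'s i-th smallest ≤ π₁'s i-th smallest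
  have hPcard : k - (i : ℕ) ≤
      (π₁.filter (fun x => (↑(π₁.orderIsoOfFin h1 i) : α) ≤ x)).card := by
    have hmap : ∀ j ∈ Finset.Ici i,
        (↑(π₁.orderIsoOfFin h1 j) : α) ∈
          π₁.filter (fun x => (↑(π₁.orderIsoOfFin h1 i) : α) ≤ x) := by
      intro j hj
      rw [Finset.mem_filter]
      refine ⟨(π₁.orderIsoOfFin h1 j).2, ?_⟩
      exact Subtype.coe_le_coe.mpr ((π₁.orderIsoOfFin h1).le_iff_le.mpr (Finset.mem_Ici.mp hj))
    have := Finset.card_le_card_of_injOn _ hmap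
      (fun x _ y _ hxy => (π₁.orderIsoOfFin h1).injective (Subtype.coe_injective hxy))
    rwa [Fin.card_Ici] at this
  have hPQ : (π₁.filter (fun x => (↑(π₁.orderIsoOfFin h1 i) : α) ≤ x)).card ≤
      (π₂.filter (fun y => (↑(π₁.orderIsoOfFin h1 i) : α) < y)).card := by
    refine Finset.card_le_card_of_injOn g ?_ ?_
    · intro x hx
      rw [Finset.mem_coe, Finset.mem_filter] at hx ⊢
      exact ⟨hmem x hx.1, lt_of_le_of_lt hx.2 (hltg x hx.1)⟩
    · intro x hx y hy hxy
      rw [Finset.mem_coe, Finset.mem_filter] at hx hy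
      exact hinj hx.1 hy.1 hxy
  have hRcard : (i : ℕ) + 1 ≤
      (π₂.filter (fun y => y ≤ (↑(π₂.orderIsoOfFin h2 i) : α))).card := by
    have hmap : ∀ j ∈ Finset.Iic i,
        (↑(π₂.orderIsoOfFin h2 j) : α) ∈
          π₂.filter (fun y => y ≤ (↑(π₂.orderIsoOfFin h2 i) : α)) := by
      intro j hj
      rw [Finset.mem_filter]
      refine ⟨(π₂.orderIsoOfFin h2 j).2, ?_⟩
      exact Subtype.coe_le_coe.mpr ((π₂.orderIsoOfFin h2).le_iff_le.mpr (Finset.mem_Iic.mp hj))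
    have := Finset.card_le_card_of_injOn _ hmap
      (fun x _ y _ hxy => (π₂.orderIsoOfFin h2).injective (Subtype.coe_injective hxy))
    rwa [Fin.card_Iic] at this
  have hRsub : π₂.filter (fun y => y ≤ (↑(π₂.orderIsoOfFin h2 i) : α)) ⊆
      π₂ \ π₂.filter (fun y => (↑(π₁.orderIsoOfFin h1 i) : α) < y) := by
    intro y hy
    rw [Finset.mem_filter] at hy
    rw [Finset.mem_sdiff, Finset.mem_filter]
    exact ⟨hy.1, fun hc' => absurd (lt_of_le_of_lt (hy.2.trans hcon) hc'.2) (lt_irrefl _)⟩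
  have hcards := (Finset.card_le_card hRsub).trans_eq
    (Finset.card_sdiff_of_subset (Finset.filter_subset _ _))
  have hik : (i : ℕ) < k := i.2
  omega

/-- For `π₁ ⊆ S_μ` and `π₂ ⊆ T_μ`: there is a rook placement on `B_μ` with row index set
`π₁` and column index set `π₂` iff `(π₁, π₂)` satisfies the interlacing condition. -/
theorem stmt6 {N : ℕ} (hN : 1 ≤ N) (μ : Fin N → ℕ) (hμ : ∀ i, μ i ≤ 1)
    (π₁ π₂ : Finset (Fin N)) (h₁ : π₁ ⊆ Sset μ) (h₂ : π₂ ⊆ Tset μ) :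
    (∃ σ : Finset (Fin N × Fin N), IsRookPlacement μ σ ∧ rows σ = π₁ ∧ cols σ = π₂) ↔
      Interlacing π₁ π₂ := by
  classical
  constructor
  · rintro ⟨σ, ⟨hsub, hrow, hcol⟩, hr, hc⟩
    have hinj1 : Set.InjOn Prod.fst ↑σ := fun p hp q hq hpq => hrow p hp q hq hpq
    have hinj2 : Set.InjOn Prod.snd ↑σ := fun p hp q hq hpq => hcol p hp q hq hpq
    have hcard1 : π₁.card = σ.card := by
      rw [← hr, rows, Finset.card_image_of_injOn hinj1]
    have hcard2 : π₂.card = σ.card := by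
      rw [← hc, cols, Finset.card_image_of_injOn hinj2]
    have h : π₁.card = π₂.card := hcard1.trans hcard2.symm
    refine ⟨h, fun i => ?_⟩
    -- partner function
    have hex : ∀ x ∈ π₁, ∃ p, p ∈ σ ∧ p.1 = x := by
      intro x hx
      rw [← hr, rows, Finset.mem_image] at hx
      obtain ⟨p, hp, hpx⟩ := hx
      exact ⟨p, hp, hpx⟩
    let gp : Fin N → Fin N × Fin N := fun x =>
      if hx : ∃ p, p ∈ σ ∧ p.1 = x then Classical.choose hx else (x, x)
    have hgp : ∀ x ∈ π₁, gp x ∈ σ ∧ (gp x).1 = x := by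
      intro x hx
      have hx' := hex x hx
      have hsp := Classical.choose_spec hx'
      show (if hx : ∃ p, p ∈ σ ∧ p.1 = x then Classical.choose hx else (x, x)) ∈ σ ∧
        (if hx : ∃ p, p ∈ σ ∧ p.1 = x then Classical.choose hx else (x, x)).1 = x
      rw [dif_pos hx']
      exact hsp
    refine key_lemma π₁ π₂ π₁.card rfl h.symm (fun x => (gp x).2) ?_ ?_ ?_ i
    · intro x hx
      rw [← hc, cols, Finset.mem_image]
      exact ⟨gp x, (hgp x hx).1, rfl⟩
    · intro x hx
      have hb := hsub (hgp x hx).1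
      rw [Board, Finset.mem_filter] at hb
      have := hb.2
      rwa [(hgp x hx).2] at this
    · intro x hx y hy hxy
      rw [Finset.mem_coe] at hx hy
      have := hcol _ (hgp x hx).1 _ (hgp y hy).1 hxy
      rw [← (hgp x hx).2, ← (hgp y hy).2, this]
  · rintro ⟨h, hlt⟩
    refine ⟨Finset.image (fun j : Fin π₁.card =>
      ((↑(π₁.orderIsoOfFin rfl j) : Fin N), (↑(π₂.orderIsoOfFin h.symm j) : Fin N)))
      Finset.univ, ⟨?_, ?_, ?_⟩, ?_, ?_⟩
    · intro p hp
      rw [Finset.mem_image] at hp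
      obtain ⟨j, _, rfl⟩ := hp
      rw [Board, Finset.mem_filter, Finset.mem_product]
      exact ⟨⟨h₁ (π₁.orderIsoOfFin rfl j).2, h₂ (π₂.orderIsoOfFin h.symm j).2⟩, hlt j⟩
    · intro p hp q hq hpq
      rw [Finset.mem_image] at hp hq
      obtain ⟨j, _, rfl⟩ := hp
      obtain ⟨j', _, rfl⟩ := hq
      have : j = j' := (π₁.orderIsoOfFin rfl).injective (Subtype.coe_injective hpq)
      rw [this]
    · intro p hp q hq hpq
      rw [Finset.mem_image] at hp hq
      obtain ⟨j, _, rfl⟩ := hp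
      obtain ⟨j', _, rfl⟩ := hq
      have : j = j' := (π₂.orderIsoOfFin h.symm).injective (Subtype.coe_injective hpq)
      rw [this]
    · rw [rows, Finset.image_image]
      ext x
      rw [Finset.mem_image]
      constructor
      · rintro ⟨j, _, rfl⟩
        exact (π₁.orderIsoOfFin rfl j).2
      · intro hx
        refine ⟨(π₁.orderIsoOfFin rfl).symm ⟨x, hx⟩, Finset.mem_univ _, ?_⟩
        exact congrArg Subtype.val ((π₁.orderIsoOfFin rfl).apply_symm_apply ⟨x, hx⟩)
    · rw [cols, Finset.image_image]
      ext x
      rw [Finset.mem_image]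
      constructor
      · rintro ⟨j, _, rfl⟩
        exact (π₂.orderIsoOfFin h.symm j).2
      · intro hx
        refine ⟨(π₂.orderIsoOfFin h.symm).symm ⟨x, hx⟩, Finset.mem_univ _, ?_⟩
        exact congrArg Subtype.val ((π₂.orderIsoOfFin h.symm).apply_symm_apply ⟨x, hx⟩)
end

section
/- Let μ ∈ {0,1}^N and λ ⊆ {1,…,N}. The following are equivalent: (i) there exists a rook placement on B_μ of type λ; (ii) the pair (λ ∩ S_μ, λ ∩ T_μ) satisfies the interlacing condition. -/
open Finset

/-- Key combinatorial lemma: if there's an injective map `f` on `B` into `A`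
with `f b < b`, then the i-th smallest of `A` is below the i-th smallest of `B`. -/
lemma key_interlace {α : Type*} [LinearOrder α] (A B : Finset α) (h : A.card = B.card)
    (f : α → α) (hf : ∀ b ∈ B, f b ∈ A ∧ f b < b) (hinj : Set.InjOn f B) :
    ∀ i : Fin A.card, A.orderEmbOfFin rfl i < B.orderEmbOfFin h.symm i := by
  intro i
  by_contra hc
  push_neg at hc
  -- hc : B.orderEmbOfFin h.symm i ≤ A.orderEmbOfFin rfl i
  have hi1 : (i : ℕ) + 1 ≤ A.card := i.2
  -- for each j ≤ i, consider b_j := eB j, f b_j ∈ A with f b_j < eA i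
  have key : ∀ j : Fin (i + 1), ∃ k : Fin A.card, (k : ℕ) < i ∧
      A.orderEmbOfFin rfl k = f (B.orderEmbOfFin h.symm (Fin.castLE hi1 j)) := by
    intro j
    set b := B.orderEmbOfFin h.symm (Fin.castLE hi1 j) with hb
    have hbB : b ∈ B := orderEmbOfFin_mem _ _ _
    obtain ⟨hfA, hfb⟩ := hf b hbB
    have hble : b ≤ B.orderEmbOfFin h.symm i := by
      apply (B.orderEmbOfFin h.symm).monotone
      exact Fin.le_def.mpr (Nat.lt_succ_iff.mp j.2)
    have hlt : f b < A.orderEmbOfFin rfl i := lt_of_lt_of_le hfb (le_trans hble hc)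
    have : f b ∈ Set.range (A.orderEmbOfFin rfl) := by
      rw [range_orderEmbOfFin]; exact hfA
    obtain ⟨k, hk⟩ := this
    refine ⟨k, ?_, hk⟩
    have := (A.orderEmbOfFin rfl).strictMono.lt_iff_lt.mp (hk ▸ hlt)
    exact this
  choose g hg1 hg2 using key
  have ginj : Function.Injective g := by
    intro j j' hjj
    have := hg2 j
    rw [hjj, hg2 j'] at this
    have hb := hinj (orderEmbOfFin_mem _ _ _) (orderEmbOfFin_mem _ _ _) this.symm
    have := (B.orderEmbOfFin h.symm).injective hb
    exact Fin.castLE_injective hi1 this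
  -- g maps Fin (i+1) injectively into {k : Fin A.card // k < i}, contradiction
  have : Function.Injective (fun j : Fin ((i : ℕ) + 1) => (⟨g j, hg1 j⟩ : Fin i)) := by
    intro j j' hjj
    simp only [Fin.mk.injEq] at hjj
    exact ginj (Fin.ext hjj)
  have := Fintype.card_le_of_injective _ this
  simp at this


/-- There is a rook placement on `B_μ` of type `λ` iff `(λ ∩ S_μ, λ ∩ T_μ)` satisfies
the interlacing condition. -/
theorem stmt7 {N : ℕ} (hN : 1 ≤ N) (μ : Fin N → ℕ) (hμ : ∀ i, μ i ≤ 1)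
    (lam : Finset (Fin N)) :
    (∃ σ : Finset (Fin N × Fin N), IsRookPlacement μ σ ∧ rows σ ∪ cols σ = lam) ↔
      Interlacing (lam ∩ Sset μ) (lam ∩ Tset μ) := by
  classical
  have hST : Disjoint (Sset μ) (Tset μ) := by
    rw [Finset.disjoint_left]
    intro a ha hb
    simp [Sset, Tset] at ha hb
    omega
  constructor
  · rintro ⟨σ, ⟨hsub, hrow, hcol⟩, htype⟩
    have hboard : ∀ p ∈ σ, p.1 ∈ Sset μ ∧ p.2 ∈ Tset μ ∧ p.1 < p.2 := by
      intro p hp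
      have := hsub hp
      simp only [Board, Finset.mem_filter, Finset.mem_product] at this
      exact ⟨this.1.1, this.1.2, this.2⟩
    have hrowsS : rows σ ⊆ Sset μ := by
      intro x hx
      obtain ⟨p, hp, rfl⟩ := Finset.mem_image.mp hx
      exact (hboard p hp).1
    have hcolsT : cols σ ⊆ Tset μ := by
      intro x hx
      obtain ⟨p, hp, rfl⟩ := Finset.mem_image.mp hx
      exact (hboard p hp).2.1
    have hA : lam ∩ Sset μ = rows σ := by
      rw [← htype, Finset.union_inter_distrib_right,
        Finset.inter_eq_left.mpr hrowsS,
        Finset.disjoint_iff_inter_eq_empty.mp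
          (Finset.disjoint_of_subset_left hcolsT hST.symm),
        Finset.union_empty]
    have hB : lam ∩ Tset μ = cols σ := by
      rw [← htype, Finset.union_inter_distrib_right,
        Finset.inter_eq_left.mpr hcolsT,
        Finset.disjoint_iff_inter_eq_empty.mp
          (Finset.disjoint_of_subset_left hrowsS hST),
        Finset.empty_union]
    have hcardA : (rows σ).card = σ.card :=
      Finset.card_image_of_injOn (fun p hp p' hp' he => hrow p hp p' hp' he)
    have hcardB : (cols σ).card = σ.card :=
      Finset.card_image_of_injOn (fun p hp p' hp' he => hcol p hp p' hp' he)
    have hc : (lam ∩ Sset μ).card = (lam ∩ Tset μ).card := by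
      rw [hA, hB, hcardA, hcardB]
    -- build the injective "preimage" map
    set f : Fin N → Fin N := fun b =>
      if hb : ∃ p ∈ σ, p.2 = b then (Classical.choose hb).1 else b with hfdef
    have hf : ∀ b ∈ lam ∩ Tset μ, f b ∈ lam ∩ Sset μ ∧ f b < b := by
      intro b hb
      rw [hB] at hb
      obtain ⟨p, hp, hpb⟩ := Finset.mem_image.mp hb
      have hex : ∃ p ∈ σ, p.2 = b := ⟨p, hp, hpb⟩
      obtain ⟨hq, hqb⟩ := Classical.choose_spec hex
      have hfb : f b = (Classical.choose hex).1 := dif_pos hex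
      constructor
      · rw [hA, hfb]
        exact Finset.mem_image.mpr ⟨Classical.choose hex, hq, rfl⟩
      · have := (hboard _ hq).2.2
        rw [hfb]
        exact lt_of_lt_of_eq this hqb
    have hinj : Set.InjOn f ((lam ∩ Tset μ : Finset (Fin N)) : Set (Fin N)) := by
      intro b hb b' hb' he
      rw [Finset.mem_coe] at hb hb'
      have hbB : b ∈ cols σ := by rw [← hB]; exact hb
      have hbB' : b' ∈ cols σ := by rw [← hB]; exact hb'
      obtain ⟨p, hp, hpb⟩ := Finset.mem_image.mp hbB
      obtain ⟨p', hp', hpb'⟩ := Finset.mem_image.mp hbB'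
      have hex : ∃ q ∈ σ, q.2 = b := ⟨p, hp, hpb⟩
      have hex' : ∃ q ∈ σ, q.2 = b' := ⟨p', hp', hpb'⟩
      obtain ⟨hq, hqb⟩ := Classical.choose_spec hex
      obtain ⟨hq', hqb'⟩ := Classical.choose_spec hex'
      rw [hfdef] at he
      simp only [dif_pos hex, dif_pos hex'] at he
      have := hrow _ hq _ hq' he
      rw [← hqb, ← hqb', this]
    refine ⟨hc, fun i => ?_⟩
    simpa using key_interlace (lam ∩ Sset μ) (lam ∩ Tset μ) hc f hf hinj i
  · rintro ⟨h, hlt⟩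
    set eA := (lam ∩ Sset μ).orderEmbOfFin rfl with heA
    set eB := (lam ∩ Tset μ).orderEmbOfFin h.symm with heB
    have hlt' : ∀ i, eA i < eB i := by
      intro i
      simpa using hlt i
    have heAm : ∀ i, eA i ∈ lam ∩ Sset μ := fun i => Finset.orderEmbOfFin_mem _ _ _
    have heBm : ∀ i, eB i ∈ lam ∩ Tset μ := fun i => Finset.orderEmbOfFin_mem _ _ _
    refine ⟨(Finset.univ : Finset (Fin (lam ∩ Sset μ).card)).image
      (fun j => (eA j, eB j)), ⟨?_, ?_, ?_⟩, ?_⟩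
    · intro p hp
      obtain ⟨j, _, rfl⟩ := Finset.mem_image.mp hp
      simp only [Board, Finset.mem_filter, Finset.mem_product]
      exact ⟨⟨(Finset.mem_inter.mp (heAm j)).2, (Finset.mem_inter.mp (heBm j)).2⟩, hlt' j⟩
    · intro p hp p' hp' he
      obtain ⟨j, _, rfl⟩ := Finset.mem_image.mp hp
      obtain ⟨j', _, rfl⟩ := Finset.mem_image.mp hp'
      have : j = j' := eA.injective he
      rw [this]
    · intro p hp p' hp' he
      obtain ⟨j, _, rfl⟩ := Finset.mem_image.mp hp
      obtain ⟨j', _, rfl⟩ := Finset.mem_image.mp hp'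
      have : j = j' := eB.injective he
      rw [this]
    · have hrows : rows ((Finset.univ : Finset (Fin (lam ∩ Sset μ).card)).image
          (fun j => (eA j, eB j))) = lam ∩ Sset μ := by
        ext x
        constructor
        · intro hx
          obtain ⟨p, hp, rfl⟩ := Finset.mem_image.mp hx
          obtain ⟨j, _, rfl⟩ := Finset.mem_image.mp hp
          exact heAm j
        · intro hx
          have : x ∈ Set.range eA := by rw [heA, Finset.range_orderEmbOfFin]; exact hx
          obtain ⟨j, rfl⟩ := this
          exact Finset.mem_image.mpr
            ⟨(eA j, eB j), Finset.mem_image.mpr ⟨j, Finset.mem_univ j, rfl⟩, rfl⟩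
      have hcols : cols ((Finset.univ : Finset (Fin (lam ∩ Sset μ).card)).image
          (fun j => (eA j, eB j))) = lam ∩ Tset μ := by
        ext x
        constructor
        · intro hx
          obtain ⟨p, hp, rfl⟩ := Finset.mem_image.mp hx
          obtain ⟨j, _, rfl⟩ := Finset.mem_image.mp hp
          exact heBm j
        · intro hx
          have : x ∈ Set.range eB := by rw [heB, Finset.range_orderEmbOfFin]; exact hx
          obtain ⟨j, rfl⟩ := this
          exact Finset.mem_image.mpr
            ⟨(eA j, eB j), Finset.mem_image.mpr ⟨j, Finset.mem_univ j, rfl⟩, rfl⟩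
      rw [hrows, hcols, ← Finset.inter_union_distrib_left]
      apply Finset.inter_eq_left.mpr
      intro x hx
      simp only [Finset.mem_union, Sset, Tset, Finset.mem_filter, Finset.mem_univ, true_and]
      have := hμ x
      omega
end

section
/- For λ ⊆ {1,…,N}, the following are equivalent: (i) there exists μ ∈ {0,1}^N and a rook placement on B_μ of type λ; (ii) the cardinality of λ is even. -/
lemma exists_placement {N : ℕ} (lam : Finset (Fin N)) (h : Even lam.card) :
    ∃ μ : Fin N → ℕ, (∀ i, μ i ≤ 1) ∧
      ∃ σ : Finset (Fin N × Fin N), IsRookPlacement μ σ ∧ rows σ ∪ cols σ = lam := by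
  induction lam using Finset.strongInduction with
  | _ lam IH =>
    rcases eq_or_ne lam ∅ with rfl | hne
    · exact ⟨fun _ => 0, fun _ => Nat.zero_le _, ∅, ⟨by simp, by simp, by simp⟩, by
        simp [rows, cols]⟩
    · have hnonempty : lam.Nonempty := Finset.nonempty_iff_ne_empty.2 hne
      set a := lam.min' hnonempty with ha
      have hamem : a ∈ lam := lam.min'_mem hnonempty
      have hne2 : (lam.erase a).Nonempty := by
        rw [Finset.nonempty_iff_ne_empty]
        intro hemp
        have h1 := Finset.card_erase_of_mem hamem
        rw [hemp, Finset.card_empty] at h1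
        have h2 : 1 ≤ lam.card := Finset.card_pos.2 hnonempty
        have h3 : lam.card = 1 := by omega
        rw [h3] at h
        simp [Nat.even_iff] at h
      set b := (lam.erase a).min' hne2 with hb
      have hbmem : b ∈ lam.erase a := (lam.erase a).min'_mem hne2
      have hab : a < b := by
        have hba : a ≤ b := lam.min'_le b (Finset.mem_of_mem_erase hbmem)
        have : b ≠ a := Finset.ne_of_mem_erase hbmem
        exact lt_of_le_of_ne hba (Ne.symm this)
      set lam' := (lam.erase a).erase b with hlam'
      have hsub : lam' ⊂ lam := by
        apply Finset.ssubset_of_subset_of_ssubset (Finset.erase_subset _ _)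
        exact Finset.erase_ssubset hamem
      have hcard : lam'.card = lam.card - 2 := by
        rw [hlam', Finset.card_erase_of_mem hbmem, Finset.card_erase_of_mem hamem]
        omega
      have heven' : Even lam'.card := by
        have h2 : 2 ≤ lam.card := by
          have := Finset.card_erase_of_mem hamem
          have := Finset.card_pos.2 hne2
          omega
        rw [hcard]; rcases h with ⟨k, hk⟩; exact ⟨k - 1, by omega⟩
      obtain ⟨μ', hμ1', σ', ⟨hsub', hr', hc'⟩, htype'⟩ := IH lam' hsub heven'
      have hanot : a ∉ lam' := by simp [hlam']
      have hbnot : b ∉ lam' := by simp [hlam']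
      -- coordinates of points in σ' avoid a, b
      have hcoord : ∀ p ∈ σ', p.1 ≠ a ∧ p.1 ≠ b ∧ p.2 ≠ a ∧ p.2 ≠ b := by
        intro p hp
        have h1 : p.1 ∈ lam' := by
          rw [← htype']; exact Finset.mem_union_left _ (Finset.mem_image_of_mem _ hp)
        have h2 : p.2 ∈ lam' := by
          rw [← htype']; exact Finset.mem_union_right _ (Finset.mem_image_of_mem _ hp)
        exact ⟨fun e => hanot (e ▸ h1), fun e => hbnot (e ▸ h1),
               fun e => hanot (e ▸ h2), fun e => hbnot (e ▸ h2)⟩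
      refine ⟨fun i => if i = a then 0 else if i = b then 1 else μ' i, ?_,
        insert (a, b) σ', ⟨?_, ?_, ?_⟩, ?_⟩
      · intro i; dsimp only; split_ifs <;> simp [hμ1' i]
      · intro p hp
        rw [Finset.mem_insert] at hp
        rcases hp with rfl | hp
        · simp only [Board, Sset, Tset, Finset.mem_filter, Finset.mem_product,
            Finset.mem_univ, true_and]
          exact ⟨⟨by simp, by simp [hab.ne']⟩, hab⟩
        · have hh := hsub' hp
          simp only [Board, Sset, Tset, Finset.mem_filter, Finset.mem_product,
            Finset.mem_univ, true_and] at hh ⊢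
          obtain ⟨⟨hs, ht⟩, hlt⟩ := hh
          obtain ⟨c1, c2, c3, c4⟩ := hcoord p hp
          exact ⟨⟨by simp [c1, c2, hs], by simp [c3, c4, ht]⟩, hlt⟩
      · intro p hp p' hp' he
        rw [Finset.mem_insert] at hp hp'
        rcases hp with rfl | hp <;> rcases hp' with rfl | hp'
        · rfl
        · exact absurd he.symm (hcoord p' hp').1
        · exact absurd he (hcoord p hp).1
        · exact hr' p hp p' hp' he
      · intro p hp p' hp' he
        rw [Finset.mem_insert] at hp hp'
        rcases hp with rfl | hp <;> rcases hp' with rfl | hp'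
        · rfl
        · exact absurd he.symm (hcoord p' hp').2.2.2
        · exact absurd he (hcoord p hp).2.2.2
        · exact hc' p hp p' hp' he
      · simp only [rows, cols, Finset.image_insert]
        have : insert a (σ'.image Prod.fst) ∪ insert b (σ'.image Prod.snd) =
            insert a (insert b (rows σ' ∪ cols σ')) := by
          ext x; simp [rows, cols]; tauto
        rw [this, htype', hlam']
        rw [Finset.insert_erase hbmem, Finset.insert_erase hamem]

/-- There exist `μ ∈ {0,1}^N` and a rook placement on `B_μ` of type `λ` iff `|λ|` is even. -/
theorem stmt8 {N : ℕ} (hN : 1 ≤ N) (lam : Finset (Fin N)) :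
    (∃ μ : Fin N → ℕ, (∀ i, μ i ≤ 1) ∧
        ∃ σ : Finset (Fin N × Fin N), IsRookPlacement μ σ ∧ rows σ ∪ cols σ = lam) ↔
      Even lam.card := by
  constructor
  · rintro ⟨μ, hμ, σ, ⟨hsub, hr, hc⟩, htype⟩
    have hdisj : Disjoint (rows σ) (cols σ) := by
      rw [Finset.disjoint_left]
      intro x hx hx'
      simp only [rows, cols, Finset.mem_image] at hx hx'
      obtain ⟨p, hp, rfl⟩ := hx
      obtain ⟨q, hq, hq2⟩ := hx'
      have h1 := hsub hp
      have h2 := hsub hq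
      simp only [Board, Sset, Tset, Finset.mem_filter, Finset.mem_product,
        Finset.mem_univ, true_and] at h1 h2
      rw [hq2] at h2
      omega
    have hrc : (rows σ).card = σ.card := Finset.card_image_of_injOn fun p hp q hq => hr p hp q hq
    have hcc : (cols σ).card = σ.card := Finset.card_image_of_injOn fun p hp q hq => hc p hp q hq
    rw [← htype, Finset.card_union_of_disjoint hdisj, hrc, hcc]
    exact ⟨σ.card, rfl⟩
  · exact exists_placement lam
end

section
/- Let μ ∈ {0,1}^N and let λ ⊆ {1,…,N} be such that (λ ∩ S_μ, λ ∩ T_μ) satisfies the interlacing condition. Then for every 1 ≤ m ≤ N and every rook placement σ on B_μ of type λ, |σ ∩ (S_μ(m) × T_μ(m))| = |λ ∩ S_μ(m)| + |λ ∩ T_μ(m)| − |λ|/2. In particular this number is independent of the choice of σ. -/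
/-- `S_μ(m) = {s ∈ S_μ : s ≤ m}`. -/
def SsetLe {N : ℕ} (μ : Fin N → ℕ) (m : Fin N) : Finset (Fin N) :=
  (Sset μ).filter fun s => s ≤ m

/-- `T_μ(m) = {t ∈ T_μ : t ≥ m}`. -/
def TsetGe {N : ℕ} (μ : Fin N → ℕ) (m : Fin N) : Finset (Fin N) :=
  (Tset μ).filter fun t => m ≤ t

/-- For every rook placement `σ` on `B_μ` of type `λ`,
`|σ ∩ (S_μ(m) × T_μ(m))| = |λ ∩ S_μ(m)| + |λ ∩ T_μ(m)| − |λ|/2`. -/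
theorem stmt9 {N : ℕ} (hN : 1 ≤ N) (μ : Fin N → ℕ) (hμ : ∀ i, μ i ≤ 1)
    (lam : Finset (Fin N)) (hint : Interlacing (lam ∩ Sset μ) (lam ∩ Tset μ))
    (m : Fin N) (σ : Finset (Fin N × Fin N))
    (hσ : IsRookPlacement μ σ) (htype : rows σ ∪ cols σ = lam) :
    (σ ∩ SsetLe μ m ×ˢ TsetGe μ m).card =
      (lam ∩ SsetLe μ m).card + (lam ∩ TsetGe μ m).card - lam.card / 2 := by
  classical
  obtain ⟨hsub, hfst, hsnd⟩ := hσ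
  have hboard : ∀ p ∈ σ, μ p.1 = 0 ∧ μ p.2 = 1 ∧ p.1 < p.2 := by
    intro p hp
    have := hsub hp
    simp only [Board, Sset, Tset, Finset.mem_filter, Finset.mem_product,
      Finset.mem_univ, true_and] at this
    tauto
  set A := σ.filter (fun p => p.1 ≤ m) with hA
  set B := σ.filter (fun p => m ≤ p.2) with hB
  have hAB : A ∪ B = σ := by
    ext p
    simp only [hA, hB, Finset.mem_union, Finset.mem_filter]
    constructor
    · rintro (⟨h, _⟩ | ⟨h, _⟩) <;> exact h
    · intro hp
      by_cases h : p.1 ≤ m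
      · exact Or.inl ⟨hp, h⟩
      · exact Or.inr ⟨hp, le_of_lt (lt_trans (lt_of_not_ge h) (hboard p hp).2.2)⟩
  have hIJ : σ ∩ SsetLe μ m ×ˢ TsetGe μ m = A ∩ B := by
    ext p
    simp only [hA, hB, Finset.mem_inter, Finset.mem_filter, Finset.mem_product,
      SsetLe, TsetGe, Sset, Tset, Finset.mem_univ, true_and]
    constructor
    · rintro ⟨hp, ⟨_, h1⟩, ⟨_, h2⟩⟩; exact ⟨⟨hp, h1⟩, ⟨hp, h2⟩⟩
    · rintro ⟨⟨hp, h1⟩, ⟨_, h2⟩⟩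
      exact ⟨hp, ⟨(hboard p hp).1, h1⟩, ⟨(hboard p hp).2.1, h2⟩⟩
  have hrowsA : lam ∩ SsetLe μ m = A.image Prod.fst := by
    ext x
    simp only [← htype, hA, Finset.mem_inter, Finset.mem_union, rows, cols,
      Finset.mem_image, SsetLe, Sset, Finset.mem_filter, Finset.mem_univ, true_and]
    constructor
    · rintro ⟨hx, hx0, hxm⟩
      rcases hx with ⟨p, hp, rfl⟩ | ⟨p, hp, rfl⟩
      · exact ⟨p, ⟨hp, hxm⟩, rfl⟩
      · exact absurd hx0 (by simp [(hboard p hp).2.1])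
    · rintro ⟨p, ⟨hp, hpm⟩, rfl⟩
      exact ⟨Or.inl ⟨p, hp, rfl⟩, (hboard p hp).1, hpm⟩
  have hcolsB : lam ∩ TsetGe μ m = B.image Prod.snd := by
    ext x
    simp only [← htype, hB, Finset.mem_inter, Finset.mem_union, rows, cols,
      Finset.mem_image, TsetGe, Tset, Finset.mem_filter, Finset.mem_univ, true_and]
    constructor
    · rintro ⟨hx, hx1, hxm⟩
      rcases hx with ⟨p, hp, rfl⟩ | ⟨p, hp, rfl⟩
      · exact absurd hx1 (by simp [(hboard p hp).1])
      · exact ⟨p, ⟨hp, hxm⟩, rfl⟩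
    · rintro ⟨p, ⟨hp, hpm⟩, rfl⟩
      exact ⟨Or.inr ⟨p, hp, rfl⟩, (hboard p hp).2.1, hpm⟩
  have hAcard : (A.image Prod.fst).card = A.card :=
    Finset.card_image_of_injOn fun p hp q hq h =>
      hfst p (Finset.mem_of_mem_filter p hp) q (Finset.mem_of_mem_filter q hq) h
  have hBcard : (B.image Prod.snd).card = B.card :=
    Finset.card_image_of_injOn fun p hp q hq h =>
      hsnd p (Finset.mem_of_mem_filter p hp) q (Finset.mem_of_mem_filter q hq) h
  have hdisj : Disjoint (rows σ) (cols σ) := by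
    rw [Finset.disjoint_left]
    rintro x hx hx'
    simp only [rows, cols, Finset.mem_image] at hx hx'
    obtain ⟨p, hp, rfl⟩ := hx
    obtain ⟨q, hq, hq'⟩ := hx'
    have h1 := (hboard p hp).1
    have h2 := (hboard q hq).2.1
    rw [hq'] at h2
    omega
  have hrc : (rows σ).card = σ.card :=
    Finset.card_image_of_injOn fun p hp q hq h => hfst p hp q hq h
  have hcc : (cols σ).card = σ.card :=
    Finset.card_image_of_injOn fun p hp q hq h => hsnd p hp q hq h
  have hlam : lam.card = 2 * σ.card := by
    rw [← htype, Finset.card_union_of_disjoint hdisj, hrc, hcc]; ring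
  have hie : (A ∩ B).card + (A ∪ B).card = A.card + B.card :=
    Finset.card_inter_add_card_union A B
  rw [hIJ, hrowsA, hcolsB, hAcard, hBcard, hlam, hAB] at *
  omega
end

section
/- Let μ ∈ {0,1}^N and let λ ⊆ {1,…,N} be such that (λ ∩ S_μ, λ ∩ T_μ) satisfies the interlacing condition. For 1 ≤ m ≤ N let ρ(m,μ,λ) = |λ ∩ S_μ(m)| + |λ ∩ T_μ(m)| − |λ|/2. Then for every complex number q with q ≠ 0 and q ≠ 1, the sum of q^{inv(σ)} over all rook placements σ on B_μ of type λ equals the product over s ∈ λ ∩ S_μ of (q^{ρ(s,μ,λ)} − 1)/(q − 1). -/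
/-- The total inversion number of a rook placement. -/
def inversions {N : ℕ} (σ : Finset (Fin N × Fin N)) : ℕ :=
  ∑ p ∈ σ, (σ.filter fun p' => p'.1 < p.1 ∧ p.2 < p'.2).card

/-- `ρ(m,μ,λ) = |λ ∩ S_μ(m)| + |λ ∩ T_μ(m)| − |λ|/2`. -/
def rho {N : ℕ} (μ : Fin N → ℕ) (lam : Finset (Fin N)) (m : Fin N) : ℕ :=
  (lam ∩ SsetLe μ m).card + (lam ∩ TsetGe μ m).card - lam.card / 2

open Finset

def Counting {N : ℕ} (π₁ π₂ : Finset (Fin N)) : Prop :=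
  π₁.card = π₂.card ∧ ∀ x : Fin N, (π₂.filter (· ≤ x)).card ≤ (π₁.filter (· < x)).card

lemma card_filter_comap {N : ℕ} (s : Finset (Fin N)) (P : Fin N → Prop) [DecidablePred P]
    {k : ℕ} (h : s.card = k) :
    (s.filter P).card = (Finset.univ.filter fun i : Fin k => P (s.orderEmbOfFin h i)).card := by
  classical
  have key : s.filter P =
      (Finset.univ.filter fun i => P (s.orderEmbOfFin h i)).image (s.orderEmbOfFin h) := by
    ext x
    simp only [mem_filter, mem_image, mem_univ, true_and]
    constructor
    · rintro ⟨hx, hPx⟩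
      have : x ∈ Set.range (s.orderEmbOfFin h) := by
        rw [Finset.range_orderEmbOfFin]; exact hx
      obtain ⟨i, rfl⟩ := this
      exact ⟨i, hPx, rfl⟩
    · rintro ⟨i, hPi, rfl⟩
      exact ⟨Finset.orderEmbOfFin_mem s h i, hPi⟩
  rw [key, Finset.card_image_of_injective _ (s.orderEmbOfFin h).injective]

lemma interlacing_iff {N : ℕ} (π₁ π₂ : Finset (Fin N)) :
    Interlacing π₁ π₂ ↔ Counting π₁ π₂ := by
  classical
  constructor
  · rintro ⟨h, hlt⟩
    refine ⟨h, fun x => ?_⟩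
    rw [card_filter_comap π₂ (· ≤ x) h.symm, card_filter_comap π₁ (· < x) rfl]
    apply Finset.card_le_card
    intro i hi
    simp only [mem_filter, mem_univ, true_and] at hi ⊢
    have := hlt i
    rw [Finset.coe_orderIsoOfFin_apply, Finset.coe_orderIsoOfFin_apply] at this
    exact lt_of_lt_of_le this hi
  · rintro ⟨h, hc⟩
    refine ⟨h, fun i => ?_⟩
    rw [Finset.coe_orderIsoOfFin_apply, Finset.coe_orderIsoOfFin_apply]
    set x := π₂.orderEmbOfFin h.symm i with hx
    have h1 : (π₂.filter (· ≤ x)).card = (i : ℕ) + 1 := by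
      rw [card_filter_comap π₂ (· ≤ x) h.symm]
      have : (Finset.univ.filter fun j : Fin π₁.card => π₂.orderEmbOfFin h.symm j ≤ x) =
          Finset.Iic i := by
        ext j
        simp only [mem_filter, mem_univ, true_and, Finset.mem_Iic, hx,
          (π₂.orderEmbOfFin h.symm).le_iff_le]
      rw [this, Fin.card_Iic]
    have h2 := hc x
    rw [h1, card_filter_comap π₁ (· < x) rfl] at h2
    by_contra hcon
    push_neg at hcon
    have hsub : (Finset.univ.filter fun j : Fin π₁.card => π₁.orderEmbOfFin rfl j < x) ⊆
        Finset.Iio i := by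
      intro j hj
      simp only [mem_filter, mem_univ, true_and] at hj
      simp only [Finset.mem_Iio]
      by_contra hji
      push_neg at hji
      exact absurd (lt_of_le_of_lt ((π₁.orderEmbOfFin rfl).le_iff_le.mpr hji) hj)
        (not_lt.mpr hcon)
    have := Finset.card_le_card hsub
    rw [Fin.card_Iio] at this
    omega

lemma counting_erase {N : ℕ} {π₁ π₂ : Finset (Fin N)} (hC : Counting π₁ π₂)
    (h1 : π₁.Nonempty) (t : Fin N) (ht : t ∈ π₂) (hts : π₁.max' h1 < t) :
    Counting (π₁.erase (π₁.max' h1)) (π₂.erase t) := by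
  classical
  obtain ⟨hcard, hc⟩ := hC
  set s := π₁.max' h1 with hs
  have hsmem : s ∈ π₁ := π₁.max'_mem h1
  constructor
  · rw [Finset.card_erase_of_mem hsmem, Finset.card_erase_of_mem ht, hcard]
  · intro x
    rw [Finset.filter_erase, Finset.filter_erase]
    rcases le_or_gt x s with hxs | hsx
    · have e1 : (Finset.filter (· < x) π₁).erase s = Finset.filter (· < x) π₁ := by
        apply Finset.erase_eq_of_notMem
        simp only [mem_filter]
        rintro ⟨-, hlt⟩
        exact absurd (lt_of_lt_of_le hlt hxs) (lt_irrefl s)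
      rw [e1]
      exact le_trans (Finset.card_le_card (Finset.erase_subset _ _)) (hc x)
    · have hsx' : s ∈ Finset.filter (· < x) π₁ := by
        simp only [mem_filter]; exact ⟨hsmem, hsx⟩
      rw [Finset.card_erase_of_mem hsx']
      rcases le_or_gt t x with htx | hxt
      · have htx' : t ∈ Finset.filter (· ≤ x) π₂ := by
          simp only [mem_filter]; exact ⟨ht, htx⟩
        rw [Finset.card_erase_of_mem htx']
        have := hc x
        omega
      · have e2 : (Finset.filter (· ≤ x) π₂).erase t = Finset.filter (· ≤ x) π₂ := by
          apply Finset.erase_eq_of_notMem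
          simp only [mem_filter]
          rintro ⟨-, hle⟩
          exact absurd (lt_of_le_of_lt hle hxt) (lt_irrefl t)
        rw [e2]
        -- filter (≤ x) π₂ ⊆ π₂.erase t, so card ≤ π₂.card - 1 = π₁.card - 1
        have hsub : Finset.filter (· ≤ x) π₂ ⊆ π₂.erase t := by
          intro y hy
          simp only [mem_filter] at hy
          refine Finset.mem_erase.mpr ⟨?_, hy.1⟩
          rintro rfl
          exact absurd (lt_of_le_of_lt hy.2 hxt) (lt_irrefl _)
        have h3 := Finset.card_le_card hsub
        rw [Finset.card_erase_of_mem ht] at h3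
        -- filter (< x) π₁ = π₁ since all elements ≤ s < x
        have e3 : Finset.filter (· < x) π₁ = π₁ := by
          apply Finset.filter_true_of_mem
          intro y hy
          exact lt_of_le_of_lt (π₁.le_max' y hy) hsx
        rw [e3]
        have hcard1 : 1 ≤ π₁.card := Finset.card_pos.mpr h1
        omega

lemma geom_aux' {α : Type*} [LinearOrder α] [DecidableEq α] (q : ℂ) : ∀ (n : ℕ) (s : Finset α),
    s.card = n →
    ∑ t ∈ s, q ^ (s.filter fun t' => t < t').card = ∑ j ∈ Finset.range s.card, q ^ j := by
  classical
  intro n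
  induction n using Nat.strong_induction_on with
  | _ n ih =>
    intro s hn
    rcases Finset.eq_empty_or_nonempty s with rfl | hne
    · simp
    · have hnpos : 0 < n := hn ▸ Finset.card_pos.mpr hne
      set m := s.min' hne with hm
      have hmmem : m ∈ s := s.min'_mem hne
      rw [← Finset.add_sum_erase _ _ hmmem]
      have e1 : s.filter (fun t' => m < t') = s.erase m := by
        ext y
        simp only [mem_filter, Finset.mem_erase]
        constructor
        · rintro ⟨hy, hlt⟩; exact ⟨ne_of_gt hlt, hy⟩
        · rintro ⟨hne', hy⟩; exact ⟨hy, lt_of_le_of_ne (s.min'_le y hy) (Ne.symm hne')⟩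
      have hec : (s.erase m).card = n - 1 := by rw [Finset.card_erase_of_mem hmmem, hn]
      have e2 : ∀ t ∈ s.erase m, (s.filter fun t' => t < t').card =
          ((s.erase m).filter fun t' => t < t').card := by
        intro t htm
        rw [Finset.filter_erase]
        rw [Finset.erase_eq_of_notMem]
        simp only [mem_filter]
        rintro ⟨-, hlt⟩
        exact absurd (s.min'_le t (Finset.mem_of_mem_erase htm)) (not_le.mpr hlt)
      rw [e1, hec]
      rw [Finset.sum_congr rfl (fun t ht => by rw [e2 t ht])]
      rw [ih (n-1) (by omega) (s.erase m) hec, hec]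
      rw [hn]
      have : n = (n-1) + 1 := by omega
      rw [this, Finset.sum_range_succ]
      simp only [Nat.add_sub_cancel]
      ring

lemma geom_aux {α : Type*} [LinearOrder α] [DecidableEq α] (q : ℂ) (s : Finset α) :
    ∑ t ∈ s, q ^ (s.filter fun t' => t < t').card = ∑ j ∈ Finset.range s.card, q ^ j :=
  geom_aux' q s.card s rfl

section Chunk2
variable {N : ℕ} {μ : Fin N → ℕ}

lemma mem_sset {s : Fin N} : s ∈ Sset μ ↔ μ s = 0 := by simp [Sset]

lemma mem_tset {t : Fin N} : t ∈ Tset μ ↔ μ t = 1 := by simp [Tset]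

lemma sset_tset_ne {s t : Fin N} (hs : s ∈ Sset μ) (ht : t ∈ Tset μ) : s ≠ t := by
  rintro rfl
  rw [mem_sset] at hs; rw [mem_tset] at ht; omega

lemma lam_inter_union (hμ : ∀ i, μ i ≤ 1) (lam : Finset (Fin N)) :
    (lam ∩ Sset μ) ∪ (lam ∩ Tset μ) = lam := by
  ext x
  have := hμ x
  simp only [Finset.mem_union, Finset.mem_inter, mem_sset, mem_tset]
  constructor
  · tauto
  · intro hx
    rcases Nat.le_one_iff_eq_zero_or_eq_one.mp (hμ x) with h | h
    · exact Or.inl ⟨hx, h⟩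
    · exact Or.inr ⟨hx, h⟩

lemma lam_card_split (hμ : ∀ i, μ i ≤ 1) (lam : Finset (Fin N)) :
    (lam ∩ Sset μ).card + (lam ∩ Tset μ).card = lam.card := by
  classical
  rw [← Finset.card_union_of_disjoint, lam_inter_union hμ lam]
  rw [Finset.disjoint_left]
  intro a ha ha'
  exact sset_tset_ne (Finset.mem_inter.mp ha).2 (Finset.mem_inter.mp ha').2 rfl

lemma rook_rows (σ : Finset (Fin N × Fin N)) (lam : Finset (Fin N))
    (h1 : IsRookPlacement μ σ) (h2 : rows σ ∪ cols σ = lam) :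
    rows σ = lam ∩ Sset μ := by
  have hrS : rows σ ⊆ Sset μ := by
    intro x hx
    obtain ⟨p, hp, rfl⟩ := Finset.mem_image.mp hx
    have := h1.1 hp
    simp only [Board, Finset.mem_filter, Finset.mem_product] at this
    exact this.1.1
  have hcT : cols σ ⊆ Tset μ := by
    intro x hx
    obtain ⟨p, hp, rfl⟩ := Finset.mem_image.mp hx
    have := h1.1 hp
    simp only [Board, Finset.mem_filter, Finset.mem_product] at this
    exact this.1.2
  ext x
  simp only [Finset.mem_inter]
  constructor
  · intro hx
    exact ⟨h2 ▸ Finset.mem_union_left _ hx, hrS hx⟩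
  · rintro ⟨hxl, hxS⟩
    rw [← h2] at hxl
    rcases Finset.mem_union.mp hxl with h | h
    · exact h
    · exact absurd rfl (sset_tset_ne hxS (hcT h))

lemma rook_cols (σ : Finset (Fin N × Fin N)) (lam : Finset (Fin N))
    (h1 : IsRookPlacement μ σ) (h2 : rows σ ∪ cols σ = lam) :
    cols σ = lam ∩ Tset μ := by
  have hrS : rows σ ⊆ Sset μ := by
    intro x hx
    obtain ⟨p, hp, rfl⟩ := Finset.mem_image.mp hx
    have := h1.1 hp
    simp only [Board, Finset.mem_filter, Finset.mem_product] at this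
    exact this.1.1
  have hcT : cols σ ⊆ Tset μ := by
    intro x hx
    obtain ⟨p, hp, rfl⟩ := Finset.mem_image.mp hx
    have := h1.1 hp
    simp only [Board, Finset.mem_filter, Finset.mem_product] at this
    exact this.1.2
  ext x
  simp only [Finset.mem_inter]
  constructor
  · intro hx
    exact ⟨h2 ▸ Finset.mem_union_right _ hx, hcT hx⟩
  · rintro ⟨hxl, hxT⟩
    rw [← h2] at hxl
    rcases Finset.mem_union.mp hxl with h | h
    · exact absurd rfl (sset_tset_ne (hrS h) hxT)
    · exact h

lemma rows_erase (σ : Finset (Fin N × Fin N)) (p : Fin N × Fin N) (hp : p ∈ σ)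
    (hinj : ∀ p' ∈ σ, ∀ p'' ∈ σ, p'.1 = p''.1 → p' = p'') :
    rows (σ.erase p) = (rows σ).erase p.1 := by
  ext x
  simp only [rows, Finset.mem_image, Finset.mem_erase]
  constructor
  · rintro ⟨p', hp', rfl⟩
    exact ⟨fun h => hp'.1 (hinj p' hp'.2 p hp h), p', hp'.2, rfl⟩
  · rintro ⟨hne, p', hp', rfl⟩
    exact ⟨p', ⟨fun h => hne (congrArg Prod.fst h), hp'⟩, rfl⟩

lemma cols_erase (σ : Finset (Fin N × Fin N)) (p : Fin N × Fin N) (hp : p ∈ σ)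
    (hinj : ∀ p' ∈ σ, ∀ p'' ∈ σ, p'.2 = p''.2 → p' = p'') :
    cols (σ.erase p) = (cols σ).erase p.2 := by
  ext x
  simp only [cols, Finset.mem_image, Finset.mem_erase]
  constructor
  · rintro ⟨p', hp', rfl⟩
    exact ⟨fun h => hp'.1 (hinj p' hp'.2 p hp h), p', hp'.2, rfl⟩
  · rintro ⟨hne, p', hp', rfl⟩
    exact ⟨p', ⟨fun h => hne (congrArg Prod.snd h), hp'⟩, rfl⟩

lemma card_filter_snd (σ : Finset (Fin N × Fin N)) (P : Fin N → Prop) [DecidablePred P]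
    (hinj : ∀ p' ∈ σ, ∀ p'' ∈ σ, p'.2 = p''.2 → p' = p'') :
    (σ.filter fun p' => P p'.2).card = ((cols σ).filter P).card := by
  classical
  rw [cols, Finset.filter_image]
  rw [Finset.card_image_of_injOn]
  intro p hp p' hp' h
  simp only [Finset.coe_filter, Set.mem_setOf_eq] at hp hp'
  exact hinj p hp.1 p' hp'.1 h

lemma inversions_insert (σ : Finset (Fin N × Fin N)) (p : Fin N × Fin N) (hp : p ∉ σ)
    (hrow : ∀ p' ∈ σ, p'.1 < p.1) :
    inversions (insert p σ) = inversions σ + (σ.filter fun p' => p.2 < p'.2).card := by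
  classical
  rw [inversions, Finset.sum_insert hp]
  have e1 : ((insert p σ).filter fun p'' => p''.1 < p.1 ∧ p.2 < p''.2) =
      σ.filter fun p'' => p.2 < p''.2 := by
    rw [Finset.filter_insert, if_neg (by simp)]
    apply Finset.filter_congr
    intro p'' hp''
    simp only [and_iff_right_iff_imp]
    exact fun _ => hrow p'' hp''
  have e2 : ∀ p' ∈ σ, ((insert p σ).filter fun p'' => p''.1 < p'.1 ∧ p'.2 < p''.2) =
      σ.filter fun p'' => p''.1 < p'.1 ∧ p'.2 < p''.2 := by
    intro p' hp'
    rw [Finset.filter_insert, if_neg]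
    push_neg
    intro h
    exact absurd h (not_lt.mpr (le_of_lt (hrow p' hp')))
  rw [e1]
  rw [Finset.sum_congr rfl (fun p' hp' => by rw [e2 p' hp'])]
  rw [inversions]
  ring

end Chunk2

section Chunk3
variable {N : ℕ} {μ : Fin N → ℕ}

lemma rows_insert (p : Fin N × Fin N) (σ : Finset (Fin N × Fin N)) :
    rows (insert p σ) = insert p.1 (rows σ) := Finset.image_insert _ _ _

lemma cols_insert (p : Fin N × Fin N) (σ : Finset (Fin N × Fin N)) :
    cols (insert p σ) = insert p.2 (cols σ) := Finset.image_insert _ _ _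

lemma erase_inter_sset (lam : Finset (Fin N)) (s t : Fin N) (hs : s ∈ Sset μ) (ht : t ∈ Tset μ) :
    ((lam.erase s).erase t) ∩ Sset μ = (lam ∩ Sset μ).erase s := by
  ext x
  simp only [Finset.mem_inter, Finset.mem_erase]
  constructor
  · rintro ⟨⟨hxt, hxs, hxl⟩, hxS⟩
    exact ⟨hxs, hxl, hxS⟩
  · rintro ⟨hxs, hxl, hxS⟩
    exact ⟨⟨sset_tset_ne hxS ht, hxs, hxl⟩, hxS⟩

lemma erase_inter_tset (lam : Finset (Fin N)) (s t : Fin N) (hs : s ∈ Sset μ) (ht : t ∈ Tset μ) :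
    ((lam.erase s).erase t) ∩ Tset μ = (lam ∩ Tset μ).erase t := by
  ext x
  simp only [Finset.mem_inter, Finset.mem_erase]
  constructor
  · rintro ⟨⟨hxt, hxs, hxl⟩, hxT⟩
    exact ⟨hxt, hxl, hxT⟩
  · rintro ⟨hxt, hxl, hxT⟩
    exact ⟨⟨hxt, fun h => sset_tset_ne hs hxT h.symm, hxl⟩, hxT⟩

lemma erase_union_erase (hμ : ∀ i, μ i ≤ 1) (lam : Finset (Fin N)) (s t : Fin N)
    (hs : s ∈ lam ∩ Sset μ) (ht : t ∈ lam ∩ Tset μ) :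
    (lam ∩ Sset μ).erase s ∪ (lam ∩ Tset μ).erase t = (lam.erase s).erase t := by
  have hsS := (Finset.mem_inter.mp hs).2
  have htT := (Finset.mem_inter.mp ht).2
  ext x
  simp only [Finset.mem_union, Finset.mem_erase, Finset.mem_inter]
  constructor
  · rintro (⟨hxs, hxl, hxS⟩ | ⟨hxt, hxl, hxT⟩)
    · exact ⟨sset_tset_ne hxS htT, hxs, hxl⟩
    · exact ⟨hxt, fun h => sset_tset_ne hsS hxT h.symm, hxl⟩
  · rintro ⟨hxt, hxs, hxl⟩
    have : x ∈ (lam ∩ Sset μ) ∪ (lam ∩ Tset μ) := by rw [lam_inter_union hμ lam]; exact hxl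
    rcases Finset.mem_union.mp this with h | h
    · exact Or.inl ⟨hxs, Finset.mem_inter.mp h⟩
    · exact Or.inr ⟨hxt, Finset.mem_inter.mp h⟩

lemma rho_erase (lam : Finset (Fin N)) (s t x : Fin N)
    (hs : s ∈ lam) (hsS : s ∈ Sset μ) (ht : t ∈ lam) (htT : t ∈ Tset μ)
    (hxs : x < s) (hxt : x ≤ t) :
    rho μ ((lam.erase s).erase t) x = rho μ lam x := by
  classical
  have hts : t ≠ s := fun h => sset_tset_ne hsS htT h.symm
  have hA : ((lam.erase s).erase t) ∩ SsetLe μ x = lam ∩ SsetLe μ x := by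
    ext y
    simp only [Finset.mem_inter, Finset.mem_erase, SsetLe, Finset.mem_filter]
    constructor
    · rintro ⟨⟨-, -, hyl⟩, hyS, hyx⟩
      exact ⟨hyl, hyS, hyx⟩
    · rintro ⟨hyl, hyS, hyx⟩
      exact ⟨⟨sset_tset_ne hyS htT, ne_of_lt (lt_of_le_of_lt hyx hxs), hyl⟩, hyS, hyx⟩
  have hB : ((lam.erase s).erase t) ∩ TsetGe μ x = (lam ∩ TsetGe μ x).erase t := by
    ext y
    simp only [Finset.mem_inter, Finset.mem_erase, TsetGe, Finset.mem_filter]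
    constructor
    · rintro ⟨⟨hyt, hys, hyl⟩, hyT, hyx⟩
      exact ⟨hyt, hyl, hyT, hyx⟩
    · rintro ⟨hyt, hyl, hyT, hyx⟩
      exact ⟨⟨hyt, fun h => sset_tset_ne hsS hyT h.symm, hyl⟩, hyT, hyx⟩
  have htB : t ∈ lam ∩ TsetGe μ x :=
    Finset.mem_inter.mpr ⟨ht, Finset.mem_filter.mpr ⟨htT, hxt⟩⟩
  have hb1 : 1 ≤ (lam ∩ TsetGe μ x).card := Finset.card_pos.mpr ⟨t, htB⟩
  have hlam2 : 2 ≤ lam.card := Finset.one_lt_card.mpr ⟨s, hs, t, ht, hts.symm⟩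
  have hc1 : ((lam.erase s).erase t).card = lam.card - 2 := by
    rw [Finset.card_erase_of_mem (Finset.mem_erase.mpr ⟨hts, ht⟩),
      Finset.card_erase_of_mem hs]
    omega
  unfold rho
  rw [hA, hB, Finset.card_erase_of_mem htB, hc1]
  omega

lemma rho_max (hμ : ∀ i, μ i ≤ 1) (lam : Finset (Fin N))
    (hcard : (lam ∩ Sset μ).card = (lam ∩ Tset μ).card) (hR : (lam ∩ Sset μ).Nonempty) :
    rho μ lam ((lam ∩ Sset μ).max' hR) =
      ((lam ∩ Tset μ).filter fun t => (lam ∩ Sset μ).max' hR < t).card := by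
  classical
  set s := (lam ∩ Sset μ).max' hR with hsdef
  have hsR : s ∈ lam ∩ Sset μ := (lam ∩ Sset μ).max'_mem hR
  have hsS : s ∈ Sset μ := (Finset.mem_inter.mp hsR).2
  have h1 : lam ∩ SsetLe μ s = lam ∩ Sset μ := by
    ext y
    simp only [Finset.mem_inter, SsetLe, Finset.mem_filter]
    constructor
    · rintro ⟨hyl, hyS, -⟩
      exact ⟨hyl, hyS⟩
    · rintro ⟨hyl, hyS⟩
      exact ⟨hyl, hyS, (lam ∩ Sset μ).le_max' y (Finset.mem_inter.mpr ⟨hyl, hyS⟩)⟩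
  have h2 : lam ∩ TsetGe μ s = (lam ∩ Tset μ).filter fun t => s < t := by
    ext y
    simp only [Finset.mem_inter, TsetGe, Finset.mem_filter]
    constructor
    · rintro ⟨hyl, hyT, hsy⟩
      exact ⟨⟨hyl, hyT⟩, lt_of_le_of_ne hsy (sset_tset_ne hsS hyT)⟩
    · rintro ⟨⟨hyl, hyT⟩, hsy⟩
      exact ⟨hyl, hyT, le_of_lt hsy⟩
  have h3 := lam_card_split hμ lam
  unfold rho
  rw [h1, h2]
  omega

end Chunk3

open Classical in
lemma main_lemma {N : ℕ} (μ : Fin N → ℕ) (hμ : ∀ i, μ i ≤ 1) (q : ℂ) (hq1 : q ≠ 1) :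
    ∀ (n : ℕ) (lam : Finset (Fin N)), lam.card = n →
      Counting (lam ∩ Sset μ) (lam ∩ Tset μ) →
      ∑ σ ∈ Finset.univ.filter
          (fun σ : Finset (Fin N × Fin N) => IsRookPlacement μ σ ∧ rows σ ∪ cols σ = lam),
        q ^ inversions σ =
        ∏ s ∈ lam ∩ Sset μ, (q ^ rho μ lam s - 1) / (q - 1) := by
  intro n
  induction n using Nat.strong_induction_on with
  | _ n ih =>
  intro lam hn hint
  rcases (lam ∩ Sset μ).eq_empty_or_nonempty with hRe | hR
  · -- base case: lam = ∅
    have hT : (lam ∩ Tset μ) = ∅ := by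
      have := hint.1
      rw [hRe] at this
      simp only [Finset.card_empty] at this
      exact (Finset.card_eq_zero.mp this.symm)
    have hlame : lam = ∅ := by
      rw [← lam_inter_union hμ lam, hRe, hT]
      simp
    subst hlame
    have hfil : (Finset.univ.filter
        (fun σ : Finset (Fin N × Fin N) => IsRookPlacement μ σ ∧ rows σ ∪ cols σ = ∅)) =
        {∅} := by
      ext σ
      simp only [Finset.mem_filter, Finset.mem_univ, true_and, Finset.mem_singleton]
      constructor
      · rintro ⟨hrp, hun⟩
        have : rows σ = ∅ := by
          have h := Finset.union_eq_empty.mp hun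
          exact h.1
        exact Finset.image_eq_empty.mp this
      · rintro rfl
        refine ⟨⟨Finset.empty_subset _, ?_, ?_⟩, ?_⟩
        · intro p hp; exact absurd hp (Finset.notMem_empty p)
        · intro p hp; exact absurd hp (Finset.notMem_empty p)
        · simp [rows, cols]
    rw [hfil, hRe]
    simp [inversions]
  · -- inductive step
    have hn1 : 1 ≤ n := by
      rw [← hn]
      exact Finset.card_pos.mpr ⟨(lam ∩ Sset μ).max' hR,
        (Finset.mem_inter.mp ((lam ∩ Sset μ).max'_mem hR)).1⟩
    set s : Fin N := (lam ∩ Sset μ).max' hR with hsdef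
    have hsR : s ∈ lam ∩ Sset μ := (lam ∩ Sset μ).max'_mem hR
    have hsS : s ∈ Sset μ := (Finset.mem_inter.mp hsR).2
    have hslam : s ∈ lam := (Finset.mem_inter.mp hsR).1
    set C' : Finset (Fin N) := (lam ∩ Tset μ).filter (fun t => s < t) with hC'def
    set lam' : Fin N → Finset (Fin N) := fun t => (lam.erase s).erase t with hlam'def
    set w : Fin N → ℕ := fun t => ((lam ∩ Tset μ).filter fun t' => t < t').card with hwdef
    set P0 : ℂ := ∏ x ∈ (lam ∩ Sset μ).erase s, (q ^ rho μ lam x - 1) / (q - 1) with hP0def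
    set D : Finset ((_ : Fin N) × Finset (Fin N × Fin N)) :=
      C'.sigma (fun t => Finset.univ.filter
        (fun σ : Finset (Fin N × Fin N) => IsRookPlacement μ σ ∧ rows σ ∪ cols σ = lam' t))
      with hDdef
    -- basic facts about members of D
    have hDfacts : ∀ t σ', (⟨t, σ'⟩ : (_ : Fin N) × Finset (Fin N × Fin N)) ∈ D →
        t ∈ lam ∩ Tset μ ∧ s < t ∧ rows σ' = (lam ∩ Sset μ).erase s ∧
          cols σ' = (lam ∩ Tset μ).erase t ∧ IsRookPlacement μ σ' := by
      intro t σ' hmem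
      rw [hDdef, Finset.mem_sigma] at hmem
      obtain ⟨htC', hσ'⟩ := hmem
      rw [hC'def, Finset.mem_filter] at htC'
      obtain ⟨htC, hst⟩ := htC'
      have htT : t ∈ Tset μ := (Finset.mem_inter.mp htC).2
      rw [Finset.mem_filter] at hσ'
      obtain ⟨-, hrp', hun'⟩ := hσ'
      refine ⟨htC, hst, ?_, ?_, hrp'⟩
      · rw [rook_rows σ' _ hrp' hun', hlam'def]
        exact erase_inter_sset lam s t hsS htT
      · rw [rook_cols σ' _ hrp' hun', hlam'def]
        exact erase_inter_tset lam s t hsS htT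
    have hrowlt : ∀ t σ', (⟨t, σ'⟩ : (_ : Fin N) × Finset (Fin N × Fin N)) ∈ D →
        ∀ p' ∈ σ', p'.1 < s := by
      intro t σ' hmem p' hp'
      obtain ⟨-, -, hrows', -, -⟩ := hDfacts t σ' hmem
      have : p'.1 ∈ rows σ' := Finset.mem_image_of_mem _ hp'
      rw [hrows'] at this
      obtain ⟨hne, hm⟩ := Finset.mem_erase.mp this
      exact lt_of_le_of_ne ((lam ∩ Sset μ).le_max' _ hm) hne
    have hnotmem : ∀ t σ', (⟨t, σ'⟩ : (_ : Fin N) × Finset (Fin N × Fin N)) ∈ D →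
        (s, t) ∉ σ' := by
      intro t σ' hmem h
      exact absurd ((hrowlt t σ' hmem) (s, t) h) (lt_irrefl s)
    -- the filter set is the image of D under inserting (s, t)
    have hA_eq : (Finset.univ.filter
        (fun σ : Finset (Fin N × Fin N) => IsRookPlacement μ σ ∧ rows σ ∪ cols σ = lam)) =
        D.image (fun x : (_ : Fin N) × Finset (Fin N × Fin N) => insert (s, x.1) x.2) := by
      ext σ
      simp only [Finset.mem_filter, Finset.mem_univ, true_and, Finset.mem_image]
      constructor
      · rintro ⟨hrp, hun⟩
        have hrows := rook_rows σ lam hrp hun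
        have hcols := rook_cols σ lam hrp hun
        have hsrow : s ∈ rows σ := by rw [hrows]; exact hsR
        obtain ⟨p, hpσ, hp1⟩ := Finset.mem_image.mp hsrow
        have hb := hrp.1 hpσ
        simp only [Board, Finset.mem_filter, Finset.mem_product] at hb
        have htC : p.2 ∈ lam ∩ Tset μ := by
          rw [← hcols]; exact Finset.mem_image_of_mem _ hpσ
        have hst : s < p.2 := hp1 ▸ hb.2
        refine ⟨⟨p.2, σ.erase p⟩, ?_, ?_⟩
        · rw [hDdef, Finset.mem_sigma]
          constructor
          · rw [hC'def, Finset.mem_filter]; exact ⟨htC, hst⟩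
          · rw [Finset.mem_filter]
            refine ⟨Finset.mem_univ _, ⟨?_, ?_, ?_⟩, ?_⟩
            · exact (Finset.erase_subset _ _).trans hrp.1
            · intro a ha b hb' hab
              exact hrp.2.1 a (Finset.mem_of_mem_erase ha) b (Finset.mem_of_mem_erase hb') hab
            · intro a ha b hb' hab
              exact hrp.2.2 a (Finset.mem_of_mem_erase ha) b (Finset.mem_of_mem_erase hb') hab
            · rw [rows_erase σ p hpσ hrp.2.1, cols_erase σ p hpσ hrp.2.2, hrows, hcols, hp1,
                hlam'def]
              exact erase_union_erase hμ lam s p.2 hsR htC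
        · show insert (s, p.2) (σ.erase p) = σ
          have hpe : (s, p.2) = p := by rw [← hp1]
          rw [hpe, Finset.insert_erase hpσ]
      · rintro ⟨⟨t, σ'⟩, hxD, rfl⟩
        obtain ⟨htC, hst, hrows', hcols', hrp'⟩ := hDfacts t σ' hxD
        have htT : t ∈ Tset μ := (Finset.mem_inter.mp htC).2
        have htlam : t ∈ lam := (Finset.mem_inter.mp htC).1
        have hlt := hrowlt t σ' hxD
        have hcolne : ∀ p' ∈ σ', p'.2 ≠ t := by
          intro p' hp' h
          have : p'.2 ∈ cols σ' := Finset.mem_image_of_mem _ hp'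
          rw [hcols'] at this
          exact (Finset.mem_erase.mp this).1 h
        constructor
        · refine ⟨?_, ?_, ?_⟩
          · rw [Finset.insert_subset_iff]
            refine ⟨?_, hrp'.1⟩
            simp only [Board, Finset.mem_filter, Finset.mem_product]
            exact ⟨⟨hsS, htT⟩, hst⟩
          · intro a ha b hb hab
            rcases Finset.mem_insert.mp ha with rfl | ha' <;>
              rcases Finset.mem_insert.mp hb with rfl | hb'
            · rfl
            · have := hlt b hb'
              rw [← hab] at this
              exact absurd this (lt_irrefl _)
            · have := hlt a ha'
              rw [hab] at this
              exact absurd this (lt_irrefl _)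
            · exact hrp'.2.1 a ha' b hb' hab
          · intro a ha b hb hab
            rcases Finset.mem_insert.mp ha with rfl | ha' <;>
              rcases Finset.mem_insert.mp hb with rfl | hb'
            · rfl
            · exact absurd hab.symm (hcolne b hb')
            · exact absurd hab (hcolne a ha')
            · exact hrp'.2.2 a ha' b hb' hab
        · rw [rows_insert, cols_insert, hrows', hcols']
          show insert s ((lam ∩ Sset μ).erase s) ∪ insert t ((lam ∩ Tset μ).erase t) = lam
          rw [Finset.insert_erase hsR, Finset.insert_erase htC]
          exact lam_inter_union hμ lam
    have hInj : ∀ x ∈ D, ∀ y ∈ D,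
        (fun x : (_ : Fin N) × Finset (Fin N × Fin N) => insert (s, x.1) x.2) x =
        (fun x : (_ : Fin N) × Finset (Fin N × Fin N) => insert (s, x.1) x.2) y → x = y := by
      rintro ⟨t₁, σ₁⟩ hx ⟨t₂, σ₂⟩ hy hF
      simp only at hF
      have hn1' := hnotmem t₁ σ₁ hx
      have hn2' := hnotmem t₂ σ₂ hy
      have hmem : (s, t₁) ∈ insert (s, t₂) σ₂ := by
        rw [← hF]; exact Finset.mem_insert_self _ _
      rcases Finset.mem_insert.mp hmem with heq | hmem'
      · have ht12 : t₁ = t₂ := (Prod.mk.injEq _ _ _ _ ▸ heq).2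
        subst ht12
        have hσeq : σ₁ = σ₂ := by
          rw [← Finset.erase_insert hn1', hF, Finset.erase_insert hn2']
        rw [hσeq]
      · exfalso
        obtain ⟨-, -, hrows₂, -, -⟩ := hDfacts t₂ σ₂ hy
        have : s ∈ rows σ₂ := Finset.mem_image_of_mem Prod.fst hmem'
        rw [hrows₂] at this
        exact (Finset.notMem_erase _ _) this
    -- evaluate the inner sum for fixed t
    have hinner : ∀ t ∈ C',
        (∑ σ' ∈ Finset.univ.filter
          (fun σ : Finset (Fin N × Fin N) => IsRookPlacement μ σ ∧ rows σ ∪ cols σ = lam' t),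
          q ^ inversions (insert (s, t) σ')) = q ^ w t * P0 := by
      intro t htC'
      have htC : t ∈ lam ∩ Tset μ := (Finset.mem_filter.mp htC').1
      have hst : s < t := (Finset.mem_filter.mp htC').2
      have htT : t ∈ Tset μ := (Finset.mem_inter.mp htC).2
      have htlam : t ∈ lam := (Finset.mem_inter.mp htC).1
      have hts : t ≠ s := fun h => sset_tset_ne hsS htT h.symm
      have hDmem : ∀ σ', σ' ∈ Finset.univ.filter
          (fun σ : Finset (Fin N × Fin N) => IsRookPlacement μ σ ∧ rows σ ∪ cols σ = lam' t) →
          (⟨t, σ'⟩ : (_ : Fin N) × Finset (Fin N × Fin N)) ∈ D := by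
        intro σ' hσ'
        rw [hDdef, Finset.mem_sigma]
        exact ⟨htC', hσ'⟩
      have hrw : ∀ σ' ∈ Finset.univ.filter
          (fun σ : Finset (Fin N × Fin N) => IsRookPlacement μ σ ∧ rows σ ∪ cols σ = lam' t),
          q ^ inversions (insert (s, t) σ') = q ^ inversions σ' * q ^ w t := by
        intro σ' hσ'
        have hD' := hDmem σ' hσ'
        obtain ⟨-, -, hrows', hcols', hrp'⟩ := hDfacts t σ' hD'
        rw [inversions_insert σ' (s, t) (hnotmem t σ' hD') (hrowlt t σ' hD')]
        have hcnt : (σ'.filter fun p' => (s, t).2 < p'.2).card = w t := by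
          rw [card_filter_snd σ' (fun y => (s, t).2 < y) hrp'.2.2, hcols']
          rw [hwdef]
          show (((lam ∩ Tset μ).erase t).filter fun t' => t < t').card = _
          rw [Finset.filter_erase, Finset.erase_eq_of_notMem]
          simp only [Finset.mem_filter]
          rintro ⟨-, h⟩
          exact absurd h (lt_irrefl t)
        rw [hcnt, pow_add]
      rw [Finset.sum_congr rfl hrw, ← Finset.sum_mul]
      rw [mul_comm]
      congr 1
      -- apply the induction hypothesis to lam' t
      have hcard' : (lam' t).card = n - 2 := by
        rw [hlam'def]
        show ((lam.erase s).erase t).card = n - 2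
        rw [Finset.card_erase_of_mem (Finset.mem_erase.mpr ⟨hts, htlam⟩),
          Finset.card_erase_of_mem hslam, hn]
        omega
      have hlam2 : 2 ≤ n := by
        rw [← hn]
        exact Finset.one_lt_card.mpr ⟨s, hslam, t, htlam, hts.symm⟩
      have hcnt' : Counting ((lam' t) ∩ Sset μ) ((lam' t) ∩ Tset μ) := by
        rw [hlam'def]
        show Counting (((lam.erase s).erase t) ∩ Sset μ) (((lam.erase s).erase t) ∩ Tset μ)
        rw [erase_inter_sset lam s t hsS htT, erase_inter_tset lam s t hsS htT]
        exact counting_erase hint hR t htC hst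
      rw [ih (n - 2) (by omega) (lam' t) hcard' hcnt']
      -- the product over lam' t ∩ Sset μ equals P0
      have hset : (lam' t) ∩ Sset μ = (lam ∩ Sset μ).erase s :=
        erase_inter_sset lam s t hsS htT
      rw [hP0def]
      refine Finset.prod_congr hset ?_
      intro x hx
      obtain ⟨hxne, hxmem⟩ := Finset.mem_erase.mp hx
      have hxs : x < s := lt_of_le_of_ne ((lam ∩ Sset μ).le_max' _ hxmem) hxne
      show (q ^ rho μ ((lam.erase s).erase t) x - 1) / (q - 1) = _
      rw [rho_erase lam s t x hslam hsS htlam htT hxs (le_of_lt (lt_trans hxs hst))]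
    -- geometric sum
    have hgeo : (∑ t ∈ C', q ^ w t) = (q ^ rho μ lam s - 1) / (q - 1) := by
      have hweq : ∀ t ∈ C', w t = (C'.filter fun t' => t < t').card := by
        intro t htC'
        have hst : s < t := (Finset.mem_filter.mp htC').2
        rw [hwdef, hC'def]
        show ((lam ∩ Tset μ).filter fun t' => t < t').card =
          (((lam ∩ Tset μ).filter fun t' => s < t').filter fun t' => t < t').card
        rw [Finset.filter_filter]
        congr 1
        apply Finset.filter_congr
        intro y hy
        constructor
        · intro h; exact ⟨lt_trans hst h, h⟩
        · intro h; exact h.2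
      have hh : ∑ t ∈ C', q ^ w t = ∑ t ∈ C', q ^ ((C'.filter fun t' => t < t').card) :=
        Finset.sum_congr rfl (fun t ht => by rw [hweq t ht])
      rw [hh, geom_aux q C', geom_sum_eq hq1]
      rw [hsdef, rho_max hμ lam hint.1 hR]
    -- assemble
    rw [hA_eq, Finset.sum_image hInj, Finset.sum_sigma]
    rw [Finset.sum_congr rfl hinner, ← Finset.sum_mul, hgeo]
    rw [← Finset.mul_prod_erase (lam ∩ Sset μ) _ hsR]

-- `Σ_σ q^{inv(σ)} = Π_{s ∈ λ ∩ S_μ} (q^{ρ(s,μ,λ)} − 1)/(q − 1)`, the sum over all rook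
-- placements `σ` on `B_μ` of type `λ`.
open Classical in
theorem stmt10 {N : ℕ} (hN : 1 ≤ N) (μ : Fin N → ℕ) (hμ : ∀ i, μ i ≤ 1)
    (lam : Finset (Fin N)) (hint : Interlacing (lam ∩ Sset μ) (lam ∩ Tset μ))
    (q : ℂ) (hq0 : q ≠ 0) (hq1 : q ≠ 1) :
    ∑ σ ∈ Finset.univ.filter
        (fun σ : Finset (Fin N × Fin N) => IsRookPlacement μ σ ∧ rows σ ∪ cols σ = lam),
      q ^ inversions σ =
      ∏ s ∈ lam ∩ Sset μ, (q ^ rho μ lam s - 1) / (q - 1) :=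
  main_lemma μ hμ q hq1 lam.card lam rfl ((interlacing_iff _ _).mp hint)
end

section
/- Let μ ∈ {0,1}^N with μ not equal to the all-zeros or all-ones tuple. For a subset σ ⊆ B_μ, the following are equivalent: (i) there exists M ∈ M_μ(F_q) such that σ(M) = σ; (ii) σ is a rook placement on B_μ. -/
/-- The Ferrers board `B_μ` as a set: `{(s,t) : μ_s = 0, μ_t = 1, s < t}`. -/
def BoardSet {N : ℕ} (μ : Fin N → ℕ) : Set (Fin N × Fin N) :=
  {p | μ p.1 = 0 ∧ μ p.2 = 1 ∧ p.1 < p.2}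

/-- `M_μ(F)`: matrices (with rows indexed by `S_μ` and columns by `T_μ`, here encoded on
all of `Fin N × Fin N`) whose nonzero entries lie in `B_μ`. -/
def MSet (F : Type*) [Field F] {N : ℕ} (μ : Fin N → ℕ) : Set (Fin N → Fin N → F) :=
  {M | ∀ s t, M s t ≠ 0 → μ s = 0 ∧ μ t = 1 ∧ s < t}

/-- The rank of the submatrix of `M` with rows `{a ∈ S_μ : rowP a}` and columns
`{b ∈ T_μ : colP b}`. -/
noncomputable def rkOn {F : Type*} [Field F] {N : ℕ} (μ : Fin N → ℕ)
    (M : Fin N → Fin N → F) (rowP colP : Fin N → Prop)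
    [DecidablePred rowP] [DecidablePred colP] : ℕ :=
  Matrix.rank (Matrix.of fun (a : {a : Fin N // μ a = 0 ∧ rowP a})
    (b : {b : Fin N // μ b = 1 ∧ colP b}) => M a.1 b.1)

/-- `σ(M)`: the set of `(s,t) ∈ B_μ` such that
`r⁻(M,s,t) = r⁺(M,s,t) = r⁻⁺(M,s,t) = rank M(s,t) − 1`, where `M(s,t)` is the submatrix
with rows `{s' ∈ S_μ : s' ≤ s}` and columns `{t' ∈ T_μ : t' ≥ t}`, and `r⁻`, `r⁺`, `r⁻⁺`
are the ranks of the submatrices obtained by shrinking to rows `< s` and/or columns `> t`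
(an empty matrix having rank `0`). -/
def sigmaOf {F : Type*} [Field F] {N : ℕ} (μ : Fin N → ℕ) (M : Fin N → Fin N → F) :
    Set (Fin N × Fin N) :=
  {p | p ∈ BoardSet μ ∧
    rkOn μ M (fun a => a < p.1) (fun b => p.2 ≤ b) + 1
      = rkOn μ M (fun a => a ≤ p.1) (fun b => p.2 ≤ b) ∧
    rkOn μ M (fun a => a ≤ p.1) (fun b => p.2 < b) + 1
      = rkOn μ M (fun a => a ≤ p.1) (fun b => p.2 ≤ b) ∧
    rkOn μ M (fun a => a < p.1) (fun b => p.2 < b) + 1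
      = rkOn μ M (fun a => a ≤ p.1) (fun b => p.2 ≤ b)}

/-- A rook placement on `B_μ` (as a set). -/
def IsRookPlacementSet {N : ℕ} (μ : Fin N → ℕ) (σ : Set (Fin N × Fin N)) : Prop :=
  σ ⊆ BoardSet μ ∧ (∀ p ∈ σ, ∀ p' ∈ σ, p.1 = p'.1 → p = p') ∧
    (∀ p ∈ σ, ∀ p' ∈ σ, p.2 = p'.2 → p = p')

open Submodule Module

section helpers
variable {F : Type*} [Field F]

lemma mem_span_of_finrank_insert_eq {V : Type*} [AddCommGroup V] [Module F V]
    [FiniteDimensional F V] {S : Set V} {x : V}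
    (h : finrank F (span F (insert x S)) = finrank F (span F S)) : x ∈ span F S := by
  have hle : span F S ≤ span F (insert x S) := span_mono (Set.subset_insert x S)
  have := Submodule.eq_of_le_of_finrank_le hle h.le
  rw [this]
  exact subset_span (Set.mem_insert x S)

lemma finrank_span_insert_of_mem' {V : Type*} [AddCommGroup V] [Module F V]
    {S : Set V} {x : V} (h : x ∈ span F S) :
    finrank F (span F (insert x S)) = finrank F (span F S) := by
  rw [Submodule.span_insert_eq_span h]

lemma span_insert_shrink {n n' : Type*} [Fintype n] [Fintype n'] (S : Set (n → F)) (x : n → F)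
    (g : n' → n)
    (h : finrank F (span F (insert x S)) = finrank F (span F S)) :
    finrank F (span F (insert (x ∘ g) ((· ∘ g) '' S))) = finrank F (span F ((· ∘ g) '' S)) := by
  have hx := mem_span_of_finrank_insert_eq h
  have hx2 : x ∘ g ∈ span F ((· ∘ g) '' S) := by
    have h2 := Submodule.mem_map_of_mem (f := LinearMap.funLeft F F g) hx
    rwa [← Submodule.span_image] at h2
  exact finrank_span_insert_of_mem' hx2

lemma range_split_le {α β : Type*} [LinearOrder α] (f : α → β) (P : α → Prop) (s : α)
    (hs : P s) :
    Set.range (fun a : {a // P a ∧ a ≤ s} => f a.1)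
      = insert (f s) (Set.range (fun a : {a // P a ∧ a < s} => f a.1)) := by
  ext v
  simp only [Set.mem_range, Set.mem_insert_iff]
  constructor
  · rintro ⟨⟨a, hPa, hle⟩, rfl⟩
    rcases lt_or_eq_of_le hle with h | rfl
    · exact Or.inr ⟨⟨a, hPa, h⟩, rfl⟩
    · exact Or.inl rfl
  · rintro (rfl | ⟨⟨a, hPa, hlt⟩, rfl⟩)
    · exact ⟨⟨s, hs, le_refl s⟩, rfl⟩
    · exact ⟨⟨a, hPa, hlt.le⟩, rfl⟩

lemma range_split_ge {α β : Type*} [LinearOrder α] (f : α → β) (P : α → Prop) (s : α)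
    (hs : P s) :
    Set.range (fun a : {a // P a ∧ s ≤ a} => f a.1)
      = insert (f s) (Set.range (fun a : {a // P a ∧ s < a} => f a.1)) := by
  ext v
  simp only [Set.mem_range, Set.mem_insert_iff]
  constructor
  · rintro ⟨⟨a, hPa, hle⟩, rfl⟩
    rcases lt_or_eq_of_le hle with h | h
    · exact Or.inr ⟨⟨a, hPa, h⟩, rfl⟩
    · subst h; exact Or.inl rfl
  · rintro (rfl | ⟨⟨a, hPa, hlt⟩, rfl⟩)
    · exact ⟨⟨s, hs, le_refl s⟩, rfl⟩
    · exact ⟨⟨a, hPa, hlt.le⟩, rfl⟩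

end helpers


section rk
variable {F : Type*} [Field F] {N : ℕ} (μ : Fin N → ℕ) (M : Fin N → Fin N → F)

lemma rkOn_row_span (P Q : Fin N → Prop) [DecidablePred P] [DecidablePred Q] :
    rkOn μ M P Q = finrank F (span F (Set.range (fun (a : {a : Fin N // μ a = 0 ∧ P a})
      (b : {b : Fin N // μ b = 1 ∧ Q b}) => M a.1 b.1))) := by
  rw [rkOn, Matrix.rank_eq_finrank_span_row]
  rfl

lemma rkOn_col_span (P Q : Fin N → Prop) [DecidablePred P] [DecidablePred Q] :
    rkOn μ M P Q = finrank F (span F (Set.range (fun (b : {b : Fin N // μ b = 1 ∧ Q b})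
      (a : {a : Fin N // μ a = 0 ∧ P a}) => M a.1 b.1))) := by
  rw [rkOn, ← Matrix.rank_transpose, Matrix.rank_eq_finrank_span_row]
  rfl

lemma row_shrink (s : Fin N) (hs : μ s = 0) (Q Q' : Fin N → Prop)
    [DecidablePred Q] [DecidablePred Q'] (hQ : ∀ b, Q' b → Q b)
    (h : rkOn μ M (fun a => a ≤ s) Q = rkOn μ M (fun a => a < s) Q) :
    rkOn μ M (fun a => a ≤ s) Q' = rkOn μ M (fun a => a < s) Q' := by
  have hsplitQ := range_split_le (fun (a : Fin N) (b : {b : Fin N // μ b = 1 ∧ Q b}) => M a b.1)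
      (fun a => μ a = 0) s hs
  have hsplitQ' := range_split_le (fun (a : Fin N) (b : {b : Fin N // μ b = 1 ∧ Q' b}) => M a b.1)
      (fun a => μ a = 0) s hs
  rw [rkOn_row_span, rkOn_row_span, hsplitQ] at h
  rw [rkOn_row_span, rkOn_row_span, hsplitQ']
  have key := span_insert_shrink (F := F) _ _
    (fun b : {b : Fin N // μ b = 1 ∧ Q' b} => (⟨b.1, b.2.1, hQ b.1 b.2.2⟩ : {b : Fin N // μ b = 1 ∧ Q b})) h
  have himg : (· ∘ (fun b : {b : Fin N // μ b = 1 ∧ Q' b} =>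
        (⟨b.1, b.2.1, hQ b.1 b.2.2⟩ : {b : Fin N // μ b = 1 ∧ Q b}))) ''
      (Set.range (fun (a : {a : Fin N // μ a = 0 ∧ a < s})
        (b : {b : Fin N // μ b = 1 ∧ Q b}) => M a.1 b.1))
      = Set.range (fun (a : {a : Fin N // μ a = 0 ∧ a < s})
        (b : {b : Fin N // μ b = 1 ∧ Q' b}) => M a.1 b.1) := by
    rw [← Set.range_comp]; rfl
  rw [himg] at key
  exact key

lemma col_shrink (t : Fin N) (ht : μ t = 1) (P P' : Fin N → Prop)
    [DecidablePred P] [DecidablePred P'] (hP : ∀ a, P' a → P a)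
    (h : rkOn μ M P (fun b => t ≤ b) = rkOn μ M P (fun b => t < b)) :
    rkOn μ M P' (fun b => t ≤ b) = rkOn μ M P' (fun b => t < b) := by
  have hsplitP := range_split_ge (fun (b : Fin N) (a : {a : Fin N // μ a = 0 ∧ P a}) => M a.1 b)
      (fun b => μ b = 1) t ht
  have hsplitP' := range_split_ge (fun (b : Fin N) (a : {a : Fin N // μ a = 0 ∧ P' a}) => M a.1 b)
      (fun b => μ b = 1) t ht
  rw [rkOn_col_span, rkOn_col_span, hsplitP] at h
  rw [rkOn_col_span, rkOn_col_span, hsplitP']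
  have key := span_insert_shrink (F := F) _ _
    (fun a : {a : Fin N // μ a = 0 ∧ P' a} => (⟨a.1, a.2.1, hP a.1 a.2.2⟩ : {a : Fin N // μ a = 0 ∧ P a})) h
  have himg : (· ∘ (fun a : {a : Fin N // μ a = 0 ∧ P' a} =>
        (⟨a.1, a.2.1, hP a.1 a.2.2⟩ : {a : Fin N // μ a = 0 ∧ P a}))) ''
      (Set.range (fun (b : {b : Fin N // μ b = 1 ∧ t < b})
        (a : {a : Fin N // μ a = 0 ∧ P a}) => M a.1 b.1))
      = Set.range (fun (b : {b : Fin N // μ b = 1 ∧ t < b})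
        (a : {a : Fin N // μ a = 0 ∧ P' a}) => M a.1 b.1) := by
    rw [← Set.range_comp]; rfl
  rw [himg] at key
  exact key

end rk

open Classical in
noncomputable def rookMat (F : Type*) [Field F] {N : ℕ} (σ : Set (Fin N × Fin N)) :
    Fin N → Fin N → F :=
  fun s t => if (s, t) ∈ σ then 1 else 0

section count
variable {F : Type*} [Field F] {N : ℕ} (μ : Fin N → ℕ) (σ : Set (Fin N × Fin N))

lemma rk_count (hσ : σ ⊆ BoardSet μ)
    (hrow : ∀ p ∈ σ, ∀ p' ∈ σ, p.1 = p'.1 → p = p')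
    (hcol : ∀ p ∈ σ, ∀ p' ∈ σ, p.2 = p'.2 → p = p')
    (P Q : Fin N → Prop) [DecidablePred P] [DecidablePred Q] :
    rkOn μ (rookMat F σ) P Q = (σ ∩ {p | P p.1 ∧ Q p.2}).ncard := by
  classical
  set colT := {b : Fin N // μ b = 1 ∧ Q b}
  set rowT := {a : Fin N // μ a = 0 ∧ P a}
  set T := {b : colT // ∃ a : rowT, (a.1, b.1) ∈ σ} with hT
  set r : rowT → colT → F := fun a b => rookMat F σ a.1 b.1 with hr
  set f : T → colT → F := fun t => Pi.single t.1 1 with hf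
  -- a row with a σ-entry is a basis vector
  have hrowf : ∀ (a : rowT) (b : colT), (a.1, b.1) ∈ σ → r a = Pi.single b 1 := by
    intro a b hab
    funext b'
    rw [Pi.single_apply]
    by_cases hbb : b' = b
    · subst hbb
      simp [hr, rookMat, hab]
    · have : (a.1, b'.1) ∉ σ := by
        intro hmem
        exact hbb (Subtype.ext (congrArg Prod.snd (hrow _ hmem _ hab rfl)))
      simp only [hr, rookMat, if_neg this, if_neg hbb]
  have hspan : span F (Set.range r) = span F (Set.range f) := by
    apply le_antisymm
    · rw [span_le]
      rintro v ⟨a, rfl⟩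
      by_cases hex : ∃ b : colT, (a.1, b.1) ∈ σ
      · obtain ⟨b, hb⟩ := hex
        have : r a = f ⟨b, ⟨a, hb⟩⟩ := hrowf a b hb
        rw [this]
        exact subset_span (Set.mem_range_self _)
      · have : r a = 0 := by
          funext b'
          simp only [hr, rookMat]
          rw [if_neg (fun hmem => hex ⟨b', hmem⟩)]
          rfl
        rw [this]
        exact Submodule.zero_mem _
    · rw [span_le]
      rintro v ⟨t, rfl⟩
      obtain ⟨a, ha⟩ := t.2
      have : f t = r a := (hrowf a t.1 ha).symm
      rw [this]
      exact subset_span (Set.mem_range_self _)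
  have hli : LinearIndependent F f := by
    have h2 := (Pi.basisFun F colT).linearIndependent.comp
      (fun t : T => t.1) Subtype.val_injective
    convert h2 using 1
    funext t
    simp [hf, Pi.basisFun_apply]
  have hrank : rkOn μ (rookMat F σ) P Q = Fintype.card T := by
    rw [rkOn_row_span]
    have : (Set.range (fun (a : rowT) (b : colT) => rookMat F σ a.1 b.1)) = Set.range r := rfl
    rw [this, hspan]
    exact finrank_span_eq_card hli
  rw [hrank]
  -- now count
  rw [← Nat.card_coe_set_eq, ← Nat.card_eq_fintype_card]
  apply Nat.card_congr
  refine Equiv.ofBijective (fun t : T => ?_) ?_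
  · obtain ⟨⟨b, hb1, hbQ⟩, hex⟩ := t
    exact ⟨(Classical.choose hex |>.1, b), by
      refine ⟨Classical.choose_spec hex, ?_, hbQ⟩
      exact (Classical.choose hex).2.2⟩
  · constructor
    · rintro ⟨⟨b, hb1, hbQ⟩, hex⟩ ⟨⟨b', hb1', hbQ'⟩, hex'⟩ hgg
      have hb : b = b' := congrArg (fun p => p.1.2) hgg
      subst hb
      rfl
    · rintro ⟨⟨s, t⟩, hmem, hP, hQ2⟩
      have hb : μ t = 1 := (hσ hmem).2.1
      have ha : μ s = 0 := (hσ hmem).1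
      refine ⟨⟨⟨t, hb, hQ2⟩, ⟨⟨s, ha, hP⟩, hmem⟩⟩, ?_⟩
      have hch := Classical.choose_spec (⟨⟨s, ha, hP⟩, hmem⟩ :
        ∃ a : rowT, (a.1, (⟨t, hb, hQ2⟩ : colT).1) ∈ σ)
      apply Subtype.ext
      have := hcol _ hch _ hmem rfl
      simpa using this
end count


/-- For `σ ⊆ B_μ`: there exists `M ∈ M_μ(F_q)` with `σ(M) = σ` iff `σ` is a rook
placement on `B_μ`. -/
theorem stmt12 {F : Type*} [Field F] [Fintype F] {N : ℕ} (hN : 1 ≤ N)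
    (μ : Fin N → ℕ) (hμ : ∀ i, μ i ≤ 1)
    (hμ0 : μ ≠ fun _ => 0) (hμ1 : μ ≠ fun _ => 1)
    (σ : Set (Fin N × Fin N)) (hσ : σ ⊆ BoardSet μ) :
    (∃ M : Fin N → Fin N → F, M ∈ MSet F μ ∧ sigmaOf μ M = σ) ↔
      IsRookPlacementSet μ σ := by
  constructor
  · rintro ⟨M, hM, rfl⟩
    refine ⟨fun p hp => hp.1, ?_, ?_⟩
    · rintro p hp p' hp' h1
      obtain ⟨hb, c1, c2, c3⟩ := hp
      obtain ⟨hb', c1', c2', c3'⟩ := hp'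
      by_cases h2 : p.2 = p'.2
      · exact Prod.ext h1 h2
      rcases lt_or_gt_of_ne h2 with hlt | hlt
      · have hcore : rkOn μ M (fun a => a ≤ p.1) (fun b => p.2 < b)
            = rkOn μ M (fun a => a < p.1) (fun b => p.2 < b) := by omega
        have hk := row_shrink μ M p.1 hb.1 _ (fun b => p'.2 ≤ b)
          (fun b hb2 => lt_of_lt_of_le hlt hb2) hcore
        rw [h1] at hk
        omega
      · have hcore : rkOn μ M (fun a => a ≤ p'.1) (fun b => p'.2 < b)
            = rkOn μ M (fun a => a < p'.1) (fun b => p'.2 < b) := by omega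
        have hk := row_shrink μ M p'.1 hb'.1 _ (fun b => p.2 ≤ b)
          (fun b hb2 => lt_of_lt_of_le hlt hb2) hcore
        rw [← h1] at hk
        omega
    · rintro p hp p' hp' h2
      obtain ⟨hb, c1, c2, c3⟩ := hp
      obtain ⟨hb', c1', c2', c3'⟩ := hp'
      by_cases h1 : p.1 = p'.1
      · exact Prod.ext h1 h2
      rcases lt_or_gt_of_ne h1 with hlt | hlt
      · have hcore : rkOn μ M (fun a => a < p'.1) (fun b => p'.2 ≤ b)
            = rkOn μ M (fun a => a < p'.1) (fun b => p'.2 < b) := by omega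
        have hk := col_shrink μ M p'.2 hb'.2.1 _ (fun a => a ≤ p.1)
          (fun a ha => lt_of_le_of_lt ha hlt) hcore
        rw [← h2] at hk
        omega
      · have hcore : rkOn μ M (fun a => a < p.1) (fun b => p.2 ≤ b)
            = rkOn μ M (fun a => a < p.1) (fun b => p.2 < b) := by omega
        have hk := col_shrink μ M p.2 hb.2.1 _ (fun a => a ≤ p'.1)
          (fun a ha => lt_of_le_of_lt ha hlt) hcore
        rw [h2] at hk
        omega
  · rintro ⟨hsub, hrow, hcol⟩
    refine ⟨rookMat F σ, ?_, ?_⟩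
    · intro s t hst
      by_cases h : (s, t) ∈ σ
      · exact hsub h
      · simp [rookMat, h] at hst
    · ext p
      simp only [sigmaOf, Set.mem_setOf_eq]
      simp only [rk_count μ σ hsub hrow hcol]
      constructor
      · rintro ⟨hb, c1, c2, c3⟩
        by_contra hpσ
        have h1 : ¬ (σ ∩ {q | q.1 ≤ p.1 ∧ p.2 ≤ q.2} ⊆ σ ∩ {q | q.1 < p.1 ∧ p.2 ≤ q.2}) := by
          intro hss
          have := Set.ncard_le_ncard hss (Set.toFinite _)
          omega
        obtain ⟨x, hxbig, hxsmall⟩ := Set.not_subset.mp h1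
        have hx1 : x.1 = p.1 := by
          by_contra hne
          exact hxsmall ⟨hxbig.1, lt_of_le_of_ne hxbig.2.1 hne, hxbig.2.2⟩
        have hx2 : p.2 < x.2 := by
          rcases lt_or_eq_of_le hxbig.2.2 with h | h
          · exact h
          · exact absurd (Prod.ext hx1 h.symm ▸ hxbig.1) hpσ
        have h2 : ¬ (σ ∩ {q | q.1 ≤ p.1 ∧ p.2 ≤ q.2} ⊆ σ ∩ {q | q.1 ≤ p.1 ∧ p.2 < q.2}) := by
          intro hss
          have := Set.ncard_le_ncard hss (Set.toFinite _)
          omega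
        obtain ⟨y, hybig, hysmall⟩ := Set.not_subset.mp h2
        have hy2 : y.2 = p.2 := by
          by_contra hne
          exact hysmall ⟨hybig.1, hybig.2.1, lt_of_le_of_ne hybig.2.2 (fun h => hne h.symm)⟩
        have hy1 : y.1 < p.1 := by
          rcases lt_or_eq_of_le hybig.2.1 with h | h
          · exact h
          · exact absurd (Prod.ext h hy2 ▸ hybig.1) hpσ
        have hxy : x ≠ y := by
          intro h
          rw [h, hy2] at hx2
          exact lt_irrefl _ hx2
        have hxnot : x ∉ insert y (σ ∩ {q | q.1 < p.1 ∧ p.2 < q.2}) := by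
          rintro (h | h)
          · exact hxy h
          · have h2 := h.2.1; rw [hx1] at h2; exact lt_irrefl _ h2
        have hynot : y ∉ σ ∩ {q | q.1 < p.1 ∧ p.2 < q.2} := by
          intro h
          have h2 := h.2.2
          rw [hy2] at h2
          exact lt_irrefl _ h2
        have hins : insert x (insert y (σ ∩ {q | q.1 < p.1 ∧ p.2 < q.2}))
            ⊆ σ ∩ {q | q.1 ≤ p.1 ∧ p.2 ≤ q.2} := by
          rintro z hz
          rcases hz with rfl | rfl | hz
          · exact ⟨hxbig.1, hx1.le, hx2.le⟩
          · exact ⟨hybig.1, hy1.le, hy2.ge⟩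
          · exact ⟨hz.1, hz.2.1.le, hz.2.2.le⟩
        have hcard := Set.ncard_le_ncard hins (Set.toFinite _)
        rw [Set.ncard_insert_of_notMem hxnot (Set.toFinite _),
          Set.ncard_insert_of_notMem hynot (Set.toFinite _)] at hcard
        omega
      · intro hp
        have hb := hsub hp
        refine ⟨hb, ?_, ?_, ?_⟩
        · have e1 : σ ∩ {q | q.1 ≤ p.1 ∧ p.2 ≤ q.2}
              = insert p (σ ∩ {q | q.1 < p.1 ∧ p.2 ≤ q.2}) := by
            ext q
            simp only [Set.mem_inter_iff, Set.mem_setOf_eq, Set.mem_insert_iff]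
            constructor
            · rintro ⟨hq, hq1, hq2⟩
              rcases lt_or_eq_of_le hq1 with h | h
              · exact Or.inr ⟨hq, h, hq2⟩
              · exact Or.inl (hrow q hq p hp h)
            · rintro (rfl | ⟨hq, hq1, hq2⟩)
              · exact ⟨hp, le_refl _, le_refl _⟩
              · exact ⟨hq, hq1.le, hq2⟩
          have hnot : p ∉ σ ∩ {q | q.1 < p.1 ∧ p.2 ≤ q.2} := fun h => lt_irrefl _ h.2.1
          rw [e1, Set.ncard_insert_of_notMem hnot (Set.toFinite _)]
        · have e2 : σ ∩ {q | q.1 ≤ p.1 ∧ p.2 ≤ q.2}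
              = insert p (σ ∩ {q | q.1 ≤ p.1 ∧ p.2 < q.2}) := by
            ext q
            simp only [Set.mem_inter_iff, Set.mem_setOf_eq, Set.mem_insert_iff]
            constructor
            · rintro ⟨hq, hq1, hq2⟩
              rcases lt_or_eq_of_le hq2 with h | h
              · exact Or.inr ⟨hq, hq1, h⟩
              · exact Or.inl (hcol q hq p hp h.symm)
            · rintro (rfl | ⟨hq, hq1, hq2⟩)
              · exact ⟨hp, le_refl _, le_refl _⟩
              · exact ⟨hq, hq1, hq2.le⟩
          have hnot : p ∉ σ ∩ {q | q.1 ≤ p.1 ∧ p.2 < q.2} := fun h => lt_irrefl _ h.2.2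
          rw [e2, Set.ncard_insert_of_notMem hnot (Set.toFinite _)]
        · have e3 : σ ∩ {q | q.1 ≤ p.1 ∧ p.2 ≤ q.2}
              = insert p (σ ∩ {q | q.1 < p.1 ∧ p.2 < q.2}) := by
            ext q
            simp only [Set.mem_inter_iff, Set.mem_setOf_eq, Set.mem_insert_iff]
            constructor
            · rintro ⟨hq, hq1, hq2⟩
              rcases lt_or_eq_of_le hq1 with h | h
              · rcases lt_or_eq_of_le hq2 with h' | h'
                · exact Or.inr ⟨hq, h, h'⟩
                · exact Or.inl (hcol q hq p hp h'.symm)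
              · exact Or.inl (hrow q hq p hp h)
            · rintro (rfl | ⟨hq, hq1, hq2⟩)
              · exact ⟨hp, le_refl _, le_refl _⟩
              · exact ⟨hq, hq1.le, hq2.le⟩
          have hnot : p ∉ σ ∩ {q | q.1 < p.1 ∧ p.2 < q.2} := fun h => lt_irrefl _ h.2.1
          rw [e3, Set.ncard_insert_of_notMem hnot (Set.toFinite _)]
end

section
/- Let μ ∈ {0,1}^N with μ not equal to the all-zeros or all-ones tuple, and let M ∈ M_μ(F_q). Then for every (s,t) ∈ σ(M), rank M(s,t) = inv(σ(M), s, t) + 1. -/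
open Submodule Module

section Aux

variable {F : Type*} [Field F] {N : ℕ}

/-- Row `a` of `M`, restricted to columns `b` with `μ b = 1` and `j ≤ b`, extended by zero. -/
def evec (μ : Fin N → ℕ) (M : Fin N → Fin N → F) (j : ℕ) (a : Fin N) : Fin N → F :=
  fun b => if μ b = 1 ∧ j ≤ b.val then M a b else 0

def rowsSet (μ : Fin N → ℕ) (M : Fin N → Fin N → F) (i j : ℕ) : Set (Fin N → F) :=
  evec μ M j '' {a : Fin N | μ a = 0 ∧ a.val < i}

noncomputable def spanG (μ : Fin N → ℕ) (M : Fin N → Fin N → F) (i j : ℕ) : ℕ :=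
  finrank F (Submodule.span F (rowsSet μ M i j))

/-- Truncation to columns `b` with `μ b = 1` and `j ≤ b`. -/
def truncMap (μ : Fin N → ℕ) (j : ℕ) : (Fin N → F) →ₗ[F] (Fin N → F) where
  toFun v := fun b => if μ b = 1 ∧ j ≤ b.val then v b else 0
  map_add' u v := by funext b; by_cases h : μ b = 1 ∧ j ≤ b.val <;> simp [h]
  map_smul' c v := by funext b; by_cases h : μ b = 1 ∧ j ≤ b.val <;> simp [h]

@[simp] lemma truncMap_apply (μ : Fin N → ℕ) (j : ℕ) (v : Fin N → F) (b : Fin N) :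
    truncMap μ j v b = if μ b = 1 ∧ j ≤ b.val then v b else 0 := rfl

lemma trunc_evec {μ : Fin N → ℕ} {M : Fin N → Fin N → F} {j' j : ℕ} (h : j' ≤ j) (a : Fin N) :
    truncMap μ j (evec μ M j' a) = evec μ M j a := by
  funext b
  simp only [truncMap_apply, evec]
  by_cases hb : μ b = 1 ∧ j ≤ b.val
  · rw [if_pos hb, if_pos ⟨hb.1, le_trans h hb.2⟩, if_pos hb]
  · rw [if_neg hb, if_neg hb]

lemma rowsSet_trunc {μ : Fin N → ℕ} {M : Fin N → Fin N → F} {j' j : ℕ} (h : j' ≤ j) (i : ℕ) :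
    rowsSet μ M i j = truncMap μ j '' rowsSet μ M i j' := by
  unfold rowsSet
  rw [Set.image_image]
  exact Set.image_congr fun a _ => (trunc_evec h a).symm

lemma span_rowsSet_trunc {μ : Fin N → ℕ} {M : Fin N → Fin N → F} {j' j : ℕ} (h : j' ≤ j)
    (i : ℕ) : Submodule.span F (rowsSet μ M i j)
      = (Submodule.span F (rowsSet μ M i j')).map (truncMap μ j) := by
  rw [rowsSet_trunc h i, Submodule.span_image]

lemma evec_mem_mono {μ : Fin N → ℕ} {M : Fin N → Fin N → F} {j' j : ℕ} (h : j' ≤ j)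
    {i : ℕ} {a : Fin N} (hm : evec μ M j' a ∈ Submodule.span F (rowsSet μ M i j')) :
    evec μ M j a ∈ Submodule.span F (rowsSet μ M i j) := by
  rw [span_rowsSet_trunc h i, ← trunc_evec (M := M) h a]
  exact Submodule.mem_map_of_mem hm

lemma finrank_span_insert_of_not_mem {s : Set (Fin N → F)} {v : Fin N → F}
    (hv : v ∉ Submodule.span F s) :
    finrank F (Submodule.span F (insert v s)) = finrank F (Submodule.span F s) + 1 := by
  have hv0 : v ≠ 0 := fun h => hv (h ▸ (Submodule.span F s).zero_mem)
  have hinf : (F ∙ v) ⊓ Submodule.span F s = ⊥ := by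
    rw [Submodule.eq_bot_iff]
    rintro x ⟨hx1, hx2⟩
    obtain ⟨c, rfl⟩ := Submodule.mem_span_singleton.mp hx1
    rcases eq_or_ne c 0 with rfl | hc
    · simp
    · exact absurd (by simpa [smul_smul, inv_mul_cancel₀ hc] using
        (Submodule.span F s).smul_mem c⁻¹ hx2) hv
  have h2 := Submodule.finrank_sup_add_finrank_inf_eq (F ∙ v) (Submodule.span F s)
  rw [hinf, finrank_bot, finrank_span_singleton hv0] at h2
  rw [Submodule.span_insert]
  omega

lemma mem_span_of_finrank_insert_eq_s13 {s : Set (Fin N → F)} {v : Fin N → F}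
    (h : finrank F (Submodule.span F (insert v s)) = finrank F (Submodule.span F s)) :
    v ∈ Submodule.span F s := by
  by_contra hv
  rw [finrank_span_insert_of_not_mem hv] at h
  omega


/-- Key duality lemma: if `v` is fixed by `truncMap μ j`, independent from `span s`
(whose elements are fixed by `truncMap μ j`), but becomes dependent after truncating the
column `j`, then truncating column `j` does not drop the rank of `span s`. -/
lemma finrank_map_trunc_eq (μ : Fin N → ℕ) (j : ℕ) (s : Set (Fin N → F))
    (hfix : ∀ u ∈ s, truncMap μ j u = u) (v : Fin N → F)
    (hvfix : truncMap μ j v = v) (hv : v ∉ Submodule.span F s)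
    (hv' : truncMap μ (j+1) v ∈ (Submodule.span F s).map (truncMap μ (j+1))) :
    finrank F ((Submodule.span F s).map (truncMap (F := F) μ (j+1)))
      = finrank F (Submodule.span F s) := by
  set p := Submodule.span F s with hp
  have hpfix : ∀ u ∈ p, truncMap μ j u = u := by
    intro u hu
    have hle : p ≤ LinearMap.eqLocus (truncMap μ j) LinearMap.id :=
      Submodule.span_le.mpr fun u hu => LinearMap.mem_eqLocus.mpr (hfix u hu)
    exact LinearMap.mem_eqLocus.mp (hle hu)
  have key : ∀ x : Fin N → F, truncMap μ j x = x → truncMap μ (j+1) x = 0 →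
      ∀ b : Fin N, x b ≠ 0 → μ b = 1 ∧ b.val = j := by
    intro x hfx hTx b hb
    have h1 := congrFun hfx b
    have h2 := congrFun hTx b
    simp only [truncMap_apply, Pi.zero_apply] at h1 h2
    by_cases hμb : μ b = 1 ∧ j ≤ b.val
    · refine ⟨hμb.1, ?_⟩
      by_contra hne'
      have hj1 : μ b = 1 ∧ j + 1 ≤ b.val := ⟨hμb.1, by omega⟩
      rw [if_pos hj1] at h2
      exact hb h2
    · rw [if_neg hμb] at h1
      exact absurd h1.symm hb
  have hinj : ∀ w ∈ p, truncMap μ (j+1) w = 0 → w = 0 := by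
    intro w hw hw0
    by_contra hne
    obtain ⟨b0, hb0⟩ := Function.ne_iff.mp hne
    have hb0' : (w b0 : F) ≠ 0 := hb0
    have hb0p := key w (hpfix w hw) hw0 b0 hb0'
    obtain ⟨u, hu, hTu⟩ := hv'
    set d := v - u with hd
    have hdfix : truncMap μ j d = d := by rw [hd, map_sub, hvfix, hpfix u hu]
    have hdT : truncMap μ (j+1) d = 0 := by rw [hd, map_sub, hTu, sub_self]
    have hwsupp : ∀ b : Fin N, b ≠ b0 → w b = 0 := by
      intro b hbne
      by_contra hwb
      have := key w (hpfix w hw) hw0 b hwb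
      exact hbne (Fin.ext (by omega))
    have hdw : d = (d b0 * (w b0)⁻¹) • w := by
      funext b
      by_cases hb : b = b0
      · subst hb
        simp only [Pi.smul_apply, smul_eq_mul]
        field_simp
      · have hdb : d b = 0 := by
          by_contra hdb
          have := key d hdfix hdT b hdb
          exact hb (Fin.ext (by omega))
        simp [hdb, hwsupp b hb]
    apply hv
    have hveq : v = u + d := by rw [hd]; abel
    rw [hveq, hdw]
    exact p.add_mem hu (p.smul_mem _ hw)
  have hinj' : Function.Injective ((truncMap (F := F) μ (j+1)).domRestrict p) := by
    intro x y hxy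
    have hmem : ((x : Fin N → F) - (y : Fin N → F)) ∈ p := sub_mem x.2 y.2
    have hT : truncMap μ (j+1) ((x : Fin N → F) - (y : Fin N → F)) = 0 := by
      rw [map_sub, sub_eq_zero]
      exact hxy
    have := hinj _ hmem hT
    exact Subtype.ext (sub_eq_zero.mp this)
  have hfr := LinearMap.finrank_range_of_inj hinj'
  rwa [LinearMap.range_domRestrict] at hfr

/-- Extension-by-zero of a vector indexed by a subtype. -/
def extMap (P : Fin N → Prop) [DecidablePred P] : ({b : Fin N // P b} → F) →ₗ[F] (Fin N → F) where
  toFun v := fun b => if h : P b then v ⟨b, h⟩ else 0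
  map_add' u v := by funext b; by_cases h : P b <;> simp [h]
  map_smul' c v := by funext b; by_cases h : P b <;> simp [h]

lemma extMap_injective (P : Fin N → Prop) [DecidablePred P] :
    Function.Injective (extMap (F := F) P) := by
  intro v w h
  funext b
  have hb := congrFun h b.val
  simp only [extMap, LinearMap.coe_mk, AddHom.coe_mk, b.2, dif_pos, Subtype.coe_eta] at hb
  exact hb

lemma rkOn_eq_spanG (μ : Fin N → ℕ) (M : Fin N → Fin N → F)
    (rowP colP : Fin N → Prop) [DecidablePred rowP] [DecidablePred colP]
    (i j : ℕ) (hrow : ∀ a : Fin N, rowP a ↔ a.val < i)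
    (hcol : ∀ b : Fin N, colP b ↔ j ≤ b.val) :
    rkOn μ M rowP colP = spanG μ M i j := by
  classical
  set P : Fin N → Prop := fun b => μ b = 1 ∧ colP b with hP
  set A := Matrix.of fun (a : {a : Fin N // μ a = 0 ∧ rowP a})
      (b : {b : Fin N // μ b = 1 ∧ colP b}) => M a.1 b.1 with hA
  have hrank : rkOn μ M rowP colP = finrank F (Submodule.span F (Set.range A)) := by
    rw [rkOn, Matrix.rank_eq_finrank_span_row]
    rfl
  have himg : extMap (F := F) P '' Set.range A = rowsSet μ M i j := by
    refine (Set.range_comp _ _).symm.trans ?_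
    have hcomp : ∀ a : {a : Fin N // μ a = 0 ∧ rowP a},
        (extMap (F := F) P) (A a) = evec μ M j a.val := by
      intro a
      funext b
      simp only [extMap, LinearMap.coe_mk, AddHom.coe_mk, evec, hA, Matrix.of_apply]
      by_cases hb : P b
      · rw [dif_pos hb, if_pos ⟨hb.1, (hcol b).mp hb.2⟩]
      · rw [dif_neg hb, if_neg (fun hb' => hb ⟨hb'.1, (hcol b).mpr hb'.2⟩)]
    have : (fun a : {a : Fin N // μ a = 0 ∧ rowP a} => (extMap (F := F) P) (A a))
        = fun a => evec μ M j a.val := funext hcomp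
    rw [show (extMap (F := F) P ∘ A) = fun a : {a : Fin N // μ a = 0 ∧ rowP a} =>
      evec μ M j a.val from funext hcomp]
    rw [rowsSet]
    ext v
    constructor
    · rintro ⟨⟨a, ha⟩, rfl⟩
      exact ⟨a, ⟨ha.1, (hrow a).mp ha.2⟩, rfl⟩
    · rintro ⟨a, ha, rfl⟩
      exact ⟨⟨a, ⟨ha.1, (hrow a).mpr ha.2⟩⟩, rfl⟩
  have hspan : Submodule.span F (rowsSet μ M i j)
      = (Submodule.span F (Set.range A)).map (extMap (F := F) P) := by
    rw [← himg, Submodule.span_image]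
  have hfr := LinearEquiv.finrank_eq
    (Submodule.equivMapOfInjective _ (extMap_injective (F := F) P) (Submodule.span F (Set.range A)))
  rw [hrank, spanG, hspan, hfr]

def indepRow (μ : Fin N → ℕ) (M : Fin N → Fin N → F) (j : ℕ) (a : Fin N) : Prop :=
  evec μ M j a ∉ Submodule.span F (rowsSet μ M a.val j)

lemma indepRow_mono {μ : Fin N → ℕ} {M : Fin N → Fin N → F} {j' j : ℕ} (h : j' ≤ j)
    {a : Fin N} (hi : indepRow μ M j a) : indepRow μ M j' a :=
  fun hmem => hi (evec_mem_mono h hmem)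

lemma rowsSet_succ' {μ : Fin N → ℕ} {M : Fin N → Fin N → F} (a : Fin N) (h0 : μ a = 0) (j : ℕ) :
    rowsSet μ M (a.val + 1) j = insert (evec μ M j a) (rowsSet μ M a.val j) := by
  unfold rowsSet
  rw [show {x : Fin N | μ x = 0 ∧ x.val < a.val + 1}
      = insert a {x : Fin N | μ x = 0 ∧ x.val < a.val} from ?_, Set.image_insert_eq]
  ext x
  simp only [Set.mem_setOf_eq, Set.mem_insert_iff]
  constructor
  · rintro ⟨hx0, hxlt⟩
    rcases Nat.lt_succ_iff_lt_or_eq.mp hxlt with h | h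
    · exact Or.inr ⟨hx0, h⟩
    · exact Or.inl (Fin.ext h)
  · rintro (rfl | ⟨hx0, hxlt⟩)
    · exact ⟨h0, Nat.lt_succ_self _⟩
    · exact ⟨hx0, by omega⟩

lemma rowsSet_succ_of_ne {μ : Fin N → ℕ} {M : Fin N → Fin N → F} {i : ℕ}
    (h : ∀ a : Fin N, a.val = i → μ a ≠ 0) (j : ℕ) :
    rowsSet μ M (i + 1) j = rowsSet μ M i j := by
  have hset : {x : Fin N | μ x = 0 ∧ x.val < i + 1} = {x : Fin N | μ x = 0 ∧ x.val < i} := by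
    ext x
    simp only [Set.mem_setOf_eq]
    constructor
    · rintro ⟨hx0, hxlt⟩
      refine ⟨hx0, ?_⟩
      rcases Nat.lt_succ_iff_lt_or_eq.mp hxlt with hh | hh
      · exact hh
      · exact absurd hx0 (h x hh)
    · rintro ⟨hx0, hxlt⟩
      exact ⟨hx0, by omega⟩
  unfold rowsSet
  rw [hset]

lemma spanG_count (μ : Fin N → ℕ) (M : Fin N → Fin N → F) (j : ℕ) : ∀ i : ℕ,
    spanG μ M i j = Set.ncard {a : Fin N | a.val < i ∧ μ a = 0 ∧ indepRow μ M j a} := by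
  intro i
  induction i with
  | zero =>
    have h1 : rowsSet (F := F) μ M 0 j = ∅ := by
      unfold rowsSet
      rw [Set.image_eq_empty]
      ext x; simp
    have h2 : {a : Fin N | a.val < 0 ∧ μ a = 0 ∧ indepRow μ M j a} = ∅ := by
      ext x; simp
    rw [spanG, h1, h2, Submodule.span_empty, finrank_bot, Set.ncard_empty]
  | succ i ih =>
    by_cases hiN : i < N
    · set a0 : Fin N := ⟨i, hiN⟩ with ha0
      by_cases h0 : μ a0 = 0
      · have hrs : rowsSet μ M (i + 1) j = insert (evec μ M j a0) (rowsSet μ M i j) :=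
          rowsSet_succ' a0 h0 j
        by_cases hind : indepRow μ M j a0
        · have hset : {a : Fin N | a.val < i + 1 ∧ μ a = 0 ∧ indepRow μ M j a}
              = insert a0 {a : Fin N | a.val < i ∧ μ a = 0 ∧ indepRow μ M j a} := by
            ext x
            simp only [Set.mem_setOf_eq, Set.mem_insert_iff]
            constructor
            · rintro ⟨hxlt, hx0, hxi⟩
              rcases Nat.lt_succ_iff_lt_or_eq.mp hxlt with h | h
              · exact Or.inr ⟨h, hx0, hxi⟩
              · exact Or.inl (Fin.ext h)
            · rintro (rfl | ⟨hxlt, hx0, hxi⟩)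
              · exact ⟨Nat.lt_succ_self _, h0, hind⟩
              · exact ⟨by omega, hx0, hxi⟩
          rw [spanG, hrs, finrank_span_insert_of_not_mem hind, ← spanG, ih, hset,
            Set.ncard_insert_of_notMem (by simp [ha0])]
        · have hmem : evec μ M j a0 ∈ Submodule.span F (rowsSet μ M i j) :=
            not_not.mp hind
          have hset : {a : Fin N | a.val < i + 1 ∧ μ a = 0 ∧ indepRow μ M j a}
              = {a : Fin N | a.val < i ∧ μ a = 0 ∧ indepRow μ M j a} := by
            ext x
            simp only [Set.mem_setOf_eq]
            constructor
            · rintro ⟨hxlt, hx0, hxi⟩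
              rcases Nat.lt_succ_iff_lt_or_eq.mp hxlt with h | h
              · exact ⟨h, hx0, hxi⟩
              · exact absurd hxi (by rw [show x = a0 from Fin.ext h]; exact hind)
            · rintro ⟨hxlt, hx0, hxi⟩
              exact ⟨by omega, hx0, hxi⟩
          rw [spanG, hrs, Submodule.span_insert_eq_span hmem, ← spanG, ih, hset]
      · have hne : ∀ a : Fin N, a.val = i → μ a ≠ 0 := by
          intro a ha
          rw [show a = a0 from Fin.ext ha]
          exact h0
        have hset : {a : Fin N | a.val < i + 1 ∧ μ a = 0 ∧ indepRow μ M j a}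
            = {a : Fin N | a.val < i ∧ μ a = 0 ∧ indepRow μ M j a} := by
          ext x
          simp only [Set.mem_setOf_eq]
          constructor
          · rintro ⟨hxlt, hx0, hxi⟩
            rcases Nat.lt_succ_iff_lt_or_eq.mp hxlt with h | h
            · exact ⟨h, hx0, hxi⟩
            · exact absurd hx0 (hne x h)
          · rintro ⟨hxlt, hx0, hxi⟩
            exact ⟨by omega, hx0, hxi⟩
        rw [spanG, rowsSet_succ_of_ne hne, ← spanG, ih, hset]
    · have hset1 : {x : Fin N | μ x = 0 ∧ x.val < i + 1} = {x : Fin N | μ x = 0 ∧ x.val < i} := by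
        ext x
        have := x.isLt
        simp only [Set.mem_setOf_eq]
        omega
      have hset : {a : Fin N | a.val < i + 1 ∧ μ a = 0 ∧ indepRow μ M j a}
          = {a : Fin N | a.val < i ∧ μ a = 0 ∧ indepRow μ M j a} := by
        ext x
        have := x.isLt
        simp only [Set.mem_setOf_eq]
        constructor
        · rintro ⟨_, hx0, hxi⟩; exact ⟨by omega, hx0, hxi⟩
        · rintro ⟨_, hx0, hxi⟩; exact ⟨by omega, hx0, hxi⟩
      rw [spanG, rowsSet, hset1, ← rowsSet, ← spanG, ih, hset]

lemma sigmaOf_iff_spanG (μ : Fin N → ℕ) (M : Fin N → Fin N → F) (p : Fin N × Fin N) :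
    p ∈ sigmaOf μ M ↔ (p ∈ BoardSet μ ∧
      spanG μ M p.1.val p.2.val + 1 = spanG μ M (p.1.val + 1) p.2.val ∧
      spanG μ M (p.1.val + 1) (p.2.val + 1) + 1 = spanG μ M (p.1.val + 1) p.2.val ∧
      spanG μ M p.1.val (p.2.val + 1) + 1 = spanG μ M (p.1.val + 1) p.2.val) := by
  unfold sigmaOf
  rw [Set.mem_setOf_eq,
    rkOn_eq_spanG μ M _ _ p.1.val p.2.val (fun a => Fin.lt_def) (fun b => Fin.le_def),
    rkOn_eq_spanG μ M _ _ (p.1.val + 1) p.2.val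
      (fun a => Fin.le_def.trans Nat.lt_succ_iff.symm) (fun b => Fin.le_def),
    rkOn_eq_spanG μ M _ _ (p.1.val + 1) (p.2.val + 1)
      (fun a => Fin.le_def.trans Nat.lt_succ_iff.symm)
      (fun b => Fin.lt_def.trans Nat.succ_le.symm),
    rkOn_eq_spanG μ M _ _ p.1.val (p.2.val + 1) (fun a => Fin.lt_def)
      (fun b => Fin.lt_def.trans Nat.succ_le.symm)]

lemma indep_of_sigma {μ : Fin N → ℕ} {M : Fin N → Fin N → F} {p : Fin N × Fin N}
    (h : p ∈ sigmaOf μ M) : indepRow μ M p.2.val p.1 := by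
  obtain ⟨hb, h1, h2, h3⟩ := (sigmaOf_iff_spanG μ M p).mp h
  intro hmem
  have : spanG μ M (p.1.val + 1) p.2.val = spanG μ M p.1.val p.2.val := by
    rw [spanG, rowsSet_succ' p.1 hb.1 p.2.val, Submodule.span_insert_eq_span hmem, ← spanG]
  omega

lemma not_indep_succ_of_sigma {μ : Fin N → ℕ} {M : Fin N → Fin N → F} {p : Fin N × Fin N}
    (h : p ∈ sigmaOf μ M) : ¬ indepRow μ M (p.2.val + 1) p.1 := by
  obtain ⟨hb, h1, h2, h3⟩ := (sigmaOf_iff_spanG μ M p).mp h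
  intro hind
  apply hind
  apply mem_span_of_finrank_insert_eq_s13
  have : spanG μ M (p.1.val + 1) (p.2.val + 1) = spanG μ M p.1.val (p.2.val + 1) := by omega
  rw [spanG, spanG, rowsSet_succ' p.1 hb.1 (p.2.val + 1)] at this
  exact this

lemma evec_zero_of_ge {μ : Fin N → ℕ} {M : Fin N → Fin N → F} {j : ℕ} (hj : N ≤ j) (a : Fin N) :
    evec μ M j a = 0 := by
  funext b
  exact if_neg (fun hb => by have := b.isLt; omega)

lemma evec_succ_of_ne {μ : Fin N → ℕ} {M : Fin N → Fin N → F} {c : ℕ}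
    (hc : ∀ b : Fin N, b.val = c → μ b ≠ 1) (a : Fin N) :
    evec μ M c a = evec μ M (c + 1) a := by
  funext b
  unfold evec
  by_cases h1 : μ b = 1 ∧ c ≤ b.val
  · have hbc : b.val ≠ c := fun h => hc b h h1.1
    rw [if_pos h1, if_pos ⟨h1.1, by omega⟩]
  · rw [if_neg h1, if_neg (fun h2 => h1 ⟨h2.1, by omega⟩)]

/-- If row `a` is independent at column cutoff `t+1`, there is a `σ`-pivot in row `a`,
in some column `t' > t`. -/
lemma exists_pivot {μ : Fin N → ℕ} {M : Fin N → Fin N → F} {a t : Fin N}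
    (h0 : μ a = 0) (hat : a < t) (hind : indepRow μ M (t.val + 1) a) :
    ∃ t' : Fin N, t < t' ∧ (a, t') ∈ sigmaOf μ M := by
  classical
  set P : ℕ → Prop := fun j => indepRow μ M j a with hPdef
  have hPN : ¬ P N := by
    intro h
    exact h (by rw [evec_zero_of_ge le_rfl a]; exact (Submodule.span F _).zero_mem)
  have ht1N : t.val + 1 ≤ N := t.isLt
  set c := Nat.findGreatest P N with hcdef
  have hcge : t.val + 1 ≤ c := Nat.le_findGreatest ht1N hind
  have hPc : P c := Nat.findGreatest_spec ht1N hind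
  have hcleN : c ≤ N := Nat.findGreatest_le N
  have hcN : c < N := lt_of_le_of_ne hcleN (fun h => hPN (h ▸ hPc))
  set tc : Fin N := ⟨c, hcN⟩ with htc
  have hnPc1 : ¬ P (c + 1) := Nat.findGreatest_is_greatest (P := P) (n := N) (k := c + 1) (by omega) (by omega)
  have hμtc : μ tc = 1 := by
    by_contra h1
    apply hnPc1
    have hcne : ∀ b : Fin N, b.val = c → μ b ≠ 1 := by
      intro b hb
      rw [show b = tc from Fin.ext hb]
      exact h1
    have hev : ∀ x : Fin N, evec μ M c x = evec μ M (c + 1) x := evec_succ_of_ne hcne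
    have hrs : rowsSet μ M a.val c = rowsSet μ M a.val (c + 1) := by
      unfold rowsSet
      exact Set.image_congr fun x _ => hev x
    show evec μ M (c + 1) a ∉ Submodule.span F (rowsSet μ M a.val (c + 1))
    rw [← hrs, ← hev]
    exact hPc
  -- the three rank conditions
  have hmem1 : evec μ M (c + 1) a ∈ Submodule.span F (rowsSet μ M a.val (c + 1)) := by
    by_contra h
    exact hnPc1 h
  have hrk1 : spanG μ M (a.val + 1) c = spanG μ M a.val c + 1 := by
    rw [spanG, rowsSet_succ' a h0 c, finrank_span_insert_of_not_mem hPc, ← spanG]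
  have hrk2 : spanG μ M (a.val + 1) (c + 1) = spanG μ M a.val (c + 1) := by
    rw [spanG, rowsSet_succ' a h0 (c + 1), Submodule.span_insert_eq_span hmem1, ← spanG]
  have hrk3 : spanG μ M a.val (c + 1) = spanG μ M a.val c := by
    have hfix : ∀ u ∈ rowsSet μ M a.val c, truncMap μ c u = u := by
      rintro u ⟨x, hx, rfl⟩
      exact trunc_evec le_rfl x
    have hvfix : truncMap μ c (evec μ M c a) = evec μ M c a := trunc_evec le_rfl a
    have hv' : truncMap μ (c + 1) (evec μ M c a)
        ∈ (Submodule.span F (rowsSet μ M a.val c)).map (truncMap μ (c + 1)) := by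
      rw [trunc_evec (Nat.le_succ c) a, ← span_rowsSet_trunc (Nat.le_succ c) a.val]
      exact hmem1
    have := finrank_map_trunc_eq μ c (rowsSet μ M a.val c) hfix (evec μ M c a) hvfix hPc hv'
    rw [spanG, spanG, span_rowsSet_trunc (Nat.le_succ c) a.val, this]
  have hat' : a.val < t.val := hat
  refine ⟨tc, ?_, ?_⟩
  · rw [Fin.lt_def]
    show t.val < c
    omega
  rw [sigmaOf_iff_spanG]
  refine ⟨⟨h0, hμtc, ?_⟩, ?_, ?_, ?_⟩
  · rw [Fin.lt_def]
    show a.val < c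
    omega
  · show spanG μ M a.val c + 1 = spanG μ M (a.val + 1) c
    omega
  · show spanG μ M (a.val + 1) (c + 1) + 1 = spanG μ M (a.val + 1) c
    omega
  · show spanG μ M a.val (c + 1) + 1 = spanG μ M (a.val + 1) c
    omega

end Aux

/-- For `(s,t) ∈ σ(M)`, the rank of `M(s,t)` equals the local inversion number
`inv(σ(M),s,t)` plus `1`. -/
theorem stmt13 {F : Type*} [Field F] [Fintype F] {N : ℕ} (hN : 1 ≤ N)
    (μ : Fin N → ℕ) (hμ : ∀ i, μ i ≤ 1)
    (hμ0 : μ ≠ fun _ => 0) (hμ1 : μ ≠ fun _ => 1)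
    (M : Fin N → Fin N → F) (hM : M ∈ MSet F μ)
    (s t : Fin N) (hst : (s, t) ∈ sigmaOf μ M) :
    rkOn μ M (fun a => a ≤ s) (fun b => t ≤ b) =
      Set.ncard {p ∈ sigmaOf μ M | p.1 < s ∧ t < p.2} + 1 := by
  obtain ⟨hb, h1, h2, h3⟩ := (sigmaOf_iff_spanG μ M (s, t)).mp hst
  have h3' : spanG μ M s.val (t.val + 1) + 1 = spanG μ M (s.val + 1) t.val := h3
  have hb' : μ s = 0 ∧ μ t = 1 ∧ s < t := hb
  have hinj : Set.InjOn Prod.fst {p ∈ sigmaOf μ M | p.1 < s ∧ t < p.2} := by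
    have key : ∀ p q : Fin N × Fin N, p ∈ sigmaOf μ M → q ∈ sigmaOf μ M →
        p.1 = q.1 → p.2.val < q.2.val → False := by
      intro p q hp hq hpq1 hlt
      have hiq := indep_of_sigma hq
      have hiq' : indepRow μ M (p.2.val + 1) q.1 := indepRow_mono (by omega) hiq
      rw [← hpq1] at hiq'
      exact not_indep_succ_of_sigma hp hiq'
    intro p hp q hq hpq
    obtain ⟨hpσ, -⟩ := Set.mem_sep_iff.mp hp
    obtain ⟨hqσ, -⟩ := Set.mem_sep_iff.mp hq
    rcases lt_trichotomy p.2.val q.2.val with h | h | h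
    · exact absurd (key p q hpσ hqσ hpq h) id
    · exact Prod.ext hpq (Fin.ext h)
    · exact absurd (key q p hqσ hpσ hpq.symm h) id
  have hks : {a : Fin N | a.val < s.val ∧ μ a = 0 ∧ indepRow μ M (t.val + 1) a}
      = Prod.fst '' {p ∈ sigmaOf μ M | p.1 < s ∧ t < p.2} := by
    ext a
    simp only [Set.mem_setOf_eq, Set.mem_image]
    constructor
    · rintro ⟨hlt, h0, hind⟩
      have hat : a < t := by
        rw [Fin.lt_def]
        have hstlt : s.val < t.val := hb'.2.2
        omega
      obtain ⟨t', ht', hσ'⟩ := exists_pivot h0 hat hind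
      exact ⟨(a, t'), ⟨hσ', by rw [Fin.lt_def]; exact hlt, ht'⟩, rfl⟩
    · rintro ⟨⟨a', t'⟩, ⟨hσ', hlt, hgt⟩, rfl⟩
      refine ⟨hlt, ?_, ?_⟩
      · exact (((sigmaOf_iff_spanG μ M _).mp hσ').1).1
      · have hi := indep_of_sigma hσ'
        exact indepRow_mono (by rw [Fin.lt_def] at hgt; omega) hi
  have hcount : spanG μ M s.val (t.val + 1)
      = Set.ncard {p ∈ sigmaOf μ M | p.1 < s ∧ t < p.2} := by
    rw [spanG_count μ M (t.val + 1) s.val, hks, Set.ncard_image_of_injOn hinj]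
  rw [rkOn_eq_spanG μ M _ _ (s.val + 1) t.val
    (fun a => Fin.le_def.trans Nat.lt_succ_iff.symm) (fun b => Fin.le_def)]
  omega
end
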